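/- arXiv:1807.08065 — 5 statements merged into one kernel-verified Lean document; each statement's English description precedes it below -/
import Mathlib

section
/- Let T be a minimum spanning tree of V, let V = V_b ∪ V_r be any partition of V into two nonempty classes, and let T_b and T_r be minimum spanning trees of V_b and V_r respectively. Then c(T_b) + c(T_r) ≤ 3·c(T). -/
open scoped Classical

noncomputable def cost {α : Type*} [Fintype α] (w : α → α → ℝ) (G : SimpleGraph α) : ℝ :=
  (∑ u : α, ∑ v : α, if G.Adj u v then w u v else 0) / 2

/-- `G` is a minimum spanning tree for the weight function `w`. -/
def IsMST {α : Type*} [Fintype α] (w : α → α → ℝ) (G : SimpleGraph α) : Prop :=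
  G.IsTree ∧ ∀ G' : SimpleGraph α, G'.IsTree → cost w G ≤ cost w G'

/-- Cost of a graph on the subtype of a subset `S`, w.r.t. the restricted weights. -/
noncomputable def subCost {V : Type*} [Fintype V] (w : V → V → ℝ) (S : Set V)
    (G : SimpleGraph S) : ℝ :=
  cost (fun u v : S => w u.1 v.1) G

/-- `G` is a minimum spanning tree of the subset `S` w.r.t. the restricted weights. -/
def IsSubMST {V : Type*} [Fintype V] (w : V → V → ℝ) (S : Set V) (G : SimpleGraph S) : Prop :=
  IsMST (fun u v : S => w u.1 v.1) G

/-! ### Free trees: an inductive representation of trees with labelled vertices -/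

inductive FT (V : Type*) where
  | sngl (v : V) : FT V
  | conn (x y : V) (t s : FT V) : FT V

namespace FT

variable {V : Type*}

noncomputable def verts : FT V → Finset V
  | .sngl v => {v}
  | .conn _ _ t s => t.verts ∪ s.verts

def root : FT V → V
  | .sngl v => v
  | .conn _ _ t _ => t.root

noncomputable def cost (w : V → V → ℝ) : FT V → ℝ
  | .sngl _ => 0
  | .conn x y t s => t.cost w + s.cost w + w x y

def wf : FT V → Prop
  | .sngl _ => True
  | .conn x y t s => t.wf ∧ s.wf ∧ Disjoint t.verts s.verts ∧ x ∈ t.verts ∧ y ∈ s.verts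

def rooted : FT V → Prop
  | .sngl _ => True
  | .conn x y t s => t.rooted ∧ s.rooted ∧ x = t.root ∧ y = s.root

noncomputable def edges : FT V → Finset (Sym2 V)
  | .sngl _ => ∅
  | .conn x y t s => insert s(x, y) (t.edges ∪ s.edges)

lemma root_mem_verts : ∀ t : FT V, t.root ∈ t.verts
  | .sngl v => by simp [root, verts]
  | .conn x y t s => by
      simp only [root, verts, Finset.mem_union]
      exact Or.inl t.root_mem_verts

lemma verts_nonempty (t : FT V) : t.verts.Nonempty := ⟨t.root, t.root_mem_verts⟩

end FT
section FTlemmas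
open FT
variable {V : Type*}

lemma FT.mem_of_mem_edges : ∀ (t : FT V), t.wf → ∀ e ∈ t.edges,
    (∀ z ∈ e, z ∈ t.verts) ∧ ¬ e.IsDiag := by
  intro t
  induction t with
  | sngl v => intro _ e he; simp [edges] at he
  | conn x y t s iht ihs =>
    rintro ⟨hwt, hws, hdisj, hx, hy⟩ e he
    have hxy : x ≠ y := fun h => by
      subst h; exact (Finset.disjoint_left.mp hdisj hx) hy
    have h' : e = s(x,y) ∨ e ∈ t.edges ∨ e ∈ s.edges := by
      simpa [edges, Finset.mem_union, or_assoc] using he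
    rcases h' with rfl | h | h
    · refine ⟨?_, by simp [hxy]⟩
      intro z hz
      rcases Sym2.mem_iff.mp hz with rfl | rfl
      · simp [verts, Finset.mem_union, hx]
      · simp [verts, Finset.mem_union, hy]
    · obtain ⟨h1, h2⟩ := iht hwt e h
      exact ⟨fun z hz => by simp [verts, Finset.mem_union, h1 z hz], h2⟩
    · obtain ⟨h1, h2⟩ := ihs hws e h
      exact ⟨fun z hz => by simp [verts, Finset.mem_union, h1 z hz], h2⟩

lemma FT.cost_eq_sum (w : V → V → ℝ) (hsymm : ∀ a b, w a b = w b a) :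
    ∀ t : FT V, t.wf → ∑ e ∈ t.edges, Sym2.lift ⟨w, hsymm⟩ e = t.cost w := by
  intro t
  induction t with
  | sngl v => intro _; simp [edges, cost]
  | conn x y t s iht ihs =>
    rintro ⟨hwt, hws, hdisj, hx, hy⟩
    have hnt : s(x,y) ∉ t.edges := fun h => by
      have := (FT.mem_of_mem_edges t hwt _ h).1 y (by simp)
      exact (Finset.disjoint_left.mp hdisj this) hy
    have hns : s(x,y) ∉ s.edges := fun h => by
      have := (FT.mem_of_mem_edges s hws _ h).1 x (by simp)
      exact (Finset.disjoint_left.mp hdisj hx) this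
    have hd : Disjoint t.edges s.edges := by
      rw [Finset.disjoint_left]
      intro e het hes
      obtain ⟨h1, _⟩ := FT.mem_of_mem_edges t hwt e het
      obtain ⟨h2, _⟩ := FT.mem_of_mem_edges s hws e hes
      induction e with
      | h a b => exact (Finset.disjoint_left.mp hdisj (h1 a (by simp))) (h2 a (by simp))
    simp only [edges, cost]
    rw [Finset.sum_insert (by simp [Finset.mem_union, hnt, hns]),
      Finset.sum_union hd, iht hwt, ihs hws]
    simp [Sym2.lift]
    ring
end FTlemmas
section PairSum
variable {V : Type*} [Fintype V]

lemma sum_pair_single (w : V → V → ℝ) (x y : V) (hxy : x ≠ y) :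
    ∑ a : V, ∑ b : V, (if s(a,b) = s(x,y) ∧ a ≠ b then w a b else 0) = w x y + w y x := by
  have hpt : ∀ a b : V, (if s(a,b) = s(x,y) ∧ a ≠ b then w a b else 0)
      = (if a = x then (if b = y then w x y else 0) else 0)
        + (if a = y then (if b = x then w y x else 0) else 0) := by
    intro a b
    by_cases h1 : a = x <;> by_cases h2 : b = y <;> by_cases h3 : a = y <;>
      by_cases h4 : b = x <;> subst_vars <;>
      simp_all [Sym2.eq_iff, eq_comm] <;> tauto
  simp only [hpt, Finset.sum_add_distrib]
  simp [Finset.sum_ite_eq', hxy]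

lemma sum_pair_eq (w : V → V → ℝ) (hsymm : ∀ a b, w a b = w b a) (E : Finset (Sym2 V))
    (hE : ∀ e ∈ E, ¬ e.IsDiag) :
    ∑ a : V, ∑ b : V, (if s(a,b) ∈ E ∧ a ≠ b then w a b else 0)
      = 2 * ∑ e ∈ E, Sym2.lift ⟨w, hsymm⟩ e := by
  induction E using Finset.induction_on with
  | empty => simp
  | @insert e E henE ih =>
    induction e with
    | h x y =>
      have hxy : x ≠ y := by
        have := hE s(x,y) (Finset.mem_insert_self _ _)
        simpa [Sym2.isDiag_iff_proj_eq] using this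
      have hpt : ∀ a b : V, (if s(a,b) ∈ insert s(x,y) E ∧ a ≠ b then w a b else 0)
          = (if s(a,b) = s(x,y) ∧ a ≠ b then w a b else 0)
            + (if s(a,b) ∈ E ∧ a ≠ b then w a b else 0) := by
        intro a b
        by_cases h1 : s(a,b) = s(x,y)
        · simp [h1, henE, Finset.mem_insert]
        · simp [h1, Finset.mem_insert]
      simp only [hpt, Finset.sum_add_distrib]
      rw [sum_pair_single w x y hxy, ih (fun e he => hE e (Finset.mem_insert_of_mem he)),
        Finset.sum_insert henE]
      simp [Sym2.lift]
      rw [hsymm y x]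
      ring

end PairSum
section Key
variable {V : Type*}

noncomputable def overts : Option (FT V) → Finset V
  | none => ∅
  | some t => t.verts

noncomputable def ocost (w : V → V → ℝ) : Option (FT V) → ℝ
  | none => 0
  | some t => t.cost w

def owf : Option (FT V) → Prop
  | none => True
  | some t => t.wf

variable (w : V → V → ℝ)

lemma bcomb (hself : ∀ v, w v v = 0) (hnonneg : ∀ u v, 0 ≤ w u v)
    (htri : ∀ u v x, w u v ≤ w u x + w x v)
    (ρ c : V) (t : FT V) (s : Option (FT V)) (p' q' : V)
    (hwt : t.wf) (hws : owf s) (hρ : ρ ∈ t.verts) (hdisj : Disjoint t.verts (overts s))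
    (hps : (p' ∈ overts s ∧ q' ∈ overts s) ∨ (s = none ∧ p' = c ∧ q' = c)) :
    ∃ u : FT V, u.wf ∧ u.verts = t.verts ∪ overts s ∧
      u.cost w ≤ t.cost w + ocost w s + w c p' + w ρ c := by
  rcases s with _ | s₀
  · refine ⟨t, hwt, by simp [overts], ?_⟩
    rcases hps with ⟨h, _⟩ | ⟨_, hp', _⟩
    · simp [overts] at h
    · have h1 := hnonneg ρ c
      have h2 : w c p' = 0 := by rw [hp', hself]
      simp only [ocost]
      linarith
  · rcases hps with ⟨hp', hq'⟩ | ⟨h, _⟩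
    · refine ⟨FT.conn ρ p' t s₀, ⟨hwt, hws, hdisj, hρ, hp'⟩, rfl, ?_⟩
      have h1 : w ρ p' ≤ w ρ c + w c p' := htri ρ p' c
      simp only [FT.cost, ocost]
      linarith
    · simp at h

lemma rcomb (hself : ∀ v, w v v = 0) (hsymm : ∀ u v, w u v = w v u)
    (hnonneg : ∀ u v, 0 ≤ w u v) (htri : ∀ u v x, w u v ≤ w u x + w x v)
    (ρ c : V) (t s : Option (FT V)) (p q p' q' : V)
    (hwt : owf t) (hws : owf s) (hdisj : Disjoint (overts t) (overts s))
    (hpt : (p ∈ overts t ∧ q ∈ overts t) ∨ (t = none ∧ p = ρ ∧ q = ρ))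
    (hps : (p' ∈ overts s ∧ q' ∈ overts s) ∨ (s = none ∧ p' = c ∧ q' = c)) :
    ∃ (u : Option (FT V)) (P Q : V), owf u ∧ overts u = overts t ∪ overts s ∧
      ((P ∈ overts u ∧ Q ∈ overts u) ∨ (u = none ∧ P = ρ ∧ Q = ρ)) ∧
      ocost w u + w ρ P + w ρ Q
        ≤ ocost w t + ocost w s + w ρ p + w ρ q + w c p' + w c q' + 2 * w ρ c := by
  rcases t with _ | t₀
  · rcases s with _ | s₀
    · refine ⟨none, ρ, ρ, trivial, by simp [overts], Or.inr ⟨rfl, rfl, rfl⟩, ?_⟩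
      rcases hps with ⟨h, _⟩ | ⟨_, hp', hq'⟩
      · simp [overts] at h
      rcases hpt with ⟨h, _⟩ | ⟨_, hp, hq⟩
      · simp [overts] at h
      have h0 := hnonneg ρ c
      have e1 : w c p' = 0 := by rw [hp', hself]
      have e2 : w c q' = 0 := by rw [hq', hself]
      have e3 : w ρ p = 0 := by rw [hp, hself]
      have e4 : w ρ q = 0 := by rw [hq, hself]
      have e5 : w ρ ρ = 0 := hself ρ
      simp only [ocost]
      linarith
    · rcases hps with ⟨hp', hq'⟩ | ⟨h, _⟩
      · refine ⟨some s₀, p', q', hws, by simp [overts], Or.inl ⟨hp', hq'⟩, ?_⟩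
        rcases hpt with ⟨h, _⟩ | ⟨_, hp, hq⟩
        · simp [overts] at h
        have h1 : w ρ p' ≤ w ρ c + w c p' := htri ρ p' c
        have h2 : w ρ q' ≤ w ρ c + w c q' := htri ρ q' c
        have e3 : w ρ p = 0 := by rw [hp, hself]
        have e4 : w ρ q = 0 := by rw [hq, hself]
        simp only [ocost]
        linarith
      · simp at h
  · rcases s with _ | s₀
    · rcases hpt with ⟨hp, hq⟩ | ⟨h, _⟩
      · refine ⟨some t₀, p, q, hwt, by simp [overts], Or.inl ⟨hp, hq⟩, ?_⟩
        rcases hps with ⟨h, _⟩ | ⟨_, hp', hq'⟩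
        · simp [overts] at h
        have h0 := hnonneg ρ c
        have e1 : w c p' = 0 := by rw [hp', hself]
        have e2 : w c q' = 0 := by rw [hq', hself]
        simp only [ocost]
        linarith
      · simp at h
    · rcases hpt with ⟨hp, hq⟩ | ⟨h, _⟩
      swap
      · simp at h
      rcases hps with ⟨hp', hq'⟩ | ⟨h, _⟩
      swap
      · simp at h
      have hq0 : q ∈ t₀.verts := by simpa [overts] using hq
      have hp0 : p ∈ t₀.verts := by simpa [overts] using hp
      have hp'0 : p' ∈ s₀.verts := by simpa [overts] using hp'
      have hq'0 : q' ∈ s₀.verts := by simpa [overts] using hq'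
      have hP : p ∈ overts (some (FT.conn q p' t₀ s₀)) := by
        simp [overts, FT.verts, Finset.mem_union, hp0]
      have hQ : q' ∈ overts (some (FT.conn q p' t₀ s₀)) := by
        simp [overts, FT.verts, Finset.mem_union, hq'0]
      refine ⟨some (FT.conn q p' t₀ s₀), p, q', ⟨hwt, hws, hdisj, hq0, hp'0⟩,
        by simp [overts, FT.verts], Or.inl ⟨hP, hQ⟩, ?_⟩
      have h1 : w q p' ≤ w q ρ + w ρ p' := htri q p' ρ
      have h2 : w ρ p' ≤ w ρ c + w c p' := htri ρ p' c
      have h3 : w q ρ = w ρ q := hsymm q ρ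
      have h4 : w ρ q' ≤ w ρ c + w c q' := htri ρ q' c
      simp only [ocost, FT.cost, overts]
      linarith

end Key
section KeyMain
variable {V : Type*}

theorem key (w : V → V → ℝ) (hself : ∀ v, w v v = 0) (hsymm : ∀ u v, w u v = w v u)
    (hnonneg : ∀ u v, 0 ≤ w u v) (htri : ∀ u v x, w u v ≤ w u x + w x v)
    (B : Set V) :
    ∀ ft : FT V, ft.wf → ft.rooted →
    ∃ (tb tr : Option (FT V)) (pb qb pr qr : V),
      owf tb ∧ owf tr ∧
      overts tb = ft.verts.filter (· ∈ B) ∧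
      overts tr = ft.verts.filter (· ∉ B) ∧
      ((pb ∈ overts tb ∧ qb ∈ overts tb) ∨ (tb = none ∧ pb = ft.root ∧ qb = ft.root)) ∧
      ((pr ∈ overts tr ∧ qr ∈ overts tr) ∨ (tr = none ∧ pr = ft.root ∧ qr = ft.root)) ∧
      (ft.root ∈ B → pb = ft.root ∧ qb = ft.root) ∧
      (ft.root ∉ B → pr = ft.root ∧ qr = ft.root) ∧
      ocost w tb + ocost w tr + w ft.root pb + w ft.root qb + w ft.root pr + w ft.root qr
        ≤ 3 * ft.cost w := by
  intro ft
  induction ft with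
  | sngl v =>
    intro _ _
    by_cases hv : v ∈ B
    · refine ⟨some (FT.sngl v), none, v, v, v, v, trivial, trivial, ?_, ?_,
        Or.inl ⟨?_, ?_⟩, Or.inr ⟨rfl, rfl, rfl⟩, fun _ => ⟨rfl, rfl⟩, fun h => absurd hv h, ?_⟩
      · simp [overts, FT.verts, Finset.filter_singleton, hv]
      · simp [overts, FT.verts, Finset.filter_singleton, hv]
      · simp [overts, FT.verts, Finset.filter_singleton, hv]
      · simp [overts, FT.verts, Finset.filter_singleton, hv]
      · simp [ocost, FT.cost, FT.root, hself]
    · refine ⟨none, some (FT.sngl v), v, v, v, v, trivial, trivial, ?_, ?_,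
        Or.inr ⟨rfl, rfl, rfl⟩, Or.inl ⟨?_, ?_⟩, fun h => absurd h hv, fun _ => ⟨rfl, rfl⟩, ?_⟩
      · simp [overts, FT.verts, Finset.filter_singleton, hv]
      · simp [overts, FT.verts, Finset.filter_singleton, hv]
      · simp [overts, FT.verts, Finset.filter_singleton, hv]
      · simp [overts, FT.verts, Finset.filter_singleton, hv]
      · simp [ocost, FT.cost, FT.root, hself]
  | conn x y t s iht ihs =>
    rintro ⟨hwt, hws, hdisj, hx, hy⟩ ⟨hrt, hrs, hxr, hyr⟩
    obtain ⟨tb, tr, pb, qb, pr, qr, hwtb, hwtr, hvtb, hvtr, hptb, hptr, hrtb, hrtr, hct⟩ :=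
      iht hwt hrt
    obtain ⟨sb, sr, pb', qb', pr', qr', hwsb, hwsr, hvsb, hvsr, hpsb, hpsr, hrsb, hrsr, hcs⟩ :=
      ihs hws hrs
    subst hxr hyr
    set ρ := t.root with hρdef
    set c := s.root with hcdef
    have hroot : (FT.conn ρ c t s).root = ρ := rfl
    have hverts : (FT.conn ρ c t s).verts = t.verts ∪ s.verts := rfl
    have hcost : (FT.conn ρ c t s).cost w = t.cost w + s.cost w + w ρ c := rfl
    have hdisjB : Disjoint (overts tb) (overts sb) := by
      rw [hvtb, hvsb]
      exact Finset.disjoint_filter_filter hdisj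
    have hdisjR : Disjoint (overts tr) (overts sr) := by
      rw [hvtr, hvsr]
      exact Finset.disjoint_filter_filter hdisj
    by_cases hB : ρ ∈ B
    · -- root is "blue"
      obtain ⟨pbρ, qbρ⟩ := hrtb hB
      rcases tb with _ | tb₀
      · exfalso
        have : ρ ∈ overts (none : Option (FT V)) := by
          rw [hvtb, Finset.mem_filter]
          exact ⟨t.root_mem_verts, hB⟩
        simp [overts] at this
      have hρtb : ρ ∈ tb₀.verts := by
        have : ρ ∈ overts (some tb₀) := by
          rw [hvtb, Finset.mem_filter]; exact ⟨t.root_mem_verts, hB⟩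
        simpa [overts] using this
      obtain ⟨TB, hTBwf, hTBverts, hTBcost⟩ :=
        bcomb w hself hnonneg htri ρ c tb₀ sb pb' qb' hwtb hwsb hρtb
          (by simpa [overts] using hdisjB) hpsb
      obtain ⟨u, P, Q, huwf, huverts, huports, hucost⟩ :=
        rcomb w hself hsymm hnonneg htri ρ c tr sr pr qr pr' qr' hwtr hwsr hdisjR hptr hpsr
      refine ⟨some TB, u, ρ, ρ, P, Q, hTBwf, huwf, ?_, ?_, ?_, ?_, fun _ => ⟨rfl, rfl⟩,
        fun h => absurd hB h, ?_⟩
      · have h1 : overts (some TB) = TB.verts := rfl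
        have h2 : overts (some tb₀) = tb₀.verts := rfl
        rw [h1, hTBverts, hverts, Finset.filter_union, ← hvtb, ← hvsb, h2]
      · rw [huverts, hvtr, hvsr, hverts, Finset.filter_union]
      · left
        constructor <;>
        · simp only [overts, hTBverts, Finset.mem_union]
          exact Or.inl hρtb
      · exact huports
      · have e0 : w ρ ρ = 0 := hself ρ
        have e1 : w ρ pb = 0 := by rw [pbρ, hself]
        have e2 : w ρ qb = 0 := by rw [qbρ, hself]
        have n1 : 0 ≤ w c qb' := hnonneg c qb'
        have htb : ocost w (some tb₀) = tb₀.cost w := rfl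
        have hstb : ocost w (some TB) = TB.cost w := rfl
        rw [hroot, hcost]
        rw [htb] at hct
        simp only [hstb]
        linarith
    · -- root is "red"
      obtain ⟨prρ, qrρ⟩ := hrtr hB
      rcases tr with _ | tr₀
      · exfalso
        have : ρ ∈ overts (none : Option (FT V)) := by
          rw [hvtr, Finset.mem_filter]
          exact ⟨t.root_mem_verts, hB⟩
        simp [overts] at this
      have hρtr : ρ ∈ tr₀.verts := by
        have : ρ ∈ overts (some tr₀) := by
          rw [hvtr, Finset.mem_filter]; exact ⟨t.root_mem_verts, hB⟩
        simpa [overts] using this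
      obtain ⟨TR, hTRwf, hTRverts, hTRcost⟩ :=
        bcomb w hself hnonneg htri ρ c tr₀ sr pr' qr' hwtr hwsr hρtr
          (by simpa [overts] using hdisjR) hpsr
      obtain ⟨u, P, Q, huwf, huverts, huports, hucost⟩ :=
        rcomb w hself hsymm hnonneg htri ρ c tb sb pb qb pb' qb' hwtb hwsb hdisjB hptb hpsb
      refine ⟨u, some TR, P, Q, ρ, ρ, huwf, hTRwf, ?_, ?_, ?_, ?_,
        fun h => absurd h hB, fun _ => ⟨rfl, rfl⟩, ?_⟩
      · rw [huverts, hvtb, hvsb, hverts, Finset.filter_union]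
      · have h1 : overts (some TR) = TR.verts := rfl
        have h2 : overts (some tr₀) = tr₀.verts := rfl
        rw [h1, hTRverts, hverts, Finset.filter_union, ← hvtr, ← hvsr, h2]
      · exact huports
      · left
        constructor <;>
        · simp only [overts, hTRverts, Finset.mem_union]
          exact Or.inl hρtr
      · have e0 : w ρ ρ = 0 := hself ρ
        have e1 : w ρ pr = 0 := by rw [prρ, hself]
        have e2 : w ρ qr = 0 := by rw [qrρ, hself]
        have n1 : 0 ≤ w c qr' := hnonneg c qr'
        have htb : ocost w (some tr₀) = tr₀.cost w := rfl
        have hstb : ocost w (some TR) = TR.cost w := rfl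
        rw [hroot, hcost]
        rw [htb] at hct
        simp only [hstb]
        linarith

end KeyMain
section BridgeA
variable {V : Type*}

def restrict (G : SimpleGraph V) (S : Finset V) : SimpleGraph V where
  Adj u v := G.Adj u v ∧ u ∈ S ∧ v ∈ S
  symm := ⟨fun u v ⟨h, hu, hv⟩ => ⟨h.symm, hv, hu⟩⟩
  loopless := ⟨fun u ⟨h, _⟩ => G.loopless.irrefl u h⟩

lemma restrict_le (G : SimpleGraph V) (S : Finset V) : restrict G S ≤ G :=
  fun _ _ h => h.1

lemma restrict_adj (G : SimpleGraph V) (S : Finset V) (u v : V) :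
    (restrict G S).Adj u v ↔ G.Adj u v ∧ u ∈ S ∧ v ∈ S := Iff.rfl

lemma reach_or (G : SimpleGraph V) (ρ c : V) :
    ∀ {u z : V}, (G.Walk u z) →
      (G.deleteEdges {s(ρ,c)}).Reachable u z ∨
      (G.deleteEdges {s(ρ,c)}).Reachable u ρ ∨ (G.deleteEdges {s(ρ,c)}).Reachable u c := by
  intro u z p
  induction p with
  | nil => exact Or.inl (SimpleGraph.Reachable.refl _)
  | @cons u b z h q ih =>
    by_cases he : s(u, b) = s(ρ, c)
    · rw [Sym2.eq_iff] at he
      rcases he with ⟨rfl, rfl⟩ | ⟨rfl, rfl⟩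
      · exact Or.inr (Or.inl (SimpleGraph.Reachable.refl _))
      · exact Or.inr (Or.inr (SimpleGraph.Reachable.refl _))
    · have hadj : (G.deleteEdges {s(ρ,c)}).Adj u b := by
        rw [SimpleGraph.deleteEdges_adj]
        exact ⟨h, by simp [he]⟩
      rcases ih with h1 | h1 | h1
      · exact Or.inl (hadj.reachable.trans h1)
      · exact Or.inr (Or.inl (hadj.reachable.trans h1))
      · exact Or.inr (Or.inr (hadj.reachable.trans h1))

lemma reach_restrict (G H : SimpleGraph V) (hle : H ≤ G) (S : Finset V) (ρ : V)
    (hedges : ∀ u v, G.Adj u v → u ∈ S ∧ v ∈ S) (S₁ : Finset V)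
    (hS₁ : ∀ v, v ∈ S₁ ↔ v ∈ S ∧ H.Reachable v ρ) :
    ∀ {u z : V}, (H.Walk u z) → u ∈ S →
      H.Reachable z ρ →
      (restrict G S₁).Reachable u z := by
  intro u z p
  induction p with
  | nil => intro _ _; exact SimpleGraph.Reachable.refl _
  | @cons u b z h q ih =>
    intro hu hz
    have hGadj : G.Adj u b := hle h
    have hb : b ∈ S := (hedges u b hGadj).2
    have hadj : (restrict G S₁).Adj u b := by
      rw [restrict_adj]
      refine ⟨hGadj, ?_, ?_⟩
      · exact (hS₁ u).mpr ⟨hu, (h.reachable).trans (q.reachable.trans hz)⟩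
      · exact (hS₁ b).mpr ⟨hb, q.reachable.trans hz⟩
    exact hadj.reachable.trans (ih hb hz)

end BridgeA
section BridgeA2
variable {V : Type*} [Fintype V]

theorem bridgeA (w : V → V → ℝ) (hsymm : ∀ u v, w u v = w v u) :
    ∀ (n : ℕ) (S : Finset V) (G : SimpleGraph V) (ρ : V), S.card = n →
      (∀ u v, G.Adj u v → u ∈ S ∧ v ∈ S) →
      (∀ u ∈ S, ∀ v ∈ S, G.Reachable u v) →
      G.IsAcyclic → ρ ∈ S →
      ∃ ft : FT V, ft.wf ∧ ft.rooted ∧ ft.root = ρ ∧ ft.verts = S ∧ ft.cost w = cost w G := by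
  intro n
  induction n using Nat.strong_induction_on with
  | _ n ih =>
    intro S G ρ hcard hedges hconn hacyc hρ
    by_cases h1 : S.card ≤ 1
    · -- single vertex
      have hS : S = {ρ} := by
        have : S.card = 1 := le_antisymm h1 (Finset.card_pos.mpr ⟨ρ, hρ⟩)
        obtain ⟨a, ha⟩ := Finset.card_eq_one.mp this
        rw [ha] at hρ ⊢
        rw [Finset.mem_singleton] at hρ
        rw [hρ]
      have hnoadj : ∀ u v, ¬ G.Adj u v := by
        intro u v h
        obtain ⟨hu, hv⟩ := hedges u v h
        rw [hS, Finset.mem_singleton] at hu hv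
        subst hu; subst hv
        exact G.loopless.irrefl _ h
      refine ⟨FT.sngl ρ, trivial, trivial, rfl, by simp [FT.verts, hS], ?_⟩
      have : cost w G = 0 := by
        unfold cost
        rw [Finset.sum_eq_zero, zero_div]
        intro u _
        rw [Finset.sum_eq_zero]
        intro v _
        simp [hnoadj u v]
      rw [this]; rfl
    · push_neg at h1
      obtain ⟨c, hadj⟩ : ∃ c, G.Adj ρ c := by
        obtain ⟨v, hv, hvne⟩ := Finset.exists_mem_ne h1 ρ
        obtain ⟨p⟩ := hconn ρ hρ v hv
        cases p with
        | nil => exact absurd rfl hvne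
        | cons h q => exact ⟨_, h⟩
      have hρc : ρ ≠ c := hadj.ne
      set G' := G.deleteEdges {s(ρ,c)} with hG'def
      have hle : G' ≤ G := fun u v h => ((SimpleGraph.deleteEdges_adj).mp h).1
      set S₁ := S.filter (fun v => G'.Reachable v ρ) with hS₁def
      set S₂ := S.filter (fun v => G'.Reachable v c) with hS₂def
      have hbridge : ¬ G'.Reachable ρ c := by
        have hb := (SimpleGraph.isAcyclic_iff_forall_adj_isBridge.mp hacyc) hadj
        rw [SimpleGraph.isBridge_iff] at hb
        exact hb
      have hdisj : Disjoint S₁ S₂ := by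
        rw [Finset.disjoint_left]
        intro v hv1 hv2
        have r1 := (Finset.mem_filter.mp hv1).2
        have r2 := (Finset.mem_filter.mp hv2).2
        exact hbridge (r1.symm.trans r2)
      have hsplit : ∀ v ∈ S, v ∈ S₁ ∨ v ∈ S₂ := by
        intro v hv
        obtain ⟨p⟩ := hconn v hv ρ hρ
        rcases reach_or G ρ c p with h | h | h
        · exact Or.inl (Finset.mem_filter.mpr ⟨hv, h⟩)
        · exact Or.inl (Finset.mem_filter.mpr ⟨hv, h⟩)
        · exact Or.inr (Finset.mem_filter.mpr ⟨hv, h⟩)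
      have hρS₁ : ρ ∈ S₁ := Finset.mem_filter.mpr ⟨hρ, SimpleGraph.Reachable.refl _⟩
      have hcS : c ∈ S := (hedges ρ c hadj).2
      have hcS₂ : c ∈ S₂ := Finset.mem_filter.mpr ⟨hcS, SimpleGraph.Reachable.refl _⟩
      have hcnS₁ : c ∉ S₁ := fun h => Finset.disjoint_left.mp hdisj h hcS₂
      have hρnS₂ : ρ ∉ S₂ := fun h => Finset.disjoint_left.mp hdisj hρS₁ h
      have hS12 : S = S₁ ∪ S₂ := by
        apply Finset.Subset.antisymm
        · intro v hv
          rcases hsplit v hv with h | h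
          · exact Finset.mem_union_left _ h
          · exact Finset.mem_union_right _ h
        · intro v hv
          rcases Finset.mem_union.mp hv with h | h
          · exact Finset.filter_subset _ _ h
          · exact Finset.filter_subset _ _ h
      set G₁ := restrict G S₁ with hG₁def
      set G₂ := restrict G S₂ with hG₂def
      have hcross : ∀ u v, G.Adj u v → u ∈ S₁ → v ∈ S₂ → u = ρ ∧ v = c := by
        intro u v huv hu hv
        by_cases he : s(u,v) = s(ρ,c)
        · rw [Sym2.eq_iff] at he
          rcases he with ⟨rfl, rfl⟩ | ⟨rfl, rfl⟩
          · exact ⟨rfl, rfl⟩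
          · exact absurd hu hcnS₁
        · exfalso
          have hadj' : G'.Adj u v := by
            rw [hG'def, SimpleGraph.deleteEdges_adj]
            exact ⟨huv, by simp [he]⟩
          have : v ∈ S₁ := Finset.mem_filter.mpr
            ⟨(hedges u v huv).2, hadj'.symm.reachable.trans (Finset.mem_filter.mp hu).2⟩
          exact Finset.disjoint_left.mp hdisj this hv
      have hedges₁ : ∀ u v, G₁.Adj u v → u ∈ S₁ ∧ v ∈ S₁ := fun u v h => h.2
      have hedges₂ : ∀ u v, G₂.Adj u v → u ∈ S₂ ∧ v ∈ S₂ := fun u v h => h.2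
      have hconn₁ : ∀ u ∈ S₁, ∀ v ∈ S₁, G₁.Reachable u v := by
        intro u hu v hv
        obtain ⟨pu⟩ := (Finset.mem_filter.mp hu).2
        obtain ⟨pv⟩ := (Finset.mem_filter.mp hv).2
        have hch : ∀ x, x ∈ S₁ ↔ x ∈ S ∧ G'.Reachable x ρ := by
          intro x; rw [hS₁def, Finset.mem_filter]
        have h1 := reach_restrict G G' hle S ρ hedges S₁ hch pu (Finset.mem_filter.mp hu).1
          (SimpleGraph.Reachable.refl _)
        have h2 := reach_restrict G G' hle S ρ hedges S₁ hch pv (Finset.mem_filter.mp hv).1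
          (SimpleGraph.Reachable.refl _)
        exact h1.trans h2.symm
      have hconn₂ : ∀ u ∈ S₂, ∀ v ∈ S₂, G₂.Reachable u v := by
        intro u hu v hv
        obtain ⟨pu⟩ := (Finset.mem_filter.mp hu).2
        obtain ⟨pv⟩ := (Finset.mem_filter.mp hv).2
        have hch : ∀ x, x ∈ S₂ ↔ x ∈ S ∧ G'.Reachable x c := by
          intro x; rw [hS₂def, Finset.mem_filter]
        have h1 := reach_restrict G G' hle S c hedges S₂ hch pu (Finset.mem_filter.mp hu).1
          (SimpleGraph.Reachable.refl _)
        have h2 := reach_restrict G G' hle S c hedges S₂ hch pv (Finset.mem_filter.mp hv).1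
          (SimpleGraph.Reachable.refl _)
        exact h1.trans h2.symm
      have hacyc₁ : G₁.IsAcyclic := by
        intro v p hp
        exact hacyc (p.mapLe (restrict_le G S₁)) (hp.mapLe _)
      have hacyc₂ : G₂.IsAcyclic := by
        intro v p hp
        exact hacyc (p.mapLe (restrict_le G S₂)) (hp.mapLe _)
      have hcard₁ : S₁.card < n := by
        rw [← hcard]
        apply Finset.card_lt_card
        rw [Finset.ssubset_iff_of_subset (Finset.filter_subset _ _)]
        exact ⟨c, hcS, hcnS₁⟩
      have hcard₂ : S₂.card < n := by
        rw [← hcard]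
        apply Finset.card_lt_card
        rw [Finset.ssubset_iff_of_subset (Finset.filter_subset _ _)]
        exact ⟨ρ, hρ, hρnS₂⟩
      obtain ⟨ft₁, hwf₁, hrt₁, hroot₁, hverts₁, hcost₁⟩ :=
        ih S₁.card hcard₁ S₁ G₁ ρ rfl hedges₁ hconn₁ hacyc₁ hρS₁
      obtain ⟨ft₂, hwf₂, hrt₂, hroot₂, hverts₂, hcost₂⟩ :=
        ih S₂.card hcard₂ S₂ G₂ c rfl hedges₂ hconn₂ hacyc₂ hcS₂
      -- cost splitting
      have hpt : ∀ u v : V, (if G.Adj u v then w u v else 0)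
          = (if G₁.Adj u v then w u v else 0) + (if G₂.Adj u v then w u v else 0)
            + (if s(u,v) = s(ρ,c) ∧ u ≠ v then w u v else 0) := by
        intro u v
        by_cases hG : G.Adj u v
        · have hu := hsplit u (hedges u v hG).1
          have hv := hsplit v (hedges u v hG).2
          rcases hu with hu | hu <;> rcases hv with hv | hv
          · -- both in S₁
            have e1 : G₁.Adj u v := ⟨hG, hu, hv⟩
            have e2 : ¬ G₂.Adj u v := fun h => Finset.disjoint_left.mp hdisj hu h.2.1
            have e3 : ¬ (s(u,v) = s(ρ,c) ∧ u ≠ v) := by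
              rintro ⟨h, -⟩
              rw [Sym2.eq_iff] at h
              rcases h with ⟨rfl, rfl⟩ | ⟨rfl, rfl⟩
              · exact hcnS₁ hv
              · exact hcnS₁ hu
            rw [if_pos hG, if_pos e1, if_neg e2, if_neg e3]; ring
          · -- u ∈ S₁, v ∈ S₂ : the crossing edge
            obtain ⟨rfl, rfl⟩ := hcross u v hG hu hv
            have e1 : ¬ G₁.Adj u v := fun h => hcnS₁ h.2.2
            have e2 : ¬ G₂.Adj u v := fun h => hρnS₂ h.2.1
            have e3 : s(u,v) = s(u,v) ∧ u ≠ v := ⟨rfl, hρc⟩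
            rw [if_pos hG, if_neg e1, if_neg e2, if_pos e3]; ring
          · -- u ∈ S₂, v ∈ S₁ : the reversed crossing edge
            obtain ⟨rfl, rfl⟩ := hcross v u hG.symm hv hu
            have e1 : ¬ G₁.Adj u v := fun h => hcnS₁ h.2.1
            have e2 : ¬ G₂.Adj u v := fun h => hρnS₂ h.2.2
            have e3 : s(u,v) = s(v,u) ∧ u ≠ v := ⟨Sym2.eq_swap, hρc.symm⟩
            rw [if_pos hG, if_neg e1, if_neg e2, if_pos e3]; ring
          · -- both in S₂
            have e1 : ¬ G₁.Adj u v := fun h => Finset.disjoint_left.mp hdisj h.2.1 hu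
            have e2 : G₂.Adj u v := ⟨hG, hu, hv⟩
            have e3 : ¬ (s(u,v) = s(ρ,c) ∧ u ≠ v) := by
              rintro ⟨h, -⟩
              rw [Sym2.eq_iff] at h
              rcases h with ⟨rfl, rfl⟩ | ⟨rfl, rfl⟩
              · exact hρnS₂ hu
              · exact hρnS₂ hv
            rw [if_pos hG, if_neg e1, if_pos e2, if_neg e3]; ring
        · have e1 : ¬ G₁.Adj u v := fun h => hG h.1
          have e2 : ¬ G₂.Adj u v := fun h => hG h.1
          have e3 : ¬ (s(u,v) = s(ρ,c) ∧ u ≠ v) := by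
            rintro ⟨h, -⟩
            rw [Sym2.eq_iff] at h
            rcases h with ⟨rfl, rfl⟩ | ⟨rfl, rfl⟩
            · exact hG hadj
            · exact hG hadj.symm
          rw [if_neg hG, if_neg e1, if_neg e2, if_neg e3]; ring
      have hsum : cost w G = cost w G₁ + cost w G₂ + w ρ c := by
        unfold cost
        have : (∑ u : V, ∑ v : V, if G.Adj u v then w u v else 0)
            = (∑ u : V, ∑ v : V, if G₁.Adj u v then w u v else 0)
              + (∑ u : V, ∑ v : V, if G₂.Adj u v then w u v else 0)
              + (∑ u : V, ∑ v : V, if s(u,v) = s(ρ,c) ∧ u ≠ v then w u v else 0) := by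
          rw [← Finset.sum_add_distrib, ← Finset.sum_add_distrib]
          apply Finset.sum_congr rfl
          intro u _
          rw [← Finset.sum_add_distrib, ← Finset.sum_add_distrib]
          apply Finset.sum_congr rfl
          intro v _
          exact hpt u v
        rw [this, sum_pair_single w ρ c hρc, hsymm c ρ]
        ring
      refine ⟨FT.conn ρ c ft₁ ft₂, ⟨hwf₁, hwf₂, ?_, ?_, ?_⟩,
        ⟨hrt₁, hrt₂, hroot₁.symm, hroot₂.symm⟩, ?_, ?_, ?_⟩
      · rw [hverts₁, hverts₂]; exact hdisj
      · rw [hverts₁]; exact hρS₁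
      · rw [hverts₂]; exact hcS₂
      · simp [FT.root, hroot₁]
      · show ft₁.verts ∪ ft₂.verts = S
        rw [hverts₁, hverts₂, hS12]
      · show ft₁.cost w + ft₂.cost w + w ρ c = cost w G
        rw [hcost₁, hcost₂, hsum]

end BridgeA2
section BridgeB
variable {V : Type*}

/-- The graph (on the ambient type) generated by the edges of a free tree. -/
noncomputable def FT.graph (t : FT V) : SimpleGraph V :=
  SimpleGraph.fromEdgeSet ↑t.edges

lemma FT.graph_adj (t : FT V) (u v : V) :
    t.graph.Adj u v ↔ s(u,v) ∈ t.edges ∧ u ≠ v := by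
  rw [FT.graph, SimpleGraph.fromEdgeSet_adj, Finset.mem_coe]

lemma FT.graph_conn : ∀ t : FT V, t.wf → ∀ u ∈ t.verts, ∀ v ∈ t.verts,
    t.graph.Reachable u v := by
  intro t
  induction t with
  | sngl a =>
    intro _ u hu v hv
    simp only [FT.verts, Finset.mem_singleton] at hu hv
    subst hu; subst hv
    exact SimpleGraph.Reachable.refl _
  | conn x y t s iht ihs =>
    rintro ⟨hwt, hws, hdisj, hx, hy⟩ u hu v hv
    have hle_t : t.graph ≤ (FT.conn x y t s).graph := by
      apply SimpleGraph.fromEdgeSet_mono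
      intro e he
      simp only [Finset.mem_coe, FT.edges, Finset.mem_insert, Finset.mem_union] at he ⊢
      exact Or.inr (Or.inl he)
    have hle_s : s.graph ≤ (FT.conn x y t s).graph := by
      apply SimpleGraph.fromEdgeSet_mono
      intro e he
      simp only [Finset.mem_coe, FT.edges, Finset.mem_insert, Finset.mem_union] at he ⊢
      exact Or.inr (Or.inr he)
    have hxy : x ≠ y := fun h => by
      subst h; exact (Finset.disjoint_left.mp hdisj hx) hy
    have hadjxy : (FT.conn x y t s).graph.Adj x y := by
      rw [FT.graph_adj]
      exact ⟨by simp [FT.edges], hxy⟩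
    have hverts : (FT.conn x y t s).verts = t.verts ∪ s.verts := rfl
    rw [hverts, Finset.mem_union] at hu hv
    rcases hu with hu | hu <;> rcases hv with hv | hv
    · exact (iht hwt u hu v hv).mono hle_t
    · exact (((iht hwt u hu x hx).mono hle_t).trans hadjxy.reachable).trans
        ((ihs hws y hy v hv).mono hle_s)
    · exact (((ihs hws u hu y hy).mono hle_s).trans hadjxy.symm.reachable).trans
        ((iht hwt x hx v hv).mono hle_t)
    · exact (ihs hws u hu v hv).mono hle_s

lemma FT.graph_stay (t s : FT V) (x y : V) (hwt : t.wf) (hws : s.wf)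
    (hdisj : Disjoint t.verts s.verts) (hx : x ∈ t.verts) (hy : y ∈ s.verts) :
    ∀ {u z : V} (p : (FT.conn x y t s).graph.Walk u z), s(x,y) ∉ p.edges → u ∈ t.verts →
      (∀ e ∈ p.edges, e ∈ t.edges) := by
  intro u z p
  induction p with
  | nil => intro _ _ e he; simp at he
  | @cons u b z h q ih =>
    intro hne hu e he
    have hhead : s(u, b) ∈ (FT.conn x y t s).edges ∧ u ≠ b := (FT.graph_adj _ u b).mp h
    have hne_head : s(u,b) ≠ s(x,y) := fun hh => hne (by rw [← hh]; exact List.mem_cons_self)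
    have hmem : s(u,b) ∈ t.edges ∨ s(u,b) ∈ s.edges := by
      have := hhead.1
      simp only [FT.edges, Finset.mem_insert, Finset.mem_union] at this
      rcases this with h' | h' | h'
      · exact absurd h' hne_head
      · exact Or.inl h'
      · exact Or.inr h'
    have hmem_t : s(u,b) ∈ t.edges := by
      rcases hmem with h' | h'
      · exact h'
      · exfalso
        have := (FT.mem_of_mem_edges s hws _ h').1 u (by simp)
        exact (Finset.disjoint_left.mp hdisj hu) this
    have hb : b ∈ t.verts := (FT.mem_of_mem_edges t hwt _ hmem_t).1 b (by simp)
    rw [SimpleGraph.Walk.edges_cons, List.mem_cons] at he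
    rcases he with rfl | he
    · exact hmem_t
    · exact ih (fun hh => hne (by rw [SimpleGraph.Walk.edges_cons]; exact List.mem_cons_of_mem _ hh))
        hb e he


lemma FT.graph_stay' (t s : FT V) (x y : V) (hwt : t.wf) (hws : s.wf)
    (hdisj : Disjoint t.verts s.verts) (hx : x ∈ t.verts) (hy : y ∈ s.verts) :
    ∀ {u z : V} (p : (FT.conn x y t s).graph.Walk u z), s(x,y) ∉ p.edges → u ∈ s.verts →
      (∀ e ∈ p.edges, e ∈ s.edges) := by
  intro u z p
  induction p with
  | nil => intro _ _ e he; simp at he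
  | @cons u b z h q ih =>
    intro hne hu e he
    have hhead : s(u, b) ∈ (FT.conn x y t s).edges ∧ u ≠ b := (FT.graph_adj _ u b).mp h
    have hne_head : s(u,b) ≠ s(x,y) := fun hh => hne (by rw [← hh]; exact List.mem_cons_self)
    have hmem : s(u,b) ∈ t.edges ∨ s(u,b) ∈ s.edges := by
      have := hhead.1
      simp only [FT.edges, Finset.mem_insert, Finset.mem_union] at this
      rcases this with h' | h' | h'
      · exact absurd h' hne_head
      · exact Or.inl h'
      · exact Or.inr h'
    have hmem_s : s(u,b) ∈ s.edges := by
      rcases hmem with h' | h'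
      · exfalso
        have := (FT.mem_of_mem_edges t hwt _ h').1 u (by simp)
        exact (Finset.disjoint_left.mp hdisj this) hu
      · exact h'
    have hb : b ∈ s.verts := (FT.mem_of_mem_edges s hws _ hmem_s).1 b (by simp)
    rw [SimpleGraph.Walk.edges_cons, List.mem_cons] at he
    rcases he with rfl | he
    · exact hmem_s
    · exact ih (fun hh => hne (by rw [SimpleGraph.Walk.edges_cons]; exact List.mem_cons_of_mem _ hh))
        hb e he

lemma FT.graph_parity (t s : FT V) (x y : V) (hwt : t.wf) (hws : s.wf)
    (hdisj : Disjoint t.verts s.verts) (hx : x ∈ t.verts) (hy : y ∈ s.verts) :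
    ∀ {u z : V} (p : (FT.conn x y t s).graph.Walk u z), u ∈ t.verts ∪ s.verts →
      z ∈ t.verts ∪ s.verts ∧ (Even (p.edges.count s(x,y)) ↔ (u ∈ t.verts ↔ z ∈ t.verts)) := by
  intro u z p
  induction p with
  | nil => intro hu; exact ⟨hu, by simp⟩
  | @cons u b z h q ih =>
    intro hu
    have hhead : s(u, b) ∈ (FT.conn x y t s).edges ∧ u ≠ b := (FT.graph_adj _ u b).mp h
    have hvertmem := FT.mem_of_mem_edges (FT.conn x y t s) ⟨hwt, hws, hdisj, hx, hy⟩ _ hhead.1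
    have hb : b ∈ t.verts ∪ s.verts := by
      have := hvertmem.1 b (by simp)
      simpa [FT.verts] using this
    obtain ⟨hz, hiff⟩ := ih hb
    refine ⟨hz, ?_⟩
    rw [SimpleGraph.Walk.edges_cons]
    have hmem := hhead.1
    simp only [FT.edges, Finset.mem_insert, Finset.mem_union] at hmem
    have hynt : y ∉ t.verts := fun h' => (Finset.disjoint_left.mp hdisj h') hy
    by_cases hcase : s(u,b) = s(x,y)
    · -- crossing edge: sides flip
      rw [List.count_cons]
      simp only [beq_iff_eq, if_pos hcase]
      have hflip : (u ∈ t.verts ↔ ¬ (b ∈ t.verts)) := by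
        rw [Sym2.eq_iff] at hcase
        rcases hcase with ⟨rfl, rfl⟩ | ⟨rfl, rfl⟩
        · exact ⟨fun _ => hynt, fun _ => hx⟩
        · exact ⟨fun h' => absurd h' hynt, fun _ => absurd hx (by tauto)⟩
      rw [Nat.even_add_one, not_congr hiff, hflip]
      exact not_iff
    · -- edge inside one part: sides stay
      rw [List.count_cons]
      simp only [beq_iff_eq, if_neg hcase, add_zero]
      have hsame : (u ∈ t.verts ↔ b ∈ t.verts) := by
        rcases hmem with h' | h' | h'
        · exact absurd h' hcase
        · have h1 := (FT.mem_of_mem_edges t hwt _ h').1 u (by simp)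
          have h2 := (FT.mem_of_mem_edges t hwt _ h').1 b (by simp)
          exact ⟨fun _ => h2, fun _ => h1⟩
        · have h1 := (FT.mem_of_mem_edges s hws _ h').1 u (by simp)
          have h2 := (FT.mem_of_mem_edges s hws _ h').1 b (by simp)
          have hu1 : u ∉ t.verts := fun hh => (Finset.disjoint_left.mp hdisj hh) h1
          have hb1 : b ∉ t.verts := fun hh => (Finset.disjoint_left.mp hdisj hh) h2
          exact ⟨fun hh => absurd hh hu1, fun hh => absurd hh hb1⟩
      rw [hiff, hsame]

lemma FT.graph_acyclic : ∀ t : FT V, t.wf → t.graph.IsAcyclic := by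
  intro t
  induction t with
  | sngl a =>
    intro _
    have : (FT.sngl a : FT V).graph = ⊥ := by
      rw [FT.graph]
      have : ((FT.sngl a : FT V).edges : Set (Sym2 V)) = ∅ := by simp [FT.edges]
      rw [this, SimpleGraph.fromEdgeSet_empty]
    rw [this]
    exact SimpleGraph.isAcyclic_bot
  | conn x y t s iht ihs =>
    rintro ⟨hwt, hws, hdisj, hx, hy⟩
    intro v p hp
    by_cases hmem : s(x,y) ∈ p.edges
    · -- parity contradiction
      have hxs : x ∈ p.support := p.fst_mem_support_of_mem_edges hmem
      have hrot := hp.rotate hxs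
      have hcnt : (p.rotate x hxs).edges.count s(x,y) = 1 := by
        apply List.count_eq_one_of_mem hrot.edges_nodup
        rw [(p.rotate_edges x hxs).perm.mem_iff]
        exact hmem
      have hpar := (FT.graph_parity t s x y hwt hws hdisj hx hy (p.rotate x hxs)
        (Finset.mem_union_left _ hx)).2
      rw [hcnt] at hpar
      simp only [Nat.not_even_one, false_iff] at hpar
      exact hpar (by simp)
    · -- cycle inside one part
      have hvmem : v ∈ t.verts ∪ s.verts := by
        cases p with
        | nil => exact absurd rfl hp.ne_nil
        | cons h q =>
          have hhead := (FT.graph_adj _ _ _).mp h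
          have := (FT.mem_of_mem_edges (FT.conn x y t s) ⟨hwt, hws, hdisj, hx, hy⟩ _ hhead.1).1
            v (by simp)
          simpa [FT.verts] using this
      rw [Finset.mem_union] at hvmem
      rcases hvmem with hv | hv
      · have hstay := FT.graph_stay t s x y hwt hws hdisj hx hy p hmem hv
        have hsub : ∀ e ∈ p.edges, e ∈ t.graph.edgeSet := by
          intro e he
          rw [FT.graph, SimpleGraph.edgeSet_fromEdgeSet]
          exact ⟨Finset.mem_coe.mpr (hstay e he), (FT.mem_of_mem_edges t hwt e (hstay e he)).2⟩
        exact iht hwt (p.transfer t.graph hsub) (hp.transfer hsub)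
      · have hstay := FT.graph_stay' t s x y hwt hws hdisj hx hy p hmem hv
        have hsub : ∀ e ∈ p.edges, e ∈ s.graph.edgeSet := by
          intro e he
          rw [FT.graph, SimpleGraph.edgeSet_fromEdgeSet]
          exact ⟨Finset.mem_coe.mpr (hstay e he), (FT.mem_of_mem_edges s hws e (hstay e he)).2⟩
        exact ihs hws (p.transfer s.graph hsub) (hp.transfer hsub)

end BridgeB
section BridgeB2
variable {V : Type*} [Fintype V]

lemma comap_walk {G : SimpleGraph V} {S : Set V}
    (hmem : ∀ a b, G.Adj a b → b ∈ S) :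
    ∀ {a b : V} (p : G.Walk a b) (ha : a ∈ S) (hb : b ∈ S),
      (G.comap (Subtype.val : S → V)).Reachable ⟨a, ha⟩ ⟨b, hb⟩ := by
  intro a b p
  induction p with
  | nil => intro ha hb; exact SimpleGraph.Reachable.refl _
  | @cons a c b h q ih =>
    intro ha hb
    have hc : c ∈ S := hmem _ _ h
    have hadj : (G.comap (Subtype.val : S → V)).Adj ⟨a, ha⟩ ⟨c, hc⟩ := h
    exact hadj.reachable.trans (ih hc hb)

theorem bridgeB (w : V → V → ℝ) (hsymm : ∀ u v, w u v = w v u)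
    (ft : FT V) (hwf : ft.wf) (S : Set V) (hS : ∀ a, a ∈ S ↔ a ∈ ft.verts) :
    ∃ G : SimpleGraph S, G.IsTree ∧ cost (fun u v : S => w u.1 v.1) G = ft.cost w := by
  set H := ft.graph with hHdef
  have hend : ∀ a b, H.Adj a b → a ∈ ft.verts ∧ b ∈ ft.verts := by
    intro a b h
    obtain ⟨hmem, -⟩ := (ft.graph_adj a b).mp h
    have := (FT.mem_of_mem_edges ft hwf _ hmem).1
    exact ⟨this a (by simp), this b (by simp)⟩
  refine ⟨H.comap (Subtype.val : S → V), ⟨?_, ?_⟩, ?_⟩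
  · -- connected
    have hne : Nonempty S := ⟨⟨ft.root, (hS _).mpr ft.root_mem_verts⟩⟩
    refine SimpleGraph.Connected.mk ?_
    rintro ⟨a, ha⟩ ⟨b, hb⟩
    obtain ⟨p⟩ := FT.graph_conn ft hwf a ((hS a).mp ha) b ((hS b).mp hb)
    exact comap_walk (fun a b h => (hS b).mpr (hend a b h).2) p ha hb
  · -- acyclic
    intro v p hp
    have hinj : Function.Injective (Subtype.val : S → V) := Subtype.val_injective
    have hcyc := hp.map (f := SimpleGraph.Hom.comap (Subtype.val : S → V) H) hinj
    exact FT.graph_acyclic ft hwf _ hcyc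
  · -- cost
    unfold cost
    have hstep1 : ∀ u v : S,
        (if (H.comap (Subtype.val : S → V)).Adj u v then w u.1 v.1 else 0)
          = (if H.Adj u.1 v.1 then w u.1 v.1 else 0) := by
      intro u v
      congr 1
    have hSF : ∀ x, x ∈ Finset.univ.filter (· ∈ S) ↔ x ∈ S := by
      intro x; simp
    have hzero : ∀ a b : V, a ∉ S ∨ b ∉ S → (if H.Adj a b then w a b else 0) = 0 := by
      intro a b hab
      rcases hab with h | h <;>
      · rw [if_neg]
        intro hadj
        obtain ⟨h1, h2⟩ := hend a b hadj
        exact h ((hS _).mpr (by assumption))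
    have houter : ∀ g : V → ℝ, (∑ u : S, g u.1) = ∑ a ∈ Finset.univ.filter (· ∈ S), g a :=
      fun g => (Finset.sum_subtype (Finset.univ.filter (· ∈ S)) hSF g).symm
    have hmain : (∑ u : S, ∑ v : S, if H.Adj u.1 v.1 then w u.1 v.1 else 0)
        = ∑ a : V, ∑ b : V, (if H.Adj a b then w a b else 0) := by
      calc (∑ u : S, ∑ v : S, if H.Adj u.1 v.1 then w u.1 v.1 else 0)
          = ∑ u : S, ∑ b ∈ Finset.univ.filter (· ∈ S), (if H.Adj u.1 b then w u.1 b else 0) := by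
            apply Finset.sum_congr rfl
            intro u _
            exact houter (fun b => if H.Adj u.1 b then w u.1 b else 0)
        _ = ∑ a ∈ Finset.univ.filter (· ∈ S),
              ∑ b ∈ Finset.univ.filter (· ∈ S), (if H.Adj a b then w a b else 0) :=
            houter (fun a => ∑ b ∈ Finset.univ.filter (· ∈ S), (if H.Adj a b then w a b else 0))
        _ = ∑ a ∈ Finset.univ.filter (· ∈ S), ∑ b : V, (if H.Adj a b then w a b else 0) := by
            apply Finset.sum_congr rfl
            intro a _
            apply Finset.sum_subset (Finset.subset_univ _)
            intro b _ hb
            exact hzero a b (Or.inr (by simpa using hb))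
        _ = ∑ a : V, ∑ b : V, (if H.Adj a b then w a b else 0) := by
            apply Finset.sum_subset (Finset.subset_univ _)
            intro a _ ha
            rw [Finset.sum_eq_zero]
            intro b _
            exact hzero a b (Or.inl (by simpa using ha))
    have hpair : (∑ a : V, ∑ b : V, (if H.Adj a b then w a b else 0))
        = 2 * ft.cost w := by
      have hpt : ∀ a b : V, (if H.Adj a b then w a b else 0)
          = (if s(a,b) ∈ ft.edges ∧ a ≠ b then w a b else 0) := by
        intro a b
        by_cases h : H.Adj a b
        · rw [if_pos h, if_pos ((ft.graph_adj a b).mp h)]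
        · rw [if_neg h, if_neg (fun hc => h ((ft.graph_adj a b).mpr hc))]
      calc (∑ a : V, ∑ b : V, (if H.Adj a b then w a b else 0))
          = ∑ a : V, ∑ b : V, (if s(a,b) ∈ ft.edges ∧ a ≠ b then w a b else 0) := by
            apply Finset.sum_congr rfl; intro a _
            apply Finset.sum_congr rfl; intro b _
            exact hpt a b
        _ = 2 * ∑ e ∈ ft.edges, Sym2.lift ⟨w, hsymm⟩ e :=
            sum_pair_eq w hsymm ft.edges (fun e he => (FT.mem_of_mem_edges ft hwf e he).2)
        _ = 2 * ft.cost w := by rw [FT.cost_eq_sum w hsymm ft hwf]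
    have : (∑ u : S, ∑ v : S, if (H.comap (Subtype.val : S → V)).Adj u v then w u.1 v.1 else 0)
        = 2 * ft.cost w := by
      rw [← hpair, ← hmain]
      apply Finset.sum_congr rfl; intro u _
      apply Finset.sum_congr rfl; intro v _
      exact hstep1 u v
    beta_reduce
    have h3 := congrArg (· / (2:ℝ)) this
    convert h3 using 6
    ring

end BridgeB2
theorem stmt_0 {V : Type*} [Fintype V] (w : V → V → ℝ)
    (hw_self : ∀ v, w v v = 0)
    (hw_symm : ∀ u v, w u v = w v u)
    (hw_nonneg : ∀ u v, 0 ≤ w u v)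
    (hw_tri : ∀ u v x, w u v ≤ w u x + w x v)
    (T : SimpleGraph V) (hT : IsMST w T)
    (Vb Vr : Set V) (hunion : Vb ∪ Vr = Set.univ) (hdisj : Disjoint Vb Vr)
    (hbne : Vb.Nonempty) (hrne : Vr.Nonempty)
    (Tb : SimpleGraph Vb) (hTb : IsSubMST w Vb Tb)
    (Tr : SimpleGraph Vr) (hTr : IsSubMST w Vr Tr) :
    subCost w Vb Tb + subCost w Vr Tr ≤ 3 * cost w T := by
  obtain ⟨hTtree, -⟩ := hT
  obtain ⟨ρ, hρ⟩ := hbne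
  obtain ⟨σ, hσ⟩ := hrne
  have hσb : σ ∉ Vb := fun h => Set.disjoint_left.mp hdisj h hσ
  have hcompl : ∀ x, x ∉ Vb ↔ x ∈ Vr := by
    intro x
    constructor
    · intro hx
      have hx2 : x ∈ Vb ∪ Vr := by rw [hunion]; trivial
      rcases hx2 with h | h
      · exact absurd h hx
      · exact h
    · intro hx hxb
      exact Set.disjoint_left.mp hdisj hxb hx
  obtain ⟨ft, hwf, hrt, hroot, hverts, hcost⟩ :=
    bridgeA w hw_symm (Finset.univ.card) Finset.univ T ρ rfl
      (fun u v _ => ⟨Finset.mem_univ u, Finset.mem_univ v⟩)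
      (fun u _ v _ => hTtree.isConnected.preconnected u v)
      hTtree.IsAcyclic (Finset.mem_univ ρ)
  obtain ⟨tb, tr, pb, qb, pr, qr, hwtb, hwtr, hvtb, hvtr, hptb, hptr, hrtb, hrtr, hsum⟩ :=
    key w hw_self hw_symm hw_nonneg hw_tri Vb ft hwf hrt
  rcases tb with _ | tb₀
  · exfalso
    have h1 : ρ ∈ overts (none : Option (FT V)) := by
      rw [hvtb]
      exact Finset.mem_filter.mpr ⟨by rw [hverts]; exact Finset.mem_univ ρ, hρ⟩
    simp [overts] at h1
  rcases tr with _ | tr₀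
  · exfalso
    have h1 : σ ∈ overts (none : Option (FT V)) := by
      rw [hvtr]
      exact Finset.mem_filter.mpr ⟨by rw [hverts]; exact Finset.mem_univ σ, hσb⟩
    simp [overts] at h1
  have hvtb' : tb₀.verts = ft.verts.filter (· ∈ Vb) := hvtb
  have hvtr' : tr₀.verts = ft.verts.filter (· ∉ Vb) := hvtr
  obtain ⟨Gb, hGbtree, hGbcost⟩ := bridgeB w hw_symm tb₀ hwtb Vb (by
    intro a
    rw [hvtb', Finset.mem_filter, hverts]
    simp)
  obtain ⟨Gr, hGrtree, hGrcost⟩ := bridgeB w hw_symm tr₀ hwtr Vr (by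
    intro a
    rw [hvtr', Finset.mem_filter, hverts]
    simp only [Finset.mem_univ, true_and]
    exact (hcompl a).symm)
  have h1 : subCost w Vb Tb ≤ tb₀.cost w := by
    rw [← hGbcost]
    exact hTb.2 Gb hGbtree
  have h2 : subCost w Vr Tr ≤ tr₀.cost w := by
    rw [← hGrcost]
    exact hTr.2 Gr hGrtree
  have e1 : ocost w (some tb₀) = tb₀.cost w := rfl
  have e2 : ocost w (some tr₀) = tr₀.cost w := rfl
  rw [e1, e2] at hsum
  rw [hcost] at hsum
  have n1 := hw_nonneg ft.root pb
  have n2 := hw_nonneg ft.root qb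
  have n3 := hw_nonneg ft.root pr
  have n4 := hw_nonneg ft.root qr
  linarith
end

section
/- Let V = V_b ∪ V_r be any partition of V into two nonempty classes, and let T_b and T_r be minimum spanning trees of V_b and V_r respectively. Then max{c(T_b), c(T_r)} ≤ 2·c(T) − (w_L + w_× + w_R). -/
open scoped Classical

/-- The maximum weight of an edge of `G` (`0` if `G` has no edges, since weights are
nonnegative and `⨆` over an empty family of reals is `0`). -/
noncomputable def maxEdgeWeight {α : Type*} (w : α → α → ℝ) (G : SimpleGraph α) : ℝ :=
  ⨆ u, ⨆ v, ⨆ _ : G.Adj u v, w u v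

/-- Maximum edge weight of a graph on a subset `S`, w.r.t. the restricted weights. -/
noncomputable def subMaxW {V : Type*} (w : V → V → ℝ) (S : Set V) (G : SimpleGraph S) : ℝ :=
  maxEdgeWeight (fun u v : S => w u.1 v.1) G


namespace MSTAux

variable {α : Type*}

/-- cost of a walk given as a list of vertices -/
noncomputable def pcost (w : α → α → ℝ) : List α → ℝ
  | [] => 0
  | [_] => 0
  | a :: b :: t => w a b + pcost w (b :: t)

@[simp] lemma pcost_nil (w : α → α → ℝ) : pcost w [] = 0 := rfl
@[simp] lemma pcost_single (w : α → α → ℝ) (a : α) : pcost w [a] = 0 := rfl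
@[simp] lemma pcost_cons_cons (w : α → α → ℝ) (a b : α) (t : List α) :
    pcost w (a :: b :: t) = w a b + pcost w (b :: t) := rfl

lemma pcost_nonneg (w : α → α → ℝ) (hw : ∀ u v, 0 ≤ w u v) (l : List α) : 0 ≤ pcost w l := by
  induction l with
  | nil => simp
  | cons a t ih =>
    cases t with
    | nil => simp
    | cons b t' => simpa using add_nonneg (hw a b) ih

lemma pcost_append_cons (w : α → α → ℝ) (A : List α) (a : α) (B : List α) :
    pcost w (A ++ a :: B) = pcost w (A ++ [a]) + pcost w (a :: B) := by
  induction A with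
  | nil => simp
  | cons x A' ih =>
    cases A' with
    | nil =>
      cases B with
      | nil => simp
      | cons b B' => simp [pcost]
    | cons y A'' =>
      simp only [List.cons_append, pcost_cons_cons] at *
      rw [ih]; ring

lemma pcost_append (w : α → α → ℝ) {L1 L2 : List α} {x y : α}
    (h1 : L1.getLast? = some x) (h2 : L2.head? = some y) :
    pcost w (L1 ++ L2) = pcost w L1 + w x y + pcost w L2 := by
  induction L1 with
  | nil => simp at h1
  | cons u L1' ih =>
    cases L1' with
    | nil =>
      simp only [List.getLast?_singleton, Option.some_inj] at h1
      subst h1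
      cases L2 with
      | nil => simp at h2
      | cons v L2' =>
        simp only [List.head?_cons, Option.some_inj] at h2
        subst h2
        simp [pcost]
    | cons v L1'' =>
      rw [List.getLast?_cons_cons] at h1
      have := ih h1
      simp only [List.cons_append, pcost_cons_cons] at *
      rw [this]; ring

/-- monotonicity of walk cost under taking subsequences (shortcutting). -/
lemma pcost_sublist_cons (w : α → α → ℝ) (hw : ∀ u v, 0 ≤ w u v)
    (htri : ∀ u v x, w u v ≤ w u x + w x v)
    {l₁ l₂ : List α} (h : l₁.Sublist l₂) : ∀ a, pcost w (a :: l₁) ≤ pcost w (a :: l₂) := by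
  induction h with
  | slnil => intro a; exact le_refl _
  | @cons l₁ l₂ b hsub ih =>
    intro a
    refine (ih a).trans ?_
    cases l₂ with
    | nil => simp [pcost, hw]
    | cons c l₂' =>
      simp only [pcost_cons_cons]
      have := htri a c b
      have h2 := pcost_cons_cons w b c l₂'
      calc w a c + pcost w (c :: l₂') ≤ (w a b + w b c) + pcost w (c :: l₂') := by
            linarith [htri a c b]
        _ = w a b + pcost w (b :: c :: l₂') := by simp [pcost]; ring
  | @cons_cons l₁ l₂ b hsub ih =>
    intro a
    have := ih b
    simp only [pcost_cons_cons]
    linarith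

lemma pcost_sublist (w : α → α → ℝ) (hw : ∀ u v, 0 ≤ w u v)
    (htri : ∀ u v x, w u v ≤ w u x + w x v)
    {l₁ l₂ : List α} (h : l₁.Sublist l₂) : pcost w l₁ ≤ pcost w l₂ := by
  induction h with
  | slnil => exact le_refl _
  | @cons l₁ l₂ b hsub ih =>
    refine ih.trans ?_
    cases l₂ with
    | nil => simp [pcost, pcost_nonneg w hw]
    | cons c l₂' =>
      have := pcost_nonneg w hw (b :: c :: l₂')
      calc pcost w (c :: l₂') ≤ w b c + pcost w (c :: l₂') := by linarith [hw b c]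
        _ = pcost w (b :: c :: l₂') := by simp [pcost]
  | @cons_cons l₁ l₂ b hsub ih => exact pcost_sublist_cons w hw htri hsub b

lemma pcost_reverse (w : α → α → ℝ) (hsymm : ∀ u v, w u v = w v u) (l : List α) :
    pcost w l.reverse = pcost w l := by
  induction l with
  | nil => simp
  | cons a t ih =>
    cases t with
    | nil => simp
    | cons b t' =>
      have : (a :: b :: t').reverse = (b :: t').reverse ++ [a] := by simp
      rw [this]
      have hlast : ((b :: t').reverse).getLast? = some b := by
        simp [List.getLast?_reverse]
      rw [pcost_append w hlast (by simp : ([a] : List α).head? = some a)]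
      rw [ih]
      simp [pcost, hsymm b a]
      ring

lemma pcost_map {β : Type*} (w : β → β → ℝ) (f : α → β) (l : List α) :
    pcost (fun a b => w (f a) (f b)) l = pcost w (l.map f) := by
  induction l with
  | nil => simp
  | cons a t ih =>
    cases t with
    | nil => simp
    | cons b t' => simp only [List.map_cons, pcost_cons_cons] at *; rw [ih]

variable {α : Type*}

/-- edge-list trees: built from a single vertex by repeatedly attaching leaves -/
inductive ETree [DecidableEq α] : Finset α → List (α × α) → Prop
  | single (v : α) : ETree {v} []
  | leaf {S : Finset α} {E : List (α × α)} (x y : α) (hx : x ∉ S) (hy : y ∈ S) :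
      ETree S E → ETree (insert x S) ((x, y) :: E)

noncomputable def esum (w : α → α → ℝ) (E : List (α × α)) : ℝ :=
  (E.map fun p => w p.1 p.2).sum

@[simp] lemma esum_nil (w : α → α → ℝ) : esum w [] = 0 := rfl
@[simp] lemma esum_cons (w : α → α → ℝ) (p : α × α) (E : List (α × α)) :
    esum w (p :: E) = w p.1 p.2 + esum w E := by simp [esum]
lemma esum_append (w : α → α → ℝ) (E1 E2 : List (α × α)) :
    esum w (E1 ++ E2) = esum w E1 + esum w E2 := by simp [esum]
lemma esum_perm (w : α → α → ℝ) {E1 E2 : List (α × α)} (h : E1.Perm E2) :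
    esum w E1 = esum w E2 := List.Perm.sum_eq (h.map _)

variable [DecidableEq α]

lemma ETree.nonempty {S : Finset α} {E : List (α × α)} (h : ETree S E) : S.Nonempty := by
  induction h with
  | single v => exact ⟨v, Finset.mem_singleton_self v⟩
  | leaf x y hx hy h ih => exact ⟨x, Finset.mem_insert_self x _⟩

lemma ETree.mem_of_edge {S : Finset α} {E : List (α × α)} (h : ETree S E) :
    ∀ p ∈ E, p.1 ∈ S ∧ p.2 ∈ S ∧ p.1 ≠ p.2 := by
  induction h with
  | single v => simp
  | @leaf S E x y hx hy h ih =>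
    intro p hp
    rcases List.mem_cons.mp hp with rfl | hp
    · refine ⟨Finset.mem_insert_self _ _, Finset.mem_insert_of_mem hy, ?_⟩
      intro hxy
      simp only at hxy
      exact hx (hxy ▸ hy)
    · obtain ⟨h1, h2, h3⟩ := ih p hp
      exact ⟨Finset.mem_insert_of_mem h1, Finset.mem_insert_of_mem h2, h3⟩

lemma ETree.edges_nodup {S : Finset α} {E : List (α × α)} (h : ETree S E) :
    (E.map fun p => s(p.1, p.2)).Nodup := by
  induction h with
  | single v => simp
  | @leaf S E x y hx hy h ih =>
    simp only [List.map_cons, List.nodup_cons]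
    refine ⟨?_, ih⟩
    intro hmem
    rcases List.mem_map.mp hmem with ⟨p, hp, hpe⟩
    obtain ⟨h1, h2, _⟩ := h.mem_of_edge p hp
    rcases Sym2.eq_iff.mp hpe with ⟨rfl, _⟩ | ⟨_, rfl⟩
    · exact hx h1
    · exact hx h2

lemma ETree.card_eq {S : Finset α} {E : List (α × α)} (h : ETree S E) :
    S.card = E.length + 1 := by
  induction h with
  | single v => simp
  | @leaf S E x y hx hy h ih => rw [Finset.card_insert_of_notMem hx, ih]; simp

lemma ETree.eq_singleton_of_nil {S : Finset α} (h : ETree S []) : ∃ v, S = {v} := by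
  cases h with
  | single v => exact ⟨v, rfl⟩

lemma ETree.reachable {V' : Type*} [DecidableEq V'] {S : Finset V'} {E : List (V' × V')}
    (h : ETree S E) (G : SimpleGraph V') (hG : ∀ p ∈ E, G.Adj p.1 p.2) :
    ∀ x ∈ S, ∀ y ∈ S, G.Reachable x y := by
  induction h with
  | single v => intro x hx y hy
                rw [Finset.mem_singleton] at hx hy; subst hx; subst hy; exact SimpleGraph.Reachable.refl _
  | @leaf S E a b ha hb h ih =>
    have hadj : G.Adj a b := hG (a, b) (List.mem_cons_self)
    have hG' : ∀ p ∈ E, G.Adj p.1 p.2 := fun p hp => hG p (List.mem_cons_of_mem _ hp)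
    have key : ∀ z ∈ insert a S, G.Reachable a z := by
      intro z hz
      rcases Finset.mem_insert.mp hz with rfl | hz
      · exact SimpleGraph.Reachable.refl _
      · exact hadj.reachable.trans (ih hG' b hb z hz)
    intro x hx y hy
    exact (key x hx).symm.trans (key y hy)

lemma ETree.split {S : Finset α} {E : List (α × α)} (h : ETree S E) {a b : α}
    (hab : (a, b) ∈ E) :
    ∃ S1 E1 S2 E2, ETree S1 E1 ∧ ETree S2 E2 ∧ a ∈ S1 ∧ b ∈ S2 ∧
      Disjoint S1 S2 ∧ S1 ∪ S2 = S ∧ E.Perm ((a, b) :: (E1 ++ E2)) := by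
  induction h with
  | single v => simp at hab
  | @leaf S E x y hx hy h ih =>
    rcases List.mem_cons.mp hab with heq | hab'
    · -- the split edge is the new leaf edge
      injection heq with h1 h2
      subst h1; subst h2
      refine ⟨{a}, [], S, E, ETree.single a, h, Finset.mem_singleton_self a, hy, ?_, ?_, ?_⟩
      · simpa using hx
      · rw [Finset.insert_eq]
      · simp
    · obtain ⟨S1, E1, S2, E2, h1, h2, ha, hb, hdisj, hun, hperm⟩ := ih hab'
      have hyS : y ∈ S1 ∪ S2 := hun ▸ hy
      have hxS1 : x ∉ S1 := fun hc => hx (hun ▸ Finset.mem_union_left _ hc)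
      have hxS2 : x ∉ S2 := fun hc => hx (hun ▸ Finset.mem_union_right _ hc)
      rcases Finset.mem_union.mp hyS with hy1 | hy2
      · refine ⟨insert x S1, (x, y) :: E1, S2, E2, ETree.leaf x y hxS1 hy1 h1, h2,
          Finset.mem_insert_of_mem ha, hb, ?_, ?_, ?_⟩
        · rw [Finset.disjoint_left]
          intro z hz
          rcases Finset.mem_insert.mp hz with rfl | hz
          · exact hxS2
          · exact Finset.disjoint_left.mp hdisj hz
        · rw [Finset.insert_union, hun]
        · refine (hperm.cons (x, y)).trans ?_
          simpa using List.Perm.swap (a, b) (x, y) (E1 ++ E2)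
      · refine ⟨S1, E1, insert x S2, (x, y) :: E2, h1, ETree.leaf x y hxS2 hy2 h2,
          ha, Finset.mem_insert_of_mem hb, ?_, ?_, ?_⟩
        · rw [Finset.disjoint_right]
          intro z hz
          rcases Finset.mem_insert.mp hz with rfl | hz
          · exact hxS1
          · exact Finset.disjoint_right.mp hdisj hz
        · rw [Finset.union_insert, hun]
        · refine (hperm.cons (x, y)).trans ?_
          refine (List.Perm.swap (a, b) (x, y) (E1 ++ E2)).trans ?_
          exact (List.perm_middle.symm).cons _


lemma ne_nil_of_head? {L : List α} {r : α} (h : L.head? = some r) : L ≠ [] := by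
  intro hn; subst hn; simp at h

lemma ETree.open_walk (w : α → α → ℝ) (hsymm : ∀ u v, w u v = w v u)
    (hnonneg : ∀ u v, 0 ≤ w u v) {S : Finset α} {E : List (α × α)} (h : ETree S E) :
    ∀ r ∈ S, ∀ s ∈ S, ∃ L : List α, L.head? = some r ∧ L.getLast? = some s ∧
      (∀ z ∈ S, z ∈ L) ∧ (∀ z ∈ L, z ∈ S) ∧ pcost w L ≤ 2 * esum w E := by
  induction h with
  | single v =>
    intro r hr s hs
    rw [Finset.mem_singleton] at hr hs
    refine ⟨[r], by simp, by simp [hr, hs], by simp [hr], by simp [hr], by simp⟩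
  | @leaf S E x y hx hy h ih =>
    intro r hr s hs
    have hesum : esum w ((x, y) :: E) = w x y + esum w E := by simp
    by_cases hrx : r = x <;> by_cases hsx : s = x
    · -- r = x = s
      obtain ⟨L', h1, h2, h3, h4, h5⟩ := ih y hy y hy
      have hL'ne : L' ≠ [] := ne_nil_of_head? h1
      refine ⟨x :: (L' ++ [x]), by simp [hrx], ?_, ?_, ?_, ?_⟩
      · have hgl : (x :: (L' ++ [x])).getLast? = some x := by
          rw [show x :: (L' ++ [x]) = (x :: L') ++ [x] from rfl, List.getLast?_concat]
        rw [hsx]; exact hgl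
      · intro z hz
        rcases Finset.mem_insert.mp hz with rfl | hz
        · simp
        · simp [h3 z hz]
      · intro z hz
        rcases List.mem_cons.mp hz with rfl | hz
        · exact Finset.mem_insert_self _ _
        · rcases List.mem_append.mp hz with hz | hz
          · exact Finset.mem_insert_of_mem (h4 z hz)
          · simp at hz; subst hz; exact Finset.mem_insert_self _ _
      · have e1 : pcost w (x :: (L' ++ [x])) = pcost w ([x] ++ (L' ++ [x])) := by simp
        rw [e1, pcost_append w (by simp : ([x] : List α).getLast? = some x)
            (by rw [List.head?_append_of_ne_nil _ hL'ne, h1] : (L' ++ [x]).head? = some y)]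
        rw [pcost_append w h2 (by simp : ([x] : List α).head? = some x)]
        rw [hesum]
        have := hsymm y x
        simp only [pcost_single, pcost_nil]
        linarith
    · -- r = x, s ∈ S
      have hs' : s ∈ S := by rcases Finset.mem_insert.mp hs with h' | h'; exact absurd h' hsx; exact h'
      obtain ⟨L', h1, h2, h3, h4, h5⟩ := ih y hy s hs'
      have hL'ne : L' ≠ [] := ne_nil_of_head? h1
      refine ⟨x :: L', by simp [hrx], ?_, ?_, ?_, ?_⟩
      · show (([x] : List α) ++ L').getLast? = some s
        rw [List.getLast?_append_of_ne_nil _ hL'ne, h2]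
      · intro z hz
        rcases Finset.mem_insert.mp hz with rfl | hz
        · simp
        · simp [h3 z hz]
      · intro z hz
        rcases List.mem_cons.mp hz with rfl | hz
        · exact Finset.mem_insert_self _ _
        · exact Finset.mem_insert_of_mem (h4 z hz)
      · have e1 : pcost w (x :: L') = pcost w ([x] ++ L') := by simp
        rw [e1, pcost_append w (by simp : ([x] : List α).getLast? = some x) h1, hesum]
        simp only [pcost_single]
        have := hnonneg x y
        linarith
    · -- r ∈ S, s = x
      have hr' : r ∈ S := by rcases Finset.mem_insert.mp hr with h' | h'; exact absurd h' hrx; exact h'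
      obtain ⟨L', h1, h2, h3, h4, h5⟩ := ih r hr' y hy
      have hL'ne : L' ≠ [] := ne_nil_of_head? h1
      refine ⟨L' ++ [x], ?_, by simp [List.getLast?_concat, hsx], ?_, ?_, ?_⟩
      · rw [List.head?_append_of_ne_nil _ hL'ne, h1]
      · intro z hz
        rcases Finset.mem_insert.mp hz with rfl | hz
        · simp
        · simp [h3 z hz]
      · intro z hz
        rcases List.mem_append.mp hz with hz | hz
        · exact Finset.mem_insert_of_mem (h4 z hz)
        · simp at hz; subst hz; exact Finset.mem_insert_self _ _
      · rw [pcost_append w h2 (by simp : ([x] : List α).head? = some x), hesum]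
        simp only [pcost_single]
        have := hsymm y x
        have := hnonneg y x
        linarith
    · -- r, s ∈ S
      have hr' : r ∈ S := by rcases Finset.mem_insert.mp hr with h' | h'; exact absurd h' hrx; exact h'
      have hs' : s ∈ S := by rcases Finset.mem_insert.mp hs with h' | h'; exact absurd h' hsx; exact h'
      obtain ⟨L', h1, h2, h3, h4, h5⟩ := ih r hr' s hs'
      obtain ⟨A, B, hAB⟩ := List.append_of_mem (h3 y hy)
      have hglA : (A ++ y :: B).getLast? = (y :: B).getLast? := List.getLast?_append_cons A y B
      refine ⟨A ++ y :: x :: y :: B, ?_, ?_, ?_, ?_, ?_⟩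
      · cases A with
        | nil =>
          simp only [List.nil_append] at hAB ⊢
          rw [hAB] at h1
          simpa using h1
        | cons a A' =>
          have e : (a :: A' ++ y :: x :: y :: B).head? = (a :: A').head? :=
            List.head?_append_of_ne_nil _ (by simp)
          rw [e, ← List.head?_append_of_ne_nil (l₂ := y :: B) (a :: A') (by simp), ← hAB, h1]
      · rw [List.getLast?_append_cons, List.getLast?_cons_cons, List.getLast?_cons_cons,
          ← hglA, ← hAB, h2]
      · intro z hz
        rcases Finset.mem_insert.mp hz with rfl | hz
        · simp
        · have := h3 z hz
          rw [hAB] at this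
          rcases List.mem_append.mp this with hm | hm
          · exact List.mem_append.mpr (Or.inl hm)
          · rcases List.mem_cons.mp hm with rfl | hm
            · simp
            · refine List.mem_append.mpr (Or.inr ?_); simp [hm]
      · intro z hz
        rcases List.mem_append.mp hz with hm | hm
        · exact Finset.mem_insert_of_mem (h4 z (hAB ▸ List.mem_append.mpr (Or.inl hm)))
        · rcases List.mem_cons.mp hm with rfl | hm
          · exact Finset.mem_insert_of_mem (h4 z (hAB ▸ List.mem_append.mpr (Or.inr (by simp))))
          · rcases List.mem_cons.mp hm with rfl | hm
            · exact Finset.mem_insert_self _ _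
            · rcases List.mem_cons.mp hm with rfl | hm
              · exact Finset.mem_insert_of_mem (h4 z (hAB ▸ List.mem_append.mpr (Or.inr (by simp))))
              · exact Finset.mem_insert_of_mem (h4 z (hAB ▸ List.mem_append.mpr (Or.inr (by simp [hm]))))
      · have e1 : pcost w (A ++ y :: x :: y :: B)
            = pcost w (A ++ [y]) + (w y x + (w x y + pcost w (y :: B))) := by
          rw [pcost_append_cons w A y (x :: y :: B)]
          simp [pcost]
        have e2 : pcost w L' = pcost w (A ++ [y]) + pcost w (y :: B) := by
          rw [hAB, pcost_append_cons w A y B]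
        rw [e1, hesum]
        have := hsymm y x
        linarith

lemma ETree.walk_save (w : α → α → ℝ) (hsymm : ∀ u v, w u v = w v u)
    (hnonneg : ∀ u v, 0 ≤ w u v) {S : Finset α} {E : List (α × α)} (h : ETree S E)
    {a b : α} (hab : (a, b) ∈ E) {r : α} (hr : r ∈ S) :
    ∃ L : List α, L.head? = some r ∧ (∀ z ∈ S, z ∈ L) ∧ (∀ z ∈ L, z ∈ S) ∧
      pcost w L ≤ 2 * esum w E - w a b := by
  obtain ⟨S1, E1, S2, E2, h1, h2, ha, hb, hdisj, hun, hperm⟩ := h.split hab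
  have hesum : esum w E = w a b + (esum w E1 + esum w E2) := by
    rw [esum_perm w hperm]; simp [esum_append]
  have hrS : r ∈ S1 ∪ S2 := hun ▸ hr
  rcases Finset.mem_union.mp hrS with hr1 | hr2
  · obtain ⟨L1, g1, g2, g3, g4, g5⟩ := h1.open_walk w hsymm hnonneg r hr1 a ha
    obtain ⟨L2, f1, f2, f3, f4, f5⟩ := h2.open_walk w hsymm hnonneg b hb b hb
    refine ⟨L1 ++ L2, ?_, ?_, ?_, ?_⟩
    · rw [List.head?_append_of_ne_nil _ (ne_nil_of_head? g1), g1]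
    · intro z hz
      have := hun ▸ hz
      rcases Finset.mem_union.mp this with hz | hz
      · exact List.mem_append.mpr (Or.inl (g3 z hz))
      · exact List.mem_append.mpr (Or.inr (f3 z hz))
    · intro z hz
      rcases List.mem_append.mp hz with hz | hz
      · exact hun ▸ Finset.mem_union_left _ (g4 z hz)
      · exact hun ▸ Finset.mem_union_right _ (f4 z hz)
    · rw [pcost_append w g2 f1, hesum]
      linarith
  · obtain ⟨L2, g1, g2, g3, g4, g5⟩ := h2.open_walk w hsymm hnonneg r hr2 b hb
    obtain ⟨L1, f1, f2, f3, f4, f5⟩ := h1.open_walk w hsymm hnonneg a ha a ha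
    refine ⟨L2 ++ L1, ?_, ?_, ?_, ?_⟩
    · rw [List.head?_append_of_ne_nil _ (ne_nil_of_head? g1), g1]
    · intro z hz
      have := hun ▸ hz
      rcases Finset.mem_union.mp this with hz | hz
      · exact List.mem_append.mpr (Or.inr (f3 z hz))
      · exact List.mem_append.mpr (Or.inl (g3 z hz))
    · intro z hz
      rcases List.mem_append.mp hz with hz | hz
      · exact hun ▸ Finset.mem_union_right _ (g4 z hz)
      · exact hun ▸ Finset.mem_union_left _ (f4 z hz)
    · rw [pcost_append w g2 f1, hesum]
      have := hsymm b a
      linarith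

section Graph
variable {β : Type*}

lemma exists_crossing_edge {G : SimpleGraph β} {C : Set β} :
    ∀ {u v : β} (p : G.Walk u v), u ∈ C → v ∉ C →
      ∃ a b, G.Adj a b ∧ a ∈ C ∧ b ∉ C ∧ s(a, b) ∈ p.edges := by
  intro u v p
  induction p with
  | nil => intro hu hv; exact absurd hu hv
  | @cons u m v h q ih =>
    intro hu hv
    by_cases hm : m ∈ C
    · obtain ⟨a, b, h1, h2, h3, h4⟩ := ih hm hv
      exact ⟨a, b, h1, h2, h3, by simp [h4]⟩
    · exact ⟨u, m, h, hu, hm, by simp⟩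

lemma exists_spanning_etree [Fintype β] [DecidableEq β] {G : SimpleGraph β}
    (hconn : G.Connected) (v0 : β) :
    ∃ E : List (β × β), ETree Finset.univ E ∧ ∀ p ∈ E, G.Adj p.1 p.2 := by
  suffices h : ∀ n (C : Finset β) (E : List (β × β)), ETree C E → (∀ p ∈ E, G.Adj p.1 p.2) →
      (Finset.univ \ C).card ≤ n → ∃ E', ETree Finset.univ E' ∧ ∀ p ∈ E', G.Adj p.1 p.2 by
    exact h (Finset.univ \ {v0}).card {v0} [] (ETree.single v0) (by simp) le_rfl
  intro n
  induction n with
  | zero =>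
    intro C E hE hadj hcard
    have hC : C = Finset.univ := by
      have : Finset.univ \ C = ∅ := Finset.card_eq_zero.mp (Nat.le_zero.mp hcard)
      have h2 := Finset.sdiff_eq_empty_iff_subset.mp this
      exact Finset.eq_univ_iff_forall.mpr fun x => h2 (Finset.mem_univ x)
    exact ⟨E, hC ▸ hE, hadj⟩
  | succ n ih =>
    intro C E hE hadj hcard
    by_cases hC : C = Finset.univ
    · exact ⟨E, hC ▸ hE, hadj⟩
    · obtain ⟨v, hv⟩ : ∃ v, v ∉ C := by
        by_contra hcon
        push_neg at hcon
        exact hC (Finset.eq_univ_iff_forall.mpr hcon)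
      obtain ⟨u, hu⟩ := hE.nonempty
      obtain ⟨p⟩ := hconn.preconnected u v
      obtain ⟨a, b, h1, h2, h3, _⟩ := exists_crossing_edge (C := (↑C : Set β)) p
        (by exact_mod_cast hu) (by exact_mod_cast hv)
      have h2' : a ∈ C := by exact_mod_cast h2
      have h3' : b ∉ C := by exact_mod_cast h3
      have hE' : ETree (insert b C) ((b, a) :: E) := ETree.leaf b a h3' h2' hE
      have hadj' : ∀ p ∈ (b, a) :: E, G.Adj p.1 p.2 := by
        intro p hp
        rcases List.mem_cons.mp hp with rfl | hp
        · exact h1.symm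
        · exact hadj p hp
      refine ih (insert b C) ((b, a) :: E) hE' hadj' ?_
      have hset : Finset.univ \ insert b C = (Finset.univ \ C).erase b := by
        ext x; simp [and_comm, Finset.mem_erase, not_or]
      have hbmem : b ∈ Finset.univ \ C := by simp [h3']
      rw [hset, Finset.card_erase_of_mem hbmem]
      have : 1 ≤ (Finset.univ \ C).card := Finset.card_pos.mpr ⟨b, hbmem⟩
      omega

lemma toFinset_sum_le [DecidableEq β] (f : β → ℝ) (hf : ∀ x, 0 ≤ f x) (l : List β) :
    ∑ x ∈ l.toFinset, f x ≤ (l.map f).sum := by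
  induction l with
  | nil => simp
  | cons a t ih =>
    rw [List.toFinset_cons]
    by_cases ha : a ∈ t.toFinset
    · rw [Finset.insert_eq_self.mpr ha]
      simp only [List.map_cons, List.sum_cons]
      linarith [hf a]
    · rw [Finset.sum_insert ha]
      simp only [List.map_cons, List.sum_cons]
      linarith

lemma cost_eq_sum_edges [Fintype β] (w : β → β → ℝ) (hsymm : ∀ u v, w u v = w v u)
    (G : SimpleGraph β) :
    cost w G = ∑ e ∈ G.edgeFinset, Sym2.lift ⟨w, hsymm⟩ e := by
  classical
  have key : ∑ u : β, ∑ v : β, (if G.Adj u v then w u v else 0)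
      = 2 * ∑ e ∈ G.edgeFinset, Sym2.lift ⟨w, hsymm⟩ e := by
    rw [← Finset.sum_product']
    have h1 : ∑ p ∈ (Finset.univ ×ˢ Finset.univ : Finset (β × β)),
        (if G.Adj p.1 p.2 then w p.1 p.2 else 0)
        = ∑ p ∈ (Finset.univ ×ˢ Finset.univ : Finset (β × β)).filter
            (fun p => G.Adj p.1 p.2), w p.1 p.2 := (Finset.sum_filter _ _).symm
    rw [h1]
    set D := (Finset.univ ×ˢ Finset.univ : Finset (β × β)).filter (fun p => G.Adj p.1 p.2) with hD
    have hmaps : ∀ p ∈ D, s(p.1, p.2) ∈ G.edgeFinset := by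
      intro p hp
      rw [Finset.mem_filter] at hp
      rw [SimpleGraph.mem_edgeFinset, SimpleGraph.mem_edgeSet]
      exact hp.2
    rw [← Finset.sum_fiberwise_of_maps_to hmaps (fun p => w p.1 p.2)]
    rw [Finset.mul_sum]
    refine Finset.sum_congr rfl ?_
    intro e he
    induction e with
    | _ a b =>
      rw [SimpleGraph.mem_edgeFinset, SimpleGraph.mem_edgeSet] at he
      have hfib : D.filter (fun p => s(p.1, p.2) = s(a, b)) = {(a, b), (b, a)} := by
        ext p
        rcases p with ⟨p1, p2⟩
        simp only [Finset.mem_filter, hD, Finset.mem_univ, Finset.mem_product, true_and,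
          Finset.mem_insert, Finset.mem_singleton, Prod.mk.injEq, Sym2.eq_iff, and_true]
        constructor
        · rintro ⟨_, ⟨rfl, rfl⟩ | ⟨rfl, rfl⟩⟩
          · exact Or.inl ⟨rfl, rfl⟩
          · exact Or.inr ⟨rfl, rfl⟩
        · rintro (⟨rfl, rfl⟩ | ⟨rfl, rfl⟩)
          · exact ⟨he, Or.inl ⟨rfl, rfl⟩⟩
          · exact ⟨he.symm, Or.inr ⟨rfl, rfl⟩⟩
      rw [hfib]
      have hne : ((a, b) : β × β) ≠ (b, a) := by
        intro hcon
        apply he.ne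
        exact congrArg Prod.fst hcon
      rw [Finset.sum_pair hne]
      rw [Sym2.lift_mk]
      simp only
      rw [hsymm b a]
      ring
  rw [cost, key]
  ring

/-! ### path graphs from lists -/

noncomputable def pairs (l : List β) : List (Sym2 β) := (l.zip l.tail).map fun p => s(p.1, p.2)

@[simp] lemma pairs_nil : pairs ([] : List β) = [] := rfl
@[simp] lemma pairs_single (a : β) : pairs [a] = [] := rfl
@[simp] lemma pairs_cons_cons (a b : β) (t : List β) :
    pairs (a :: b :: t) = s(a, b) :: pairs (b :: t) := rfl

lemma mem_of_mem_zip_tail : ∀ {l : List β} {p : β × β}, p ∈ l.zip l.tail → p.1 ∈ l ∧ p.2 ∈ l := by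
  intro l
  induction l with
  | nil => intro p hp; simp at hp
  | cons a t ih =>
    intro p hp
    cases t with
    | nil => simp at hp
    | cons b t' =>
      rcases List.mem_cons.mp hp with rfl | hp
      · exact ⟨by simp, by simp⟩
      · obtain ⟨h1, h2⟩ := ih hp
        exact ⟨List.mem_cons_of_mem _ h1, List.mem_cons_of_mem _ h2⟩

lemma zip_tail_index : ∀ {l : List β} {p : β × β}, p ∈ l.zip l.tail →
    ∃ i, ∃ _ : i + 1 < l.length, p.1 = l[i] ∧ p.2 = l[i + 1] := by
  intro l
  induction l with
  | nil => intro p hp; simp at hp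
  | cons a t ih =>
    intro p hp
    cases t with
    | nil => simp at hp
    | cons b t' =>
      rcases List.mem_cons.mp hp with rfl | hp
      · exact ⟨0, by simp, rfl, rfl⟩
      · obtain ⟨i, hi, h1, h2⟩ := ih hp
        exact ⟨i + 1, by simpa using Nat.succ_lt_succ hi, h1, h2⟩

noncomputable def pathGraphOf (l : List β) : SimpleGraph β :=
  SimpleGraph.fromEdgeSet {e | e ∈ pairs l}

lemma pathGraphOf_adj {l : List β} {x y : β} :
    (pathGraphOf l).Adj x y ↔ s(x, y) ∈ pairs l ∧ x ≠ y := by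
  rw [pathGraphOf, SimpleGraph.fromEdgeSet_adj]; rfl

lemma pathGraphOf_edgeSet {l : List β} (hl : l.Nodup) :
    (pathGraphOf l).edgeSet = {e | e ∈ pairs l} := by
  rw [pathGraphOf, SimpleGraph.edgeSet_fromEdgeSet]
  ext e
  simp only [Set.mem_diff, Set.mem_setOf_eq, and_iff_left_iff_imp]
  intro he hdiag
  obtain ⟨q, hq, hqe⟩ := List.mem_map.mp he
  rw [← hqe] at hdiag
  rw [Sym2.mem_diagSet, Sym2.mk_isDiag_iff] at hdiag
  -- q.1 = q.2 contradicts nodup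
  obtain ⟨i, hi, h1, h2⟩ := zip_tail_index hq
  rw [h1, h2] at hdiag
  have := List.Nodup.getElem_inj_iff hl |>.mp hdiag
  omega

lemma pathGraphOf_mono {l : List β} {a : β} : pathGraphOf l ≤ pathGraphOf (a :: l) := by
  apply SimpleGraph.fromEdgeSet_mono
  intro e he
  cases l with
  | nil => simp at he
  | cons b t => exact List.mem_cons_of_mem _ he

lemma pathGraphOf_reachable : ∀ {l : List β}, l.Nodup → ∀ {a : β}, l.head? = some a →
    ∀ x ∈ l, (pathGraphOf l).Reachable a x := by
  intro l
  induction l with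
  | nil => intro _ a ha; simp at ha
  | cons c t ih =>
    intro hl a ha x hx
    have hca : a = c := by
      simp only [List.head?_cons, Option.some_inj] at ha
      exact ha.symm
    subst hca
    rcases List.mem_cons.mp hx with rfl | hx
    · exact SimpleGraph.Reachable.refl _
    · cases t with
      | nil => simp at hx
      | cons b t' =>
        have hadj : (pathGraphOf (a :: b :: t')).Adj a b := by
          rw [pathGraphOf_adj]
          refine ⟨by simp, ?_⟩
          intro hcon
          subst hcon
          exact (List.nodup_cons.mp hl).1 (List.mem_cons_self)
        have hreach := ih (List.nodup_cons.mp hl).2 (a := b) rfl x hx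
        exact hadj.reachable.trans (hreach.mono pathGraphOf_mono)

lemma mem_take_iff {l : List β} (hl : l.Nodup) {i j : ℕ} (hj : j < l.length) :
    l[j] ∈ l.take (i + 1) ↔ j < i + 1 := by
  constructor
  · intro h
    obtain ⟨k, hk, hkj⟩ := List.mem_iff_getElem.mp h
    have hk' : k < l.length := lt_of_lt_of_le hk (by simpa using List.length_take_le (i+1) l)
    rw [List.getElem_take] at hkj
    have := (List.Nodup.getElem_inj_iff hl).mp hkj
    subst this
    have := hk
    simp only [List.length_take] at this
    omega
  · intro h
    have hlen : j < (l.take (i + 1)).length := by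
      simp only [List.length_take]
      omega
    have : (l.take (i + 1))[j] = l[j] := List.getElem_take
    rw [← this]
    exact List.getElem_mem _

lemma pathGraphOf_isAcyclic {l : List β} (hl : l.Nodup) : (pathGraphOf l).IsAcyclic := by
  rw [SimpleGraph.isAcyclic_iff_forall_adj_isBridge]
  intro x y hxy
  rw [SimpleGraph.isBridge_iff_adj_and_forall_walk_mem_edges]
  obtain ⟨hmem, hne⟩ := pathGraphOf_adj.mp hxy
  obtain ⟨q, hq, hqe⟩ := List.mem_map.mp hmem
  obtain ⟨i, hi, h1, h2⟩ := zip_tail_index hq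
  rw [h1, h2] at hqe
  -- hqe : s(l[i], l[i+1]) = s(x, y)
  set C : Set β := {z | z ∈ l.take (i + 1)} with hC
  have hiC : l[i] ∈ C := by
    rw [hC, Set.mem_setOf_eq, mem_take_iff hl (by omega)]
    omega
  have hi1C : l[i + 1] ∉ C := by
    rw [hC, Set.mem_setOf_eq, mem_take_iff hl hi]
    omega
  have key : ∀ (u v : β), u ∈ C → v ∉ C → ∀ qq : (pathGraphOf l).Walk u v,
      s(l[i], l[(i + 1)]) ∈ qq.edges := by
    intro u v hu hv qq
    obtain ⟨a, b, hadj, haC, hbC, hmemq⟩ := exists_crossing_edge qq hu hv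
    obtain ⟨hmem', hne'⟩ := pathGraphOf_adj.mp hadj
    obtain ⟨q', hq', hq'e⟩ := List.mem_map.mp hmem'
    obtain ⟨j, hj, g1, g2⟩ := zip_tail_index hq'
    rw [g1, g2] at hq'e
    -- hq'e : s(l[j], l[j+1]) = s(a, b)
    rcases Sym2.eq_iff.mp hq'e with ⟨ha, hb⟩ | ⟨ha, hb⟩
    · -- a = l[j], b = l[j+1]
      have hj1 : j < i + 1 := (mem_take_iff hl (by omega)).mp (ha ▸ haC)
      have hj2 : ¬ (j + 1 < i + 1) := fun hcon => hbC (hb ▸ (mem_take_iff hl hj).mpr hcon)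
      have : j = i := by omega
      subst this
      rw [ha, hb]
      exact hmemq
    · -- l[j] = b, l[j+1] = a
      have hj1 : j + 1 < i + 1 := by
        rw [← hb] at haC
        exact (mem_take_iff hl hj).mp haC
      have hj2 : ¬ (j < i + 1) := fun hc => hbC (ha ▸ (mem_take_iff hl (by omega)).mpr hc)
      omega
  intro p
  rcases Sym2.eq_iff.mp hqe with ⟨hx, hy⟩ | ⟨hx, hy⟩
  · have := key x y (hx ▸ hiC) (hy ▸ hi1C) p
    rwa [hx, hy] at this
  · have := key y x (hx ▸ hiC) (hy ▸ hi1C) p.reverse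
    rw [SimpleGraph.Walk.edges_reverse, List.mem_reverse] at this
    rw [hx, hy] at this
    rw [Sym2.eq_swap]
    exact this

lemma pathGraphOf_isTree [Nonempty β] {l : List β} (hl : l.Nodup) (hcov : ∀ x, x ∈ l) :
    (pathGraphOf l).IsTree := by
  have hne : l ≠ [] := by
    intro hcon
    obtain ⟨x⟩ := ‹Nonempty β›
    rw [hcon] at hcov
    simpa using hcov x
  obtain ⟨a, t, rfl⟩ := List.exists_cons_of_ne_nil hne
  constructor
  · rw [SimpleGraph.connected_iff]
    refine ⟨?_, inferInstance⟩
    intro x y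
    have hx := pathGraphOf_reachable hl (a := a) rfl x (hcov x)
    have hy := pathGraphOf_reachable hl (a := a) rfl y (hcov y)
    exact hx.symm.trans hy
  · exact pathGraphOf_isAcyclic hl

lemma pairs_map_lift (w : β → β → ℝ) (hsymm : ∀ u v, w u v = w v u) :
    ∀ l : List β, ((pairs l).map (Sym2.lift ⟨w, fun a b => hsymm a b⟩)).sum = pcost w l := by
  intro l
  induction l with
  | nil => simp
  | cons a t ih =>
    cases t with
    | nil => simp
    | cons b t' =>
      rw [pairs_cons_cons, List.map_cons, List.sum_cons, ih, pcost_cons_cons, Sym2.lift_mk]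

lemma lift_nonneg (w : β → β → ℝ) (hsymm : ∀ u v, w u v = w v u)
    (hnonneg : ∀ u v, 0 ≤ w u v) (e : Sym2 β) : 0 ≤ Sym2.lift ⟨w, fun a b => hsymm a b⟩ e := by
  induction e with
  | _ a b => rw [Sym2.lift_mk]; exact hnonneg a b

lemma cost_pathGraphOf_le [Fintype β] (w : β → β → ℝ) (hsymm : ∀ u v, w u v = w v u)
    (hnonneg : ∀ u v, 0 ≤ w u v) (l : List β) (hl : l.Nodup) :
    cost w (pathGraphOf l) ≤ pcost w l := by
  classical
  rw [cost_eq_sum_edges w hsymm]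
  have hsub : (pathGraphOf l).edgeFinset ⊆ (pairs l).toFinset := by
    intro e he
    rw [SimpleGraph.mem_edgeFinset, pathGraphOf_edgeSet hl] at he
    exact List.mem_toFinset.mpr he
  calc ∑ e ∈ (pathGraphOf l).edgeFinset, Sym2.lift ⟨w, fun a b => hsymm a b⟩ e
      ≤ ∑ e ∈ (pairs l).toFinset, Sym2.lift ⟨w, fun a b => hsymm a b⟩ e :=
        Finset.sum_le_sum_of_subset_of_nonneg hsub
          (fun e _ _ => lift_nonneg w hsymm hnonneg e)
    _ ≤ ((pairs l).map (Sym2.lift ⟨w, fun a b => hsymm a b⟩)).sum :=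
        toFinset_sum_le _ (lift_nonneg w hsymm hnonneg) _
    _ = pcost w l := pairs_map_lift w hsymm l

/-! ### max edge weight -/

lemma maxw_le {γ : Type*} (w : γ → γ → ℝ) (G : SimpleGraph γ) {B : ℝ} (hB : 0 ≤ B)
    (hall : ∀ u v, G.Adj u v → w u v ≤ B) : maxEdgeWeight w G ≤ B := by
  refine Real.iSup_le (fun u => Real.iSup_le (fun v => Real.iSup_le (fun h => hall u v h) hB) hB) hB

lemma le_maxw {γ : Type*} [Finite γ] (w : γ → γ → ℝ) (G : SimpleGraph γ) {u v : γ}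
    (h : G.Adj u v) : w u v ≤ maxEdgeWeight w G := by
  have h1 : w u v = ⨆ _ : G.Adj u v, w u v := (ciSup_pos (f := fun _ => w u v) h).symm
  rw [maxEdgeWeight, h1]
  have hb1 : BddAbove (Set.range fun v => ⨆ _ : G.Adj u v, w u v) :=
    Set.Finite.bddAbove (Set.finite_range _)
  have hb2 : BddAbove (Set.range fun u => ⨆ v, ⨆ _ : G.Adj u v, w u v) :=
    Set.Finite.bddAbove (Set.finite_range _)
  calc (⨆ _ : G.Adj u v, w u v) ≤ ⨆ v, ⨆ _ : G.Adj u v, w u v := le_ciSup hb1 v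
    _ ≤ ⨆ u, ⨆ v, ⨆ _ : G.Adj u v, w u v := le_ciSup hb2 u

lemma maxw_empty {γ : Type*} [Nonempty γ] (w : γ → γ → ℝ) (G : SimpleGraph γ)
    (h : ∀ u v, ¬ G.Adj u v) : maxEdgeWeight w G = 0 := by
  rw [maxEdgeWeight]
  have : ∀ u : γ, (⨆ v, ⨆ _ : G.Adj u v, w u v) = 0 := by
    intro u
    have : ∀ v : γ, (⨆ _ : G.Adj u v, w u v) = 0 := by
      intro v
      have : IsEmpty (G.Adj u v) := ⟨fun hc => h u v hc⟩
      exact Real.iSup_of_isEmpty _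
    simp only [this]
    exact ciSup_const
  simp only [this]
  exact ciSup_const

lemma exists_list_max (w : β → β → ℝ) :
    ∀ (E : List (β × β)), E ≠ [] → ∃ q ∈ E, ∀ p ∈ E, w p.1 p.2 ≤ w q.1 q.2 := by
  intro E
  induction E with
  | nil => intro h; exact absurd rfl h
  | cons a t ih =>
    intro _
    cases t with
    | nil =>
      refine ⟨a, by simp, ?_⟩
      intro p hp
      simp at hp
      subst hp
      exact le_refl _
    | cons b t' =>
      obtain ⟨q, hq, hmax⟩ := ih (by simp)
      by_cases hcmp : w a.1 a.2 ≤ w q.1 q.2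
      · refine ⟨q, List.mem_cons_of_mem _ hq, ?_⟩
        intro p hp
        rcases List.mem_cons.mp hp with rfl | hp
        · exact hcmp
        · exact hmax p hp
      · refine ⟨a, List.mem_cons_self, ?_⟩
        intro p hp
        rcases List.mem_cons.mp hp with rfl | hp
        · exact le_refl _
        · exact (hmax p hp).trans (le_of_not_ge hcmp)

/-! ### per-side walk with max-edge saving -/

lemma side_max {V : Type*} [Fintype V] [DecidableEq V] (w : V → V → ℝ)
    (hsymm : ∀ u v, w u v = w v u) (hnonneg : ∀ u v, 0 ≤ w u v)
    (G0 : SimpleGraph V) (S : Finset V) (Sset : Set V) (hSeq : Sset = ↑S)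
    {EL : List (V × V)} (hET : ETree S EL) (hadjEL : ∀ p ∈ EL, G0.Adj p.1 p.2)
    (hcomplete : ∀ u v : V, u ∈ S → v ∈ S → G0.Adj u v → (u, v) ∈ EL ∨ (v, u) ∈ EL)
    (r : V) (hr : r ∈ S) :
    ∃ L : List V, L.head? = some r ∧ (∀ z ∈ S, z ∈ L) ∧
      pcost w L ≤ 2 * esum w EL - subMaxW w Sset (G0.induce Sset) := by
  have hrS : r ∈ Sset := by rw [hSeq]; exact_mod_cast hr
  have hne : Nonempty ↥Sset := ⟨⟨r, hrS⟩⟩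
  rcases eq_or_ne EL [] with rfl | hELne
  · obtain ⟨v, hv⟩ := hET.eq_singleton_of_nil
    have hrv : r = v := by rw [hv, Finset.mem_singleton] at hr; exact hr
    have hM : subMaxW w Sset (G0.induce Sset) = 0 := by
      apply maxw_empty
      rintro ⟨u, humem⟩ ⟨u', humem'⟩ hadj
      rw [SimpleGraph.comap_adj] at hadj
      rw [hSeq, hv] at humem humem'
      simp only [Finset.coe_singleton, Set.mem_singleton_iff] at humem humem'
      subst humem; subst humem'
      exact G0.irrefl hadj
    refine ⟨[r], rfl, ?_, ?_⟩
    · intro z hz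
      rw [hv, Finset.mem_singleton] at hz
      subst hz
      simp [hrv]
    · rw [hM]
      simp
  · obtain ⟨q, hq, hqmax⟩ := exists_list_max w EL hELne
    have hq1 : q.1 ∈ S := (hET.mem_of_edge q hq).1
    have hq2 : q.2 ∈ S := (hET.mem_of_edge q hq).2.1
    have hq1' : q.1 ∈ Sset := by rw [hSeq]; exact_mod_cast hq1
    have hq2' : q.2 ∈ Sset := by rw [hSeq]; exact_mod_cast hq2
    have hadjq : G0.Adj q.1 q.2 := hadjEL q hq
    have hMle : subMaxW w Sset (G0.induce Sset) ≤ w q.1 q.2 := by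
      apply maxw_le _ _ (hnonneg _ _)
      rintro ⟨u, humem⟩ ⟨v, hvmem⟩ hadj
      rw [SimpleGraph.comap_adj] at hadj
      rw [hSeq] at humem hvmem
      rw [Finset.mem_coe] at humem hvmem
      rcases hcomplete u v humem hvmem hadj with hmem | hmem
      · exact hqmax _ hmem
      · have := hqmax _ hmem
        show w u v ≤ w q.1 q.2
        rw [hsymm u v]
        exact this
    have hMge : w q.1 q.2 ≤ subMaxW w Sset (G0.induce Sset) := by
      have hadj' : (G0.induce Sset).Adj ⟨q.1, hq1'⟩ ⟨q.2, hq2'⟩ := by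
        rw [SimpleGraph.comap_adj]
        exact hadjq
      exact le_maxw (fun (a b : ↥Sset) => w a.1 b.1) _ hadj'
    have hM : subMaxW w Sset (G0.induce Sset) = w q.1 q.2 := le_antisymm hMle hMge
    obtain ⟨L, l1, l2, _, l4⟩ :=
      hET.walk_save w hsymm hnonneg (a := q.1) (b := q.2) (by simpa using hq) hr
    exact ⟨L, l1, l2, by rw [hM]; exact l4⟩

lemma grand_walk {V : Type*} [Fintype V] [DecidableEq V] (w : V → V → ℝ)
    (hsymm : ∀ u v, w u v = w v u) (hnonneg : ∀ u v, 0 ≤ w u v)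
    (T : SimpleGraph V) (hacyc : T.IsAcyclic) (vL vR : V) (hadj : T.Adj vL vR)
    (VL VR : Set V)
    (hVL : VL = {x | (T.deleteEdges {s(vL, vR)}).Reachable vL x})
    (hVR : VR = {x | (T.deleteEdges {s(vL, vR)}).Reachable vR x})
    {E : List (V × V)} (hE : ETree Finset.univ E) (hEadj : ∀ p ∈ E, T.Adj p.1 p.2)
    (hfulltf : (E.map fun p => s(p.1, p.2)).toFinset = T.edgeFinset)
    (hpair : (vL, vR) ∈ E) :
    ∃ L : List V, (∀ x, x ∈ L) ∧
      pcost w L ≤ 2 * esum w E -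
        (subMaxW w VL ((T.deleteEdges {s(vL, vR)}).induce VL) + w vL vR +
          subMaxW w VR ((T.deleteEdges {s(vL, vR)}).induce VR)) := by
  classical
  set G0 := T.deleteEdges {s(vL, vR)} with hG0
  obtain ⟨SL, EL, SR, ER, hETL, hETR, hvLSL, hvRSR, hdisjS, hunS, hperm⟩ := hE.split hpair
  -- nodup facts
  have hndAll : (E.map fun p => s(p.1, p.2)).Nodup := hE.edges_nodup
  have hpermmk : (E.map fun p => s(p.1, p.2)).Perm
      (s(vL, vR) :: ((EL ++ ER).map fun p => s(p.1, p.2))) := by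
    have := hperm.map (fun p : V × V => s(p.1, p.2))
    simpa using this
  have hndCons : (s(vL, vR) :: ((EL ++ ER).map fun p : V × V => s(p.1, p.2))).Nodup :=
    hpermmk.nodup hndAll
  have hheadnotin : s(vL, vR) ∉ ((EL ++ ER).map fun p : V × V => s(p.1, p.2)) :=
    (List.nodup_cons.mp hndCons).1
  -- edges of EL, ER are edges of G0
  have hadjG0 : ∀ p ∈ EL ++ ER, G0.Adj p.1 p.2 := by
    intro p hp
    have hpE : p ∈ E := hperm.mem_iff.mpr (List.mem_cons_of_mem _ hp)
    have hTadj : T.Adj p.1 p.2 := hEadj p hpE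
    have hne : s(p.1, p.2) ≠ s(vL, vR) := by
      intro hcon
      exact hheadnotin (hcon ▸ List.mem_map_of_mem (f := fun p : V × V => s(p.1, p.2)) hp)
    rw [hG0, SimpleGraph.deleteEdges_adj]
    exact ⟨hTadj, by simpa using hne⟩
  have hadjEL : ∀ p ∈ EL, G0.Adj p.1 p.2 := fun p hp =>
    hadjG0 p (List.mem_append.mpr (Or.inl hp))
  have hadjER : ∀ p ∈ ER, G0.Adj p.1 p.2 := fun p hp =>
    hadjG0 p (List.mem_append.mpr (Or.inr hp))
  -- SL ⊆ VL etc.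
  have hSLsub : ∀ x ∈ SL, x ∈ VL := by
    intro x hx
    rw [hVL]
    exact hETL.reachable G0 hadjEL vL hvLSL x hx
  have hSRsub : ∀ x ∈ SR, x ∈ VR := by
    intro x hx
    rw [hVR]
    exact hETR.reachable G0 hadjER vR hvRSR x hx
  -- VL and VR are disjoint
  have hbridge : T.IsBridge s(vL, vR) :=
    SimpleGraph.isAcyclic_iff_forall_adj_isBridge.mp hacyc hadj
  have hnr : ¬ G0.Reachable vL vR := SimpleGraph.isBridge_iff.mp hbridge
  have hdVLVR : ∀ x, x ∈ VL → x ∈ VR → False := by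
    intro x h1 h2
    rw [hVL] at h1
    rw [hVR] at h2
    exact hnr (h1.trans h2.symm)
  -- identification
  have hVLeq : VL = ↑SL := by
    ext x
    constructor
    · intro hx
      have hxuniv : x ∈ SL ∪ SR := by rw [hunS]; exact Finset.mem_univ x
      rcases Finset.mem_union.mp hxuniv with h | h
      · exact_mod_cast h
      · exact absurd (hSRsub x h) (fun hc => hdVLVR x hx hc)
    · intro hx
      exact hSLsub x (by exact_mod_cast hx)
  have hVReq : VR = ↑SR := by
    ext x
    constructor
    · intro hx
      have hxuniv : x ∈ SL ∪ SR := by rw [hunS]; exact Finset.mem_univ x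
      rcases Finset.mem_union.mp hxuniv with h | h
      · exact absurd (hSLsub x h) (fun hc => hdVLVR x hc hx)
      · exact_mod_cast h
    · intro hx
      exact hSRsub x (by exact_mod_cast hx)
  -- completeness of EL and ER
  have hcompleteL : ∀ u v : V, u ∈ SL → v ∈ SL → G0.Adj u v → (u, v) ∈ EL ∨ (v, u) ∈ EL := by
    intro u v hu hv hadjuv
    have hedge : s(u, v) ∈ T.edgeFinset := by
      rw [SimpleGraph.mem_edgeFinset, SimpleGraph.mem_edgeSet]
      exact (SimpleGraph.deleteEdges_adj.mp (hG0 ▸ hadjuv)).1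
    rw [← hfulltf] at hedge
    obtain ⟨p, hpE, hpe⟩ := List.mem_map.mp (List.mem_toFinset.mp hedge)
    have hpE' : p ∈ (vL, vR) :: (EL ++ ER) := hperm.mem_iff.mp hpE
    rcases List.mem_cons.mp hpE' with rfl | hp
    · -- p = (vL, vR): contradiction with G0 adjacency
      exfalso
      have : ¬ s(u, v) ∈ ({s(vL, vR)} : Set (Sym2 V)) :=
        (SimpleGraph.deleteEdges_adj.mp (hG0 ▸ hadjuv)).2
      exact this (by rw [← hpe]; rfl)
    · rcases List.mem_append.mp hp with hp | hp
      · -- p ∈ EL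
        rcases Sym2.eq_iff.mp hpe with ⟨h1, h2⟩ | ⟨h1, h2⟩
        · left
          have : p = (u, v) := Prod.ext h1 h2
          exact this ▸ hp
        · right
          have : p = (v, u) := Prod.ext h1 h2
          exact this ▸ hp
      · -- p ∈ ER: contradiction via disjointness
        exfalso
        have hp1 : p.1 ∈ SR := (hETR.mem_of_edge p hp).1
        have hp2 : p.2 ∈ SR := (hETR.mem_of_edge p hp).2.1
        rcases Sym2.eq_iff.mp hpe with ⟨h1, h2⟩ | ⟨h1, h2⟩
        · exact Finset.disjoint_left.mp hdisjS hu (h1 ▸ hp1)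
        · exact Finset.disjoint_left.mp hdisjS hu (h2 ▸ hp2)
  have hcompleteR : ∀ u v : V, u ∈ SR → v ∈ SR → G0.Adj u v → (u, v) ∈ ER ∨ (v, u) ∈ ER := by
    intro u v hu hv hadjuv
    have hedge : s(u, v) ∈ T.edgeFinset := by
      rw [SimpleGraph.mem_edgeFinset, SimpleGraph.mem_edgeSet]
      exact (SimpleGraph.deleteEdges_adj.mp (hG0 ▸ hadjuv)).1
    rw [← hfulltf] at hedge
    obtain ⟨p, hpE, hpe⟩ := List.mem_map.mp (List.mem_toFinset.mp hedge)
    have hpE' : p ∈ (vL, vR) :: (EL ++ ER) := hperm.mem_iff.mp hpE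
    rcases List.mem_cons.mp hpE' with rfl | hp
    · exfalso
      have : ¬ s(u, v) ∈ ({s(vL, vR)} : Set (Sym2 V)) :=
        (SimpleGraph.deleteEdges_adj.mp (hG0 ▸ hadjuv)).2
      exact this (by rw [← hpe]; rfl)
    · rcases List.mem_append.mp hp with hp | hp
      · exfalso
        have hp1 : p.1 ∈ SL := (hETL.mem_of_edge p hp).1
        have hp2 : p.2 ∈ SL := (hETL.mem_of_edge p hp).2.1
        rcases Sym2.eq_iff.mp hpe with ⟨h1, h2⟩ | ⟨h1, h2⟩
        · exact Finset.disjoint_right.mp hdisjS hu (h1 ▸ hp1)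
        · exact Finset.disjoint_right.mp hdisjS hu (h2 ▸ hp2)
      · rcases Sym2.eq_iff.mp hpe with ⟨h1, h2⟩ | ⟨h1, h2⟩
        · left
          have : p = (u, v) := Prod.ext h1 h2
          exact this ▸ hp
        · right
          have : p = (v, u) := Prod.ext h1 h2
          exact this ▸ hp
  -- side walks
  obtain ⟨L1, a1, a2, a3⟩ := side_max w hsymm hnonneg G0 SL VL hVLeq hETL hadjEL hcompleteL vL hvLSL
  obtain ⟨L2, b1, b2, b3⟩ := side_max w hsymm hnonneg G0 SR VR hVReq hETR hadjER hcompleteR vR hvRSR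
  have hesumE : esum w E = w vL vR + (esum w EL + esum w ER) := by
    rw [esum_perm w hperm]
    simp [esum_append]
  refine ⟨L1.reverse ++ L2, ?_, ?_⟩
  · intro x
    have hxuniv : x ∈ SL ∪ SR := by rw [hunS]; exact Finset.mem_univ x
    rcases Finset.mem_union.mp hxuniv with h | h
    · exact List.mem_append.mpr (Or.inl (List.mem_reverse.mpr (a2 x h)))
    · exact List.mem_append.mpr (Or.inr (b2 x h))
  · have hgl : (L1.reverse).getLast? = some vL := by
      rw [List.getLast?_reverse]
      exact a1
    rw [pcost_append w hgl b1, pcost_reverse w hsymm]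
    rw [hesumE]
    linarith

lemma side_bound {V : Type*} [Fintype V] (w : V → V → ℝ)
    (hsymm : ∀ u v, w u v = w v u) (hnonneg : ∀ u v, 0 ≤ w u v)
    (htri : ∀ u v x, w u v ≤ w u x + w x v)
    {RHS : ℝ} {L : List V} (hLcov : ∀ x, x ∈ L) (hpc : pcost w L ≤ RHS)
    (S : Set V) (hSne : S.Nonempty) (G : SimpleGraph ↥S) (hG : IsSubMST w S G) :
    subCost w S G ≤ RHS := by
  classical
  set l' := (L.filter (fun x => decide (x ∈ S))).dedup with hl'
  have hsub : l'.Sublist L := (List.dedup_sublist _).trans List.filter_sublist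
  have hpc' : pcost w l' ≤ pcost w L := pcost_sublist w hnonneg htri hsub
  have hnd : l'.Nodup := List.nodup_dedup _
  have hmem : ∀ x, x ∈ l' ↔ x ∈ S := by
    intro x
    rw [hl', List.mem_dedup, List.mem_filter]
    simp [hLcov x]
  set ls : List ↥S := l'.attach.map (fun z => (⟨z.1, (hmem z.1).mp z.2⟩ : ↥S)) with hls
  have hmap : ls.map Subtype.val = l' := by
    rw [hls, List.map_map]
    have : (Subtype.val ∘ fun z : {x // x ∈ l'} => (⟨z.1, (hmem z.1).mp z.2⟩ : ↥S))
        = fun z : {x // x ∈ l'} => z.1 := rfl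
    rw [this]
    simp
  have hlsnd : ls.Nodup := by
    have h := hnd
    rw [← hmap] at h
    exact h.of_map _
  have hlscov : ∀ x : ↥S, x ∈ ls := by
    intro x
    have hx : x.1 ∈ l' := (hmem x.1).mpr x.2
    rw [← hmap] at hx
    exact (List.mem_map_of_injective Subtype.val_injective).mp hx
  have hNe : Nonempty ↥S := hSne.to_subtype
  have htree := pathGraphOf_isTree hlsnd hlscov
  have hsymm' : ∀ a b : ↥S, (fun u v : ↥S => w u.1 v.1) a b = (fun u v : ↥S => w u.1 v.1) b a :=
    fun a b => hsymm a.1 b.1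
  have hnonneg' : ∀ a b : ↥S, 0 ≤ (fun u v : ↥S => w u.1 v.1) a b := fun a b => hnonneg a.1 b.1
  have hcb := cost_pathGraphOf_le (fun u v : ↥S => w u.1 v.1) hsymm' hnonneg' ls hlsnd
  have hpcls : pcost (fun u v : ↥S => w u.1 v.1) ls = pcost w l' := by
    rw [show (fun u v : ↥S => w u.1 v.1) = (fun u v : ↥S => w (Subtype.val u) (Subtype.val v))
      from rfl, pcost_map w Subtype.val ls, hmap]
  calc subCost w S G ≤ cost (fun u v : ↥S => w u.1 v.1) (pathGraphOf ls) := hG.2 _ htree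
    _ ≤ pcost (fun u v : ↥S => w u.1 v.1) ls := hcb
    _ = pcost w l' := hpcls
    _ ≤ pcost w L := hpc'
    _ ≤ RHS := hpc

end Graph
end MSTAux

theorem stmt_3 {V : Type*} [Fintype V] (w : V → V → ℝ)
    (hw_self : ∀ v, w v v = 0)
    (hw_symm : ∀ u v, w u v = w v u)
    (hw_nonneg : ∀ u v, 0 ≤ w u v)
    (hw_tri : ∀ u v x, w u v ≤ w u x + w x v)
    (T : SimpleGraph V) (hT : IsMST w T)
    (vL vR : V) (hadj : T.Adj vL vR)
    (hmax : ∀ a b, T.Adj a b → w a b ≤ w vL vR)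
    (VL VR : Set V)
    (hVL : VL = {x | (T.deleteEdges {s(vL, vR)}).Reachable vL x})
    (hVR : VR = {x | (T.deleteEdges {s(vL, vR)}).Reachable vR x})
    (Vb Vr : Set V) (hunion : Vb ∪ Vr = Set.univ) (hdisj : Disjoint Vb Vr)
    (hbne : Vb.Nonempty) (hrne : Vr.Nonempty)
    (Tb : SimpleGraph Vb) (hTb : IsSubMST w Vb Tb)
    (Tr : SimpleGraph Vr) (hTr : IsSubMST w Vr Tr) :
    max (subCost w Vb Tb) (subCost w Vr Tr) ≤
      2 * cost w T - (subMaxW w VL ((T.deleteEdges {s(vL, vR)}).induce VL) + w vL vR + subMaxW w VR ((T.deleteEdges {s(vL, vR)}).induce VR)) := by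
  classical
  open MSTAux in
  have htree := hT.1
  have hconn : T.Connected := htree.isConnected
  have hacyc : T.IsAcyclic := htree.IsAcyclic
  obtain ⟨E, hE, hEadj⟩ := MSTAux.exists_spanning_etree hconn vL
  have hndmk : (E.map fun p => s(p.1, p.2)).Nodup := hE.edges_nodup
  have hcard := hE.card_eq
  have hsubset : (E.map fun p => s(p.1, p.2)).toFinset ⊆ T.edgeFinset := by
    intro e he
    rw [List.mem_toFinset] at he
    obtain ⟨p, hp, rfl⟩ := List.mem_map.mp he
    rw [SimpleGraph.mem_edgeFinset, SimpleGraph.mem_edgeSet]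
    exact hEadj p hp
  have hcards : T.edgeFinset.card ≤ (E.map fun p => s(p.1, p.2)).toFinset.card := by
    have h1 : (E.map fun p => s(p.1, p.2)).toFinset.card = E.length := by
      rw [List.toFinset_card_of_nodup hndmk, List.length_map]
    have h2 := htree.card_edgeFinset
    have h3 : Finset.univ.card = Fintype.card V := Finset.card_univ
    omega
  have hfulltf : (E.map fun p => s(p.1, p.2)).toFinset = T.edgeFinset :=
    Finset.eq_of_subset_of_card_le hsubset hcards
  have hliftsum : cost w T = MSTAux.esum w E := by
    have hcomp : ((fun e => Sym2.lift ⟨w, hw_symm⟩ e) ∘ fun p : V × V => s(p.1, p.2))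
        = fun p : V × V => w p.1 p.2 := by
      funext p
      cases p
      simp [Sym2.lift_mk]
    rw [MSTAux.cost_eq_sum_edges w hw_symm, ← hfulltf,
      List.sum_toFinset _ hndmk, List.map_map, hcomp]
    rfl
  have hpairE : ∃ pr ∈ E, s(pr.1, pr.2) = s(vL, vR) := by
    have hmem : s(vL, vR) ∈ T.edgeFinset := by
      rw [SimpleGraph.mem_edgeFinset, SimpleGraph.mem_edgeSet]
      exact hadj
    rw [← hfulltf, List.mem_toFinset] at hmem
    exact List.mem_map.mp hmem
  obtain ⟨pr, hprE, hpre⟩ := hpairE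
  have hwalk : ∃ L : List V, (∀ x, x ∈ L) ∧ pcost w L ≤
      2 * cost w T - (subMaxW w VL ((T.deleteEdges {s(vL, vR)}).induce VL) + w vL vR +
        subMaxW w VR ((T.deleteEdges {s(vL, vR)}).induce VR)) := by
    rcases Sym2.eq_iff.mp hpre with ⟨h1, h2⟩ | ⟨h1, h2⟩
    · have hpr : pr = (vL, vR) := Prod.ext h1 h2
      obtain ⟨L, hc, hp⟩ := MSTAux.grand_walk w hw_symm hw_nonneg T hacyc vL vR hadj VL VR
        hVL hVR hE hEadj hfulltf (hpr ▸ hprE)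
      refine ⟨L, hc, ?_⟩
      rw [hliftsum]
      exact hp
    · have hpr : pr = (vR, vL) := Prod.ext h1 h2
      have hswap : s(vR, vL) = s(vL, vR) := Sym2.eq_swap
      have hVR' : VR = {x | (T.deleteEdges {s(vR, vL)}).Reachable vR x} := by
        rw [hswap]; exact hVR
      have hVL' : VL = {x | (T.deleteEdges {s(vR, vL)}).Reachable vL x} := by
        rw [hswap]; exact hVL
      obtain ⟨L, hc, hp⟩ := MSTAux.grand_walk w hw_symm hw_nonneg T hacyc vR vL hadj.symm VR VL
        hVR' hVL' hE hEadj hfulltf (hpr ▸ hprE)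
      refine ⟨L, hc, ?_⟩
      rw [hswap] at hp
      rw [hw_symm vR vL] at hp
      rw [hliftsum]
      linarith
  obtain ⟨L, hc, hp⟩ := hwalk
  refine max_le ?_ ?_
  · exact MSTAux.side_bound w hw_symm hw_nonneg hw_tri hc hp Vb hbne Tb hTb
  · exact MSTAux.side_bound w hw_symm hw_nonneg hw_tri hc hp Vr hrne Tr hTr
end

section
/- Suppose exactly one of T_L, T_R contains a pair. Then for every feasible 2-MST solution, with blue tree S_b and red tree S_r, the edge set of S_b ∪ S_r contains a cross-edge of weight at least w_×. -/
open scoped Classical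

open SimpleGraph
lemma sum_pair_ite {V : Type*} [Fintype V] (w : V → V → ℝ) (a b : V) :
    ∑ u : V, ∑ v : V, (if u = a ∧ v = b then w u v else 0) = w a b := by
  simp [ite_and, Finset.sum_ite_eq]

lemma cost_deleteEdge {V : Type*} [Fintype V] (w : V → V → ℝ)
    (hsymm : ∀ u v, w u v = w v u) (G : SimpleGraph V) {a b : V} (hab : G.Adj a b) :
    cost w (G.deleteEdges {s(a, b)}) = cost w G - w a b := by
  have hne := hab.ne
  have key : ∀ u v : V, (if (G.deleteEdges {s(a, b)}).Adj u v then w u v else 0)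
      = (if G.Adj u v then w u v else 0) - (if u = a ∧ v = b then w u v else 0)
        - (if u = b ∧ v = a then w u v else 0) := by
    intro u v
    by_cases h1 : u = a ∧ v = b
    · obtain ⟨rfl, rfl⟩ := h1
      have hH : ¬ (G.deleteEdges {s(u, v)}).Adj u v := by
        simp [SimpleGraph.deleteEdges_adj]
      simp [hH, hab, hne, fun h : u = v => hne h]
    · by_cases h2 : u = b ∧ v = a
      · obtain ⟨rfl, rfl⟩ := h2
        have hH : ¬ (G.deleteEdges {s(v, u)}).Adj u v := by
          simp [SimpleGraph.deleteEdges_adj, Sym2.eq_swap]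
        simp [hH, hab.symm, hne, hne.symm, fun h : u = v => hne.symm h]
      · have h3 : s(u, v) ≠ s(a, b) := by rw [ne_eq, Sym2.eq_iff]; tauto
        simp [SimpleGraph.deleteEdges_adj, h3, h1, h2]
  unfold cost
  calc _ = (∑ u : V, ∑ v : V, ((if G.Adj u v then w u v else 0) - (if u = a ∧ v = b then w u v else 0)
          - (if u = b ∧ v = a then w u v else 0))) / 2 := by
        congr 1
        exact Finset.sum_congr rfl fun u _ => Finset.sum_congr rfl fun v _ => by convert key u v
    _ = _ := by
        simp only [Finset.sum_sub_distrib, sum_pair_ite]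
        rw [hsymm b a]; ring

lemma cost_eq_sum' {V : Type*} [Fintype V] (w : V → V → ℝ) (G : SimpleGraph V)
    (f : V → V → ℝ) (h : ∀ u v, (if G.Adj u v then w u v else 0) = f u v) :
    cost w G = (∑ u : V, ∑ v : V, f u v) / 2 := by
  unfold cost
  exact congrArg (· / 2)
    (Finset.sum_congr rfl fun u _ => Finset.sum_congr rfl fun v _ => h u v)

lemma cost_addEdge {V : Type*} [Fintype V] (w : V → V → ℝ)
    (hsymm : ∀ u v, w u v = w v u) (G : SimpleGraph V) {a b : V} (hne : a ≠ b)
    (hnadj : ¬ G.Adj a b) :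
    cost w (G ⊔ SimpleGraph.fromEdgeSet {s(a, b)}) = cost w G + w a b := by
  have e1 : cost w (G ⊔ SimpleGraph.fromEdgeSet {s(a, b)})
      = (∑ u : V, ∑ v : V, ((if G.Adj u v then w u v else 0)
        + (if u = a ∧ v = b then w u v else 0)
        + (if u = b ∧ v = a then w u v else 0))) / 2 := by
    apply cost_eq_sum'
    intro u v
    by_cases h1 : u = a ∧ v = b
    · obtain ⟨rfl, rfl⟩ := h1
      simp [SimpleGraph.sup_adj, SimpleGraph.fromEdgeSet_adj, hnadj, hne,
        fun h : u = v => hne h]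
    · by_cases h2 : u = b ∧ v = a
      · obtain ⟨rfl, rfl⟩ := h2
        have hG : ¬ G.Adj u v := fun h => hnadj h.symm
        simp [SimpleGraph.sup_adj, SimpleGraph.fromEdgeSet_adj, hG, hne, hne.symm,
          Sym2.eq_swap, fun h : u = v => hne.symm h]
      · have h3 : s(u, v) ≠ s(a, b) := by rw [ne_eq, Sym2.eq_iff]; tauto
        simp [SimpleGraph.sup_adj, SimpleGraph.fromEdgeSet_adj, h3, h1, h2]
  rw [e1]
  simp only [Finset.sum_add_distrib, sum_pair_ite]
  unfold cost
  rw [hsymm b a]; ring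

lemma exists_cross_edge {α : Type*} {G : SimpleGraph α} (P : α → Prop) :
    ∀ {a b : α}, G.Walk a b → P a → ¬ P b → ∃ u v, G.Adj u v ∧ P u ∧ ¬ P v := by
  intro a b wk
  induction wk with
  | nil => intro ha hb; exact absurd ha hb
  | @cons a c b h p ih =>
    intro ha hb
    by_cases hc : P c
    · exact ih hc hb
    · exact ⟨a, c, h, ha, hc⟩

lemma reach_cover {α : Type*} {G : SimpleGraph α} {a b : α} :
    ∀ {u x : α}, G.Walk u x →
      ((G.deleteEdges {s(a, b)}).Reachable a u ∨ (G.deleteEdges {s(a, b)}).Reachable b u) →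
      ((G.deleteEdges {s(a, b)}).Reachable a x ∨ (G.deleteEdges {s(a, b)}).Reachable b x) := by
  intro u x wk
  induction wk with
  | nil => exact id
  | @cons u c x h p ih =>
    intro hu
    by_cases he : s(u, c) = s(a, b)
    · rw [Sym2.eq_iff] at he
      apply ih
      rcases he with ⟨rfl, rfl⟩ | ⟨rfl, rfl⟩
      · right; exact Reachable.refl _
      · left; exact Reachable.refl _
    · have hadj : (G.deleteEdges {s(a, b)}).Adj u c := by
        rw [SimpleGraph.deleteEdges_adj]; exact ⟨h, by simpa using he⟩
      apply ih
      exact hu.imp (fun h' => h'.trans hadj.reachable) (fun h' => h'.trans hadj.reachable)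

theorem stmt_7 {V : Type*} [Fintype V]
    {n : ℕ} (hn : 2 ≤ n)
    (p q : Fin n → V) (hpq : Function.Bijective (Sum.elim p q))
    (w : V → V → ℝ)
    (hw_self : ∀ v, w v v = 0)
    (hw_symm : ∀ u v, w u v = w v u)
    (hw_nonneg : ∀ u v, 0 ≤ w u v)
    (hw_tri : ∀ u v x, w u v ≤ w u x + w x v)
    (T : SimpleGraph V) (hT : IsMST w T)
    (vL vR : V) (hadj : T.Adj vL vR)
    (hmax : ∀ a b, T.Adj a b → w a b ≤ w vL vR)
    (VL VR : Set V)
    (hVL : VL = {x | (T.deleteEdges {s(vL, vR)}).Reachable vL x})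
    (hVR : VR = {x | (T.deleteEdges {s(vL, vR)}).Reachable vR x})
    (hone : Xor' (∃ i, p i ∈ VL ∧ q i ∈ VL) (∃ i, p i ∈ VR ∧ q i ∈ VR))
    (B : Set V) (hfeas : (∀ i, (p i ∈ B ↔ q i ∉ B)))
    (Sb : SimpleGraph B) (Sr : SimpleGraph (Bᶜ : Set V))
    (hSb : Sb.IsTree) (hSr : Sr.IsTree) :
    (∃ u v : B, Sb.Adj u v ∧ ((u.1 ∈ VL ∧ v.1 ∉ VL) ∨ (u.1 ∉ VL ∧ v.1 ∈ VL)) ∧ w vL vR ≤ w u.1 v.1) ∨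
    (∃ u v : (Bᶜ : Set V), Sr.Adj u v ∧ ((u.1 ∈ VL ∧ v.1 ∉ VL) ∨ (u.1 ∉ VL ∧ v.1 ∈ VL)) ∧ w vL vR ≤ w u.1 v.1) := by
  subst hVL hVR
  set H := T.deleteEdges {s(vL, vR)} with hHdef
  have hbridge : ¬ H.Reachable vL vR := by
    have hb : T.IsBridge s(vL, vR) :=
      (SimpleGraph.isAcyclic_iff_forall_adj_isBridge.mp hT.1.IsAcyclic) hadj
    exact SimpleGraph.isBridge_iff.mp hb
  have hcover : ∀ x, H.Reachable vL x ∨ H.Reachable vR x := fun x =>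
    reach_cover (hT.1.isConnected.preconnected vL x).some (Or.inl (Reachable.refl _))
  have hdisj : ∀ x, H.Reachable vL x → H.Reachable vR x → False := fun x h1 h2 =>
    hbridge (h1.trans h2.symm)
  -- the key cut-property bound
  have wbound : ∀ u v : V, u ∈ {x | H.Reachable vL x} → v ∉ {x | H.Reachable vL x} →
      w vL vR ≤ w u v := by
    intro u v hu hv
    have hvR : H.Reachable vR v := (hcover v).resolve_left hv
    by_contra hlt
    push_neg at hlt
    have huv : u ≠ v := fun h => hv (h ▸ hu)
    have hsne : s(u, v) ≠ s(vL, vR) := by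
      rw [ne_eq, Sym2.eq_iff]
      rintro (⟨rfl, rfl⟩ | ⟨rfl, rfl⟩)
      · exact lt_irrefl _ hlt
      · rw [hw_symm] at hlt; exact lt_irrefl _ hlt
    have hHnadj : ¬ H.Adj u v := fun h => hdisj v (Reachable.trans hu h.reachable) hvR
    set T' := H ⊔ SimpleGraph.fromEdgeSet {s(u, v)} with hT'def
    have hHle : H ≤ T' := le_sup_left
    have hadj' : T'.Adj u v := by
      rw [hT'def, SimpleGraph.sup_adj, SimpleGraph.fromEdgeSet_adj]
      exact Or.inr ⟨rfl, huv⟩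
    have hreach' : ∀ x, T'.Reachable vL x := by
      intro x
      rcases hcover x with h | h
      · exact h.mono hHle
      · exact ((Reachable.mono hHle hu).trans hadj'.reachable).trans
          ((hvR.symm.trans h).mono hHle)
    have hconn' : T'.Connected := by
      rw [SimpleGraph.connected_iff]
      exact ⟨fun x y => (hreach' x).symm.trans (hreach' y), ⟨vL⟩⟩
    have hacyc' : T'.IsAcyclic := by
      intro x c hc
      by_cases he : s(u, v) ∈ c.edges
      · have hr := (SimpleGraph.adj_and_reachable_delete_edges_iff_exists_cycle.mpr
          ⟨x, c, hc, he⟩).2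
        have hle2 : T' \ SimpleGraph.fromEdgeSet {s(u, v)} ≤ H := by
          intro a b hab
          rw [SimpleGraph.sdiff_adj, hT'def, SimpleGraph.sup_adj] at hab
          rcases hab with ⟨h1 | h1, h2⟩
          · exact h1
          · exact absurd h1 h2
        exact hdisj v (hu.trans (hr.mono hle2)) hvR
      · have hsub : ∀ e ∈ c.edges, e ∈ T.edgeSet := by
          intro e hee
          have h1 := c.edges_subset_edgeSet hee
          rw [hT'def, SimpleGraph.edgeSet_sup, hHdef, SimpleGraph.edgeSet_deleteEdges,
            SimpleGraph.edgeSet_fromEdgeSet] at h1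
          rcases h1 with h1 | h1
          · exact h1.1
          · exact absurd h1.1 (fun h => he (h ▸ hee))
        exact hT.1.IsAcyclic (c.transfer T hsub) (hc.transfer hsub)
    have htree' : T'.IsTree := ⟨hconn', hacyc'⟩
    have h1 : cost w H = cost w T - w vL vR := cost_deleteEdge w hw_symm T hadj
    have h2 : cost w T' = cost w H + w u v := cost_addEdge w hw_symm H huv hHnadj
    have h3 := hT.2 T' htree'
    rw [h2, h1] at h3
    linarith
  have hvLVL : vL ∈ {x | H.Reachable vL x} := Reachable.refl _
  have hvRnotVL : vR ∉ {x | H.Reachable vL x} := fun h => hdisj vR h (Reachable.refl _)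
  rcases hone with ⟨⟨i, hpL, hqL⟩, -⟩ | ⟨⟨i, hpR, hqR⟩, -⟩
  · -- pair i inside V_L
    by_cases hB : vR ∈ B
    · -- blue vertex of the pair, in VL
      have hx : ∃ x, x ∈ B ∧ x ∈ {x | H.Reachable vL x} := by
        by_cases hpB : p i ∈ B
        · exact ⟨p i, hpB, hpL⟩
        · exact ⟨q i, by_contra fun hq => hpB ((hfeas i).mpr hq), hqL⟩
      obtain ⟨x, hxB, hxL⟩ := hx
      obtain ⟨wk⟩ := hSb.isConnected.preconnected ⟨x, hxB⟩ ⟨vR, hB⟩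
      obtain ⟨u, v, huv, hu, hv⟩ := exists_cross_edge
        (fun z : B => z.1 ∈ {x | H.Reachable vL x}) wk hxL hvRnotVL
      exact Or.inl ⟨u, v, huv, Or.inl ⟨hu, hv⟩, wbound _ _ hu hv⟩
    · have hx : ∃ x, x ∈ Bᶜ ∧ x ∈ {x | H.Reachable vL x} := by
        by_cases hpB : p i ∈ B
        · exact ⟨q i, (hfeas i).mp hpB, hqL⟩
        · exact ⟨p i, hpB, hpL⟩
      obtain ⟨x, hxB, hxL⟩ := hx
      obtain ⟨wk⟩ := hSr.isConnected.preconnected ⟨x, hxB⟩ ⟨vR, hB⟩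
      obtain ⟨u, v, huv, hu, hv⟩ := exists_cross_edge
        (fun z : (Bᶜ : Set V) => z.1 ∈ {x | H.Reachable vL x}) wk hxL hvRnotVL
      exact Or.inr ⟨u, v, huv, Or.inl ⟨hu, hv⟩, wbound _ _ hu hv⟩
  · -- pair i inside V_R
    have hpnL : p i ∉ {x | H.Reachable vL x} := fun h => hdisj _ h hpR
    have hqnL : q i ∉ {x | H.Reachable vL x} := fun h => hdisj _ h hqR
    by_cases hB : vL ∈ B
    · have hx : ∃ x, x ∈ B ∧ x ∉ {x | H.Reachable vL x} := by
        by_cases hpB : p i ∈ B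
        · exact ⟨p i, hpB, hpnL⟩
        · exact ⟨q i, by_contra fun hq => hpB ((hfeas i).mpr hq), hqnL⟩
      obtain ⟨x, hxB, hxL⟩ := hx
      obtain ⟨wk⟩ := hSb.isConnected.preconnected ⟨vL, hB⟩ ⟨x, hxB⟩
      obtain ⟨u, v, huv, hu, hv⟩ := exists_cross_edge
        (fun z : B => z.1 ∈ {x | H.Reachable vL x}) wk hvLVL hxL
      exact Or.inl ⟨u, v, huv, Or.inl ⟨hu, hv⟩, wbound _ _ hu hv⟩
    · have hx : ∃ x, x ∈ Bᶜ ∧ x ∉ {x | H.Reachable vL x} := by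
        by_cases hpB : p i ∈ B
        · exact ⟨q i, (hfeas i).mp hpB, hqnL⟩
        · exact ⟨p i, hpB, hpnL⟩
      obtain ⟨x, hxB, hxL⟩ := hx
      obtain ⟨wk⟩ := hSr.isConnected.preconnected ⟨vL, hB⟩ ⟨x, hxB⟩
      obtain ⟨u, v, huv, hu, hv⟩ := exists_cross_edge
        (fun z : (Bᶜ : Set V) => z.1 ∈ {x | H.Reachable vL x}) wk hvLVL hxL
      exact Or.inr ⟨u, v, huv, Or.inl ⟨hu, hv⟩, wbound _ _ hu hv⟩
end

section
/- Suppose both T_L and T_R contain a pair. Then for every feasible 2-MST solution, with blue tree S_b and red tree S_r, the tree S_b contains a cross-edge of weight at least w_× and the tree S_r contains a cross-edge of weight at least w_× (so the solution contains at least two cross-edges of weight at least w_×, one in each tree). -/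
open scoped Classical

section AuxLemmas
open SimpleGraph

private lemma walk_cross {α : Type*} {G : SimpleGraph α} (P : α → Prop) :
    ∀ {x y : α}, G.Walk x y → P x → ¬ P y → ∃ a b, G.Adj a b ∧ P a ∧ ¬ P b := by
  intro x y wk
  induction wk with
  | nil => exact fun h h' => absurd h h'
  | @cons a c b h p ih =>
    intro hx hy
    by_cases hm : P c
    · exact ih hm hy
    · exact ⟨a, c, h, hx, hm⟩

private lemma mem_LR {V : Type*} {T : SimpleGraph V} (hconn : T.Connected) (vL vR : V) (x : V) :
    (T.deleteEdges {s(vL,vR)}).Reachable vL x ∨ (T.deleteEdges {s(vL,vR)}).Reachable vR x := by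
  obtain ⟨wk⟩ := hconn.preconnected vL x
  have main : ∀ {a b : V}, T.Walk a b →
      ((T.deleteEdges {s(vL,vR)}).Reachable vL a ∨ (T.deleteEdges {s(vL,vR)}).Reachable vR a) →
      ((T.deleteEdges {s(vL,vR)}).Reachable vL b ∨ (T.deleteEdges {s(vL,vR)}).Reachable vR b) := by
    intro a b wk
    induction wk with
    | nil => exact id
    | @cons a c b h p ih =>
      intro ha
      apply ih
      by_cases he : s(a,c) = s(vL,vR)
      · rw [Sym2.eq_iff] at he
        rcases he with ⟨rfl, rfl⟩ | ⟨rfl, rfl⟩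
        · exact Or.inr (Reachable.refl _)
        · exact Or.inl (Reachable.refl _)
      · have hadj : (T.deleteEdges {s(vL,vR)}).Adj a c := by simp [h, he]
        rcases ha with ha | ha
        · exact Or.inl (ha.trans hadj.reachable)
        · exact Or.inr (ha.trans hadj.reachable)
  exact main wk (Or.inl (Reachable.refl _))

private lemma cut_lemma {V : Type*} [Fintype V] (w : V → V → ℝ)
    (hw_symm : ∀ u v, w u v = w v u)
    (T : SimpleGraph V) (hT : IsMST w T) (vL vR : V) (hadj : T.Adj vL vR)
    {u v : V}
    (hu : (T.deleteEdges {s(vL,vR)}).Reachable vL u)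
    (hv : (T.deleteEdges {s(vL,vR)}).Reachable vR v) :
    w vL vR ≤ w u v := by
  classical
  set D := T.deleteEdges {s(vL,vR)} with hD
  have hbridge : ¬ D.Reachable vL vR :=
    (isBridge_iff.mp ((isAcyclic_iff_forall_adj_isBridge.mp hT.1.2) hadj))
  by_cases heq : s(u,v) = s(vL,vR)
  · rw [Sym2.eq_iff] at heq
    rcases heq with ⟨rfl, rfl⟩ | ⟨rfl, rfl⟩
    · exact le_refl _
    · rw [hw_symm]
  · have hne : u ≠ v := by
      rintro rfl
      exact hbridge (hu.trans hv.symm)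
    have hTadj : ¬ T.Adj u v := by
      intro h
      have hD' : D.Adj u v := by simp [hD, h, heq]
      exact hbridge ((hu.trans hD'.reachable).trans hv.symm)
    set T' : SimpleGraph V := D ⊔ SimpleGraph.fromEdgeSet {s(u,v)} with hT'
    have hT'adj : ∀ a b, T'.Adj a b ↔
        (T.Adj a b ∧ s(a,b) ≠ s(vL,vR)) ∨ (s(a,b) = s(u,v) ∧ a ≠ b) := by
      intro a b
      simp [hT', hD, sup_adj, deleteEdges_adj, fromEdgeSet_adj]
    have huvT' : T'.Adj u v := (hT'adj u v).mpr (Or.inr ⟨rfl, hne⟩)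
    have hreach : ∀ x, T'.Reachable u x := by
      intro x
      rcases mem_LR hT.1.1 vL vR x with hx | hx
      · exact (hu.symm.trans hx).mono le_sup_left
      · exact huvT'.reachable.trans (((hv.symm.trans hx)).mono le_sup_left)
    have hconn : T'.Connected := by
      have : Nonempty V := ⟨u⟩
      exact ⟨fun x y => (hreach x).symm.trans (hreach y)⟩
    have hacyc : T'.IsAcyclic := by
      intro x c hc
      by_cases hm : s(u,v) ∈ c.edges
      · have hre : (T' \ SimpleGraph.fromEdgeSet {s(u,v)}).Reachable u v :=
          (adj_and_reachable_delete_edges_iff_exists_cycle.mpr ⟨x, c, hc, hm⟩).2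
        have hle : (T' \ SimpleGraph.fromEdgeSet {s(u,v)}) ≤ D := by
          intro a b hab
          obtain ⟨h1, h2⟩ := hab
          rcases (hT'adj a b).mp h1 with ⟨h3, h4⟩ | ⟨h5, h6⟩
          · simp [hD, h3, h4]
          · exact absurd (by simp [fromEdgeSet_adj, h5, h6] : (SimpleGraph.fromEdgeSet {s(u,v)}).Adj a b) h2
        exact hbridge ((hu.trans (hre.mono hle)).trans hv.symm)
      · have hq : ∀ e ∈ c.edges, e ∈ T.edgeSet := by
          intro e he
          have h1 := c.edges_subset_edgeSet he
          have hne' : e ≠ s(u,v) := fun h => hm (h ▸ he)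
          rw [hT', edgeSet_sup] at h1
          rcases h1 with h1 | h1
          · have : D ≤ T := SimpleGraph.deleteEdges_le _
            exact SimpleGraph.edgeSet_mono this h1
          · rw [edgeSet_fromEdgeSet] at h1
            exact absurd h1.1 (by simpa using hne')
        exact hT.1.2 (c.transfer T hq) (hc.transfer hq)
    have htree : T'.IsTree := ⟨hconn, hacyc⟩
    have hle := hT.2 T' htree
    have hvLvR : vL ≠ vR := hadj.ne
    have hkey : ∀ a b : V, (fun (G : SimpleGraph V) (a b : V) => if G.Adj a b then w a b else 0) T' a b
        = (fun (G : SimpleGraph V) (a b : V) => if G.Adj a b then w a b else 0) T a b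
          + (if (a = u ∧ b = v) ∨ (a = v ∧ b = u) then w u v else 0)
          - (if (a = vL ∧ b = vR) ∨ (a = vR ∧ b = vL) then w vL vR else 0) := by
      intro a b
      simp only []
      by_cases h1 : (a = u ∧ b = v) ∨ (a = v ∧ b = u)
      · have hw' : w a b = w u v := by
          rcases h1 with ⟨rfl, rfl⟩ | ⟨rfl, rfl⟩
          · rfl
          · exact hw_symm _ _
        have hT'ab : T'.Adj a b := by
          apply (hT'adj a b).mpr
          right
          rcases h1 with ⟨rfl, rfl⟩ | ⟨rfl, rfl⟩
          · exact ⟨rfl, hne⟩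
          · exact ⟨Sym2.eq_swap, hne.symm⟩
        have hTab : ¬ T.Adj a b := by
          rcases h1 with ⟨rfl, rfl⟩ | ⟨rfl, rfl⟩
          · exact hTadj
          · exact fun h => hTadj h.symm
        have h2 : ¬ ((a = vL ∧ b = vR) ∨ (a = vR ∧ b = vL)) := by
          rintro (⟨rfl, rfl⟩ | ⟨rfl, rfl⟩)
          · exact hTab hadj
          · exact hTab hadj.symm
        simp [hT'ab, hTab, h1, h2, hw']
      · by_cases h2 : (a = vL ∧ b = vR) ∨ (a = vR ∧ b = vL)
        · have hTab : T.Adj a b := by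
            rcases h2 with ⟨rfl, rfl⟩ | ⟨rfl, rfl⟩
            · exact hadj
            · exact hadj.symm
          have hw' : w a b = w vL vR := by
            rcases h2 with ⟨rfl, rfl⟩ | ⟨rfl, rfl⟩
            · rfl
            · exact hw_symm _ _
          have hT'ab : ¬ T'.Adj a b := by
            rw [hT'adj]
            rintro (⟨h3, h4⟩ | ⟨h5, h6⟩)
            · apply h4
              rcases h2 with ⟨rfl, rfl⟩ | ⟨rfl, rfl⟩
              · rfl
              · exact Sym2.eq_swap
            · apply heq
              rcases h2 with ⟨rfl, rfl⟩ | ⟨rfl, rfl⟩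
              · exact h5.symm
              · exact h5.symm.trans Sym2.eq_swap
          simp [hT'ab, hTab, h1, h2, hw']
        · have hiff : T'.Adj a b ↔ T.Adj a b := by
            rw [hT'adj]
            constructor
            · rintro (⟨h3, _⟩ | ⟨h5, h6⟩)
              · exact h3
              · exfalso
                rw [Sym2.eq_iff] at h5
                exact h1 h5
            · intro h3
              refine Or.inl ⟨h3, fun h4 => ?_⟩
              rw [Sym2.eq_iff] at h4
              exact h2 h4
          simp [hiff, h1, h2]
    have e1 : ∀ (c d : V) (r : ℝ), c ≠ d →
        (∑ a : V, ∑ b : V, if (a = c ∧ b = d) ∨ (a = d ∧ b = c) then r else 0) = 2 * r := by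
      intro c d r hcd
      have inner : ∀ a : V, (∑ b : V, if (a = c ∧ b = d) ∨ (a = d ∧ b = c) then r else 0)
          = (if a = c then r else 0) + (if a = d then r else 0) := by
        intro a
        by_cases hac : a = c
        · subst hac
          have had : a ≠ d := hcd
          simp [had, Finset.sum_ite_eq']
        · by_cases had : a = d
          · subst had
            simp [hac, Finset.sum_ite_eq']
          · simp [hac, had]
      rw [Finset.sum_congr rfl fun a _ => inner a, Finset.sum_add_distrib]
      simp [Finset.sum_ite_eq']
      ring
    have hsum : (∑ a : V, ∑ b : V,
          (fun (G : SimpleGraph V) (a b : V) => if G.Adj a b then w a b else 0) T' a b)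
        = (∑ a : V, ∑ b : V,
          (fun (G : SimpleGraph V) (a b : V) => if G.Adj a b then w a b else 0) T a b)
          + 2 * w u v - 2 * w vL vR := by
      rw [Finset.sum_congr rfl fun a _ => Finset.sum_congr rfl fun b _ => hkey a b]
      simp only [Finset.sum_add_distrib, Finset.sum_sub_distrib]
      rw [e1 u v _ hne, e1 vL vR _ hvLvR]
    have hcost' : cost w T' = cost w T + w u v - w vL vR := by
      have hdef : ∀ G : SimpleGraph V, cost w G = (∑ a : V, ∑ b : V,
          (fun (G : SimpleGraph V) (a b : V) => if G.Adj a b then w a b else 0) G a b) / 2 :=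
        fun G => rfl
      rw [hdef T', hdef T, hsum]
      ring
    linarith [hle, hcost'.le]

end AuxLemmas

theorem stmt_8 {V : Type*} [Fintype V]
    {n : ℕ} (hn : 2 ≤ n)
    (p q : Fin n → V) (hpq : Function.Bijective (Sum.elim p q))
    (w : V → V → ℝ)
    (hw_self : ∀ v, w v v = 0)
    (hw_symm : ∀ u v, w u v = w v u)
    (hw_nonneg : ∀ u v, 0 ≤ w u v)
    (hw_tri : ∀ u v x, w u v ≤ w u x + w x v)
    (T : SimpleGraph V) (hT : IsMST w T)
    (vL vR : V) (hadj : T.Adj vL vR)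
    (hmax : ∀ a b, T.Adj a b → w a b ≤ w vL vR)
    (VL VR : Set V)
    (hVL : VL = {x | (T.deleteEdges {s(vL, vR)}).Reachable vL x})
    (hVR : VR = {x | (T.deleteEdges {s(vL, vR)}).Reachable vR x})
    (hLpair : ∃ i, p i ∈ VL ∧ q i ∈ VL) (hRpair : ∃ i, p i ∈ VR ∧ q i ∈ VR)
    (B : Set V) (hfeas : (∀ i, (p i ∈ B ↔ q i ∉ B)))
    (Sb : SimpleGraph B) (Sr : SimpleGraph (Bᶜ : Set V))
    (hSb : Sb.IsTree) (hSr : Sr.IsTree) :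
    (∃ u v : B, Sb.Adj u v ∧ ((u.1 ∈ VL ∧ v.1 ∉ VL) ∨ (u.1 ∉ VL ∧ v.1 ∈ VL)) ∧ w vL vR ≤ w u.1 v.1) ∧
    (∃ u v : (Bᶜ : Set V), Sr.Adj u v ∧ ((u.1 ∈ VL ∧ v.1 ∉ VL) ∨ (u.1 ∉ VL ∧ v.1 ∈ VL)) ∧ w vL vR ≤ w u.1 v.1) := by
  subst hVL
  subst hVR
  have hbridge : ¬ (T.deleteEdges {s(vL,vR)}).Reachable vL vR :=
    (SimpleGraph.isBridge_iff.mp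
      ((SimpleGraph.isAcyclic_iff_forall_adj_isBridge.mp hT.1.2) hadj))
  have htotal : ∀ x : V, x ∉ {x | (T.deleteEdges {s(vL, vR)}).Reachable vL x} →
      (T.deleteEdges {s(vL,vR)}).Reachable vR x := by
    intro x hx
    rcases mem_LR hT.1.1 vL vR x with h | h
    · exact absurd h hx
    · exact h
  have main : ∀ (S : Set V) (G : SimpleGraph S), G.IsTree →
      (∃ x : S, x.1 ∈ {x | (T.deleteEdges {s(vL, vR)}).Reachable vL x}) →
      (∃ y : S, y.1 ∈ {x | (T.deleteEdges {s(vL, vR)}).Reachable vR x}) →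
      ∃ a b : S, G.Adj a b ∧
        ((a.1 ∈ {x | (T.deleteEdges {s(vL, vR)}).Reachable vL x} ∧
          b.1 ∉ {x | (T.deleteEdges {s(vL, vR)}).Reachable vL x}) ∨
         (a.1 ∉ {x | (T.deleteEdges {s(vL, vR)}).Reachable vL x} ∧
          b.1 ∈ {x | (T.deleteEdges {s(vL, vR)}).Reachable vL x})) ∧
        w vL vR ≤ w a.1 b.1 := by
    rintro S G hG ⟨x, hx⟩ ⟨y, hy⟩
    have hyn : y.1 ∉ {x | (T.deleteEdges {s(vL, vR)}).Reachable vL x} :=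
      fun h => hbridge (h.trans hy.symm)
    obtain ⟨wk⟩ := hG.1.preconnected x y
    obtain ⟨a, b, hab, ha, hb⟩ :=
      walk_cross (fun z : S => z.1 ∈ {x | (T.deleteEdges {s(vL, vR)}).Reachable vL x}) wk hx hyn
    have hbR : (T.deleteEdges {s(vL,vR)}).Reachable vR b.1 := htotal b.1 hb
    exact ⟨a, b, hab, Or.inl ⟨ha, hb⟩, cut_lemma w hw_symm T hT vL vR hadj ha hbR⟩
  obtain ⟨i, hpL, hqL⟩ := hLpair
  obtain ⟨j, hpR, hqR⟩ := hRpair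
  constructor
  · apply main B Sb hSb
    · by_cases hpB : p i ∈ B
      · exact ⟨⟨p i, hpB⟩, hpL⟩
      · have : q i ∈ B := by
          by_contra h
          exact hpB ((hfeas i).mpr h)
        exact ⟨⟨q i, this⟩, hqL⟩
    · by_cases hpB : p j ∈ B
      · exact ⟨⟨p j, hpB⟩, hpR⟩
      · have : q j ∈ B := by
          by_contra h
          exact hpB ((hfeas j).mpr h)
        exact ⟨⟨q j, this⟩, hqR⟩
  · apply main (Bᶜ : Set V) Sr hSr
    · by_cases hpB : p i ∈ B
      · exact ⟨⟨q i, (hfeas i).mp hpB⟩, hqL⟩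
      · exact ⟨⟨p i, hpB⟩, hpL⟩
    · by_cases hpB : p j ∈ B
      · exact ⟨⟨q j, (hfeas j).mp hpB⟩, hqR⟩
      · exact ⟨⟨p j, hpB⟩, hpR⟩
end

section
/- Suppose neither T_L nor T_R contains a pair, i.e., every pair {p_i, q_i} has exactly one member in V_L and one in V_R. Then the coloring assigning blue to all vertices of V_L and red to all vertices of V_R is a feasible coloring, T_L and T_R are minimum spanning trees of V_L and V_R respectively, and the feasible 2-MST solution (T_L, T_R) is optimal for min-sum: c(T_L) + c(T_R) = OPT_sum. -/
open scoped Classical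

/-- Optimal min-sum cost of a feasible 2-MST solution: the blue class is a set `B`
containing exactly one vertex of each pair `{p i, q i}`, and the solution consists of
spanning trees of `B` and of its complement (the red class). -/
noncomputable def OPTsum {V : Type*} [Fintype V] {n : ℕ} (w : V → V → ℝ)
    (p q : Fin n → V) : ℝ :=
  sInf {c : ℝ | ∃ B : Set V, (∀ i, (p i ∈ B ↔ q i ∉ B)) ∧
    ∃ (Sb : SimpleGraph B) (Sr : SimpleGraph (Bᶜ : Set V)),
      Sb.IsTree ∧ Sr.IsTree ∧ c = subCost w B Sb + subCost w Bᶜ Sr}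

/-- Optimal min-max cost of a feasible 2-MST solution. -/
noncomputable def OPTmm {V : Type*} [Fintype V] {n : ℕ} (w : V → V → ℝ)
    (p q : Fin n → V) : ℝ :=
  sInf {c : ℝ | ∃ B : Set V, (∀ i, (p i ∈ B ↔ q i ∉ B)) ∧
    ∃ (Sb : SimpleGraph B) (Sr : SimpleGraph (Bᶜ : Set V)),
      Sb.IsTree ∧ Sr.IsTree ∧ c = max (subCost w B Sb) (subCost w Bᶜ Sr)}


open SimpleGraph

section Helpers
set_option linter.unusedSectionVars false
variable {V : Type*}

/-- Lift a graph on a subtype to the ambient type. -/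
def glift {S : Set V} (G : SimpleGraph S) : SimpleGraph V :=
  G.map (Function.Embedding.subtype fun x => x ∈ S)

lemma glift_adj {S : Set V} (G : SimpleGraph S) (u v : V) :
    (glift G).Adj u v ↔ ∃ (hu : u ∈ S) (hv : v ∈ S), G.Adj ⟨u, hu⟩ ⟨v, hv⟩ := by
  simp only [glift, SimpleGraph.map_adj, Function.Embedding.coe_subtype]
  constructor
  · rintro ⟨-, a, b, hab, rfl, rfl⟩; exact ⟨a.2, b.2, hab⟩
  · rintro ⟨hu, hv, h⟩; exact ⟨fun huv => h.ne (Subtype.ext huv), ⟨u, hu⟩, ⟨v, hv⟩, h, rfl, rfl⟩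

lemma glift_walk_pull {S : Set V} {G : SimpleGraph S} {x y : V}
    (W : (glift G).Walk x y) (hx : x ∈ S) :
    ∃ hy : y ∈ S, G.Reachable ⟨x, hx⟩ ⟨y, hy⟩ := by
  induction W with
  | nil => exact ⟨hx, Reachable.refl _⟩
  | @cons a c d h p ih =>
    obtain ⟨ha, hc, hadj⟩ := (glift_adj G a c).1 h
    obtain ⟨hy, hr⟩ := ih hc
    exact ⟨hy, (Adj.reachable (by exact hadj)).trans hr⟩

lemma induce_walk_pull {G : SimpleGraph V} {S : Set V}
    (hcl : ∀ u v, G.Adj u v → u ∈ S → v ∈ S) {x y : V}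
    (W : G.Walk x y) (hx : x ∈ S) :
    ∃ hy : y ∈ S, (G.induce S).Reachable ⟨x, hx⟩ ⟨y, hy⟩ := by
  induction W with
  | nil => exact ⟨hx, Reachable.refl _⟩
  | @cons a c d h p ih =>
    have hc : c ∈ S := hcl a c h hx
    obtain ⟨hy, hr⟩ := ih hc
    refine ⟨hy, (Adj.reachable ?_).trans hr⟩
    exact (SimpleGraph.comap_adj).2 (by exact h)

lemma union_walk_left {A : Set V} {KA KB : SimpleGraph V}
    (hKA : ∀ u v, KA.Adj u v → u ∈ A ∧ v ∈ A)
    (hKB : ∀ u v, KB.Adj u v → u ∉ A ∧ v ∉ A)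
    {x y : V} (W : (KA ⊔ KB).Walk x y) (hx : x ∈ A) : KA.Reachable x y := by
  induction W with
  | nil => exact Reachable.refl _
  | @cons a c d h p ih =>
    rcases (sup_adj _ _ _ _).1 h with h' | h'
    · exact (Adj.reachable h').trans (ih ((hKA a c h').2))
    · exact absurd hx (hKB a c h').1

lemma reach_ends_mem {A : Set V} {KA : SimpleGraph V}
    (hKA : ∀ u v, KA.Adj u v → u ∈ A ∧ v ∈ A)
    {x y : V} (W : KA.Walk x y) (hne : x ≠ y) : x ∈ A ∧ y ∈ A := by
  induction W with
  | nil => exact absurd rfl hne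
  | @cons a c d h p ih =>
    refine ⟨(hKA a c h).1, ?_⟩
    by_cases hcd : c = d
    · exact hcd ▸ (hKA a c h).2
    · exact (ih hcd).2

lemma walk_side {A : Set V} {K : SimpleGraph V}
    (hside : ∀ u v, K.Adj u v → (u ∈ A ↔ v ∈ A)) {x y : V}
    (W : K.Walk x y) : x ∈ A ↔ y ∈ A := by
  induction W with
  | nil => rfl
  | @cons a c d h p ih => exact (hside a c h).trans ih

lemma cross_reach {A : Set V} {K : SimpleGraph V}
    (hside : ∀ u v, K.Adj u v → (u ∈ A ↔ v ∈ A)) {a b : V} (ha : a ∈ A) (hb : b ∉ A)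
    {x y : V} (W : (K ⊔ SimpleGraph.fromEdgeSet {s(a,b)}).Walk x y) :
    K.Reachable x y ∨
      (K.Reachable x (if x ∈ A then a else b) ∧ K.Reachable (if y ∈ A then a else b) y) := by
  induction W with
  | nil => exact Or.inl (Reachable.refl _)
  | @cons u c d h p ih =>
    rcases (sup_adj _ _ _ _).1 h with h' | h'
    · -- K-edge from u to c
      have hr : K.Reachable u c := Adj.reachable h'
      have hpt : (if u ∈ A then a else b) = (if c ∈ A then a else b) := by
        by_cases hu : u ∈ A
        · rw [if_pos hu, if_pos ((hside u c h').1 hu)]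
        · rw [if_neg hu, if_neg (fun hc => hu ((hside u c h').2 hc))]
      rcases ih with h1 | ⟨h1, h2⟩
      · exact Or.inl (hr.trans h1)
      · exact Or.inr ⟨hr.trans (hpt ▸ h1), h2⟩
    · -- special edge
      rw [SimpleGraph.fromEdgeSet_adj, Set.mem_singleton_iff, Sym2.eq_iff] at h'
      have hside' : ∀ {s t : V}, K.Reachable s t → (s ∈ A ↔ t ∈ A) := by
        rintro s t ⟨w⟩; exact walk_side hside w
      rcases h'.1 with ⟨rfl, rfl⟩ | ⟨rfl, rfl⟩
      · -- u = a, c = b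
        refine Or.inr ⟨by rw [if_pos ha], ?_⟩
        rcases ih with h1 | ⟨h1, h2⟩
        · rw [if_neg (fun hy => hb ((hside' h1).2 hy))]
          exact h1
        · exact h2
      · -- u = b, c = a
        refine Or.inr ⟨by rw [if_neg hb], ?_⟩
        rcases ih with h1 | ⟨h1, h2⟩
        · rw [if_pos ((hside' h1).1 ha)]
          exact h1
        · exact h2
-- cost lemmas
variable {V : Type*} [Fintype V]

lemma cost_sup_disjoint (w : V → V → ℝ) {G H : SimpleGraph V}
    (h : ∀ u v, G.Adj u v → ¬H.Adj u v) :
    cost w (G ⊔ H) = cost w G + cost w H := by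
  unfold cost
  rw [← add_div]
  congr 1
  rw [← Finset.sum_add_distrib]
  refine Finset.sum_congr rfl fun u _ => ?_
  rw [← Finset.sum_add_distrib]
  refine Finset.sum_congr rfl fun v _ => ?_
  by_cases hg : G.Adj u v
  · rw [if_pos ((sup_adj _ _ _ _).2 (Or.inl hg)), if_pos hg, if_neg (h u v hg), add_zero]
  · by_cases hh : H.Adj u v
    · rw [if_pos ((sup_adj _ _ _ _).2 (Or.inr hh)), if_neg hg, if_pos hh, zero_add]
    · rw [if_neg (by simp [sup_adj, hg, hh]), if_neg hg, if_neg hh, add_zero]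

lemma sum_subtype_eq (S : Set V) (f : V → ℝ) (h0 : ∀ u, u ∉ S → f u = 0) :
    ∑ u : V, f u = ∑ u : S, f u.1 := by
  rw [← Finset.sum_subtype S.toFinset (fun x => Set.mem_toFinset) f]
  refine (Finset.sum_subset (Finset.subset_univ _) fun x _ hx => ?_).symm
  exact h0 x (by simpa using hx)

lemma cost_glift (w : V → V → ℝ) {S : Set V} (G : SimpleGraph S) :
    cost w (glift G) = subCost w S G := by
  unfold subCost cost
  congr 1
  rw [sum_subtype_eq S _ (fun u hu => ?_)]
  · refine Finset.sum_congr rfl fun u _ => ?_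
    rw [sum_subtype_eq S _ (fun v hv => ?_)]
    · refine Finset.sum_congr rfl fun v _ => ?_
      congr 1
      rw [glift_adj]
      simp only [Subtype.coe_eta]
      exact propext ⟨fun ⟨_, _, h⟩ => h, fun h => ⟨u.2, v.2, h⟩⟩
    · rw [if_neg]
      rw [glift_adj]
      rintro ⟨_, hv', _⟩; exact hv hv'
  · rw [Finset.sum_eq_zero]
    intro v _
    rw [if_neg]
    rw [glift_adj]
    rintro ⟨hu', _, _⟩; exact hu hu'

lemma cost_single_edge (w : V → V → ℝ) (hsymm : ∀ u v, w u v = w v u) {a b : V} (hab : a ≠ b) :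
    cost w (SimpleGraph.fromEdgeSet {s(a,b)}) = w a b := by
  unfold cost
  have key : ∀ u v : V, ∀ {_ : Decidable ((SimpleGraph.fromEdgeSet {s(a,b)} : SimpleGraph V).Adj u v)}, (if (SimpleGraph.fromEdgeSet {s(a,b)} : SimpleGraph V).Adj u v then w u v else 0)
      = (if u = a ∧ v = b then w u v else 0) + (if u = b ∧ v = a then w u v else 0) := by
    intro u v _
    simp only [SimpleGraph.fromEdgeSet_adj, Set.mem_singleton_iff, Sym2.eq_iff]
    by_cases h1 : u = a ∧ v = b
    · obtain ⟨rfl, rfl⟩ := h1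
      rw [if_pos ⟨Or.inl ⟨rfl, rfl⟩, hab⟩, if_pos ⟨rfl, rfl⟩, if_neg (by tauto), add_zero]
    · by_cases h2 : u = b ∧ v = a
      · obtain ⟨rfl, rfl⟩ := h2
        rw [if_pos ⟨Or.inr ⟨rfl, rfl⟩, hab.symm⟩, if_neg (by tauto), if_pos ⟨rfl, rfl⟩, zero_add]
      · rw [if_neg (by tauto), if_neg h1, if_neg h2, add_zero]
  simp_rw [key, Finset.sum_add_distrib]
  have e1 : ∑ u : V, ∑ v : V, (if u = a ∧ v = b then w u v else 0) = w a b := by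
    rw [Finset.sum_eq_single a]
    · rw [Finset.sum_eq_single b]
      · simp
      · intro v _ hv; rw [if_neg (by tauto)]
      · intro h; exact absurd (Finset.mem_univ b) h
    · intro u _ hu; exact Finset.sum_eq_zero fun v _ => by rw [if_neg (by tauto)]
    · intro h; exact absurd (Finset.mem_univ a) h
  have e2 : ∑ u : V, ∑ v : V, (if u = b ∧ v = a then w u v else 0) = w b a := by
    rw [Finset.sum_eq_single b]
    · rw [Finset.sum_eq_single a]
      · simp
      · intro v _ hv; rw [if_neg (by tauto)]
      · intro h; exact absurd (Finset.mem_univ a) h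
    · intro u _ hu; exact Finset.sum_eq_zero fun v _ => by rw [if_neg (by tauto)]
    · intro h; exact absurd (Finset.mem_univ b) h
  rw [e1, e2, hsymm b a]
  ring

lemma sym2_lift_eq {S : Set V} (a b u v : S) :
    s(a.1, b.1) = s(u.1, v.1) ↔ s(a, b) = s(u, v) := by
  rw [Sym2.eq_iff, Sym2.eq_iff]
  simp [Subtype.ext_iff]

-- sdiff commutes with glift
lemma glift_sdiff {S : Set V} (G : SimpleGraph S) (u v : S) :
    glift G \ SimpleGraph.fromEdgeSet {s(u.1, v.1)} = glift (G \ SimpleGraph.fromEdgeSet {s(u, v)}) := by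
  ext x y
  simp only [sdiff_adj, glift_adj, SimpleGraph.fromEdgeSet_adj, Set.mem_singleton_iff]
  constructor
  · rintro ⟨⟨hx, hy, hadj⟩, hne⟩
    refine ⟨hx, hy, hadj, fun ⟨he, hne'⟩ => hne ⟨(sym2_lift_eq _ _ _ _).2 he, ?_⟩⟩
    intro hxy; exact hne' (Subtype.ext hxy)
  · rintro ⟨hx, hy, hadj, hne⟩
    refine ⟨⟨hx, hy, hadj⟩, fun ⟨he, hne'⟩ => hne ⟨(sym2_lift_eq _ _ _ _).1 he, ?_⟩⟩
    intro hxy; exact hne' (congrArg Subtype.val hxy)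

lemma glift_bridge {S : Set V} {G : SimpleGraph S} (hG : G.IsAcyclic) {u v : V}
    (h : (glift G).Adj u v) :
    ¬(glift G \ SimpleGraph.fromEdgeSet {s(u, v)}).Reachable u v := by
  obtain ⟨hu, hv, hadj⟩ := (glift_adj G u v).1 h
  rw [show s(u,v) = s((⟨u,hu⟩:S).1, (⟨v,hv⟩:S).1) from rfl, glift_sdiff]
  rintro ⟨W⟩
  obtain ⟨hv', hr⟩ := glift_walk_pull W hu
  have hbr := SimpleGraph.isBridge_iff.1 (SimpleGraph.isAcyclic_iff_forall_adj_isBridge.1 hG hadj)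
  exact hbr (by convert hr using 2; rfl)

lemma glift_reachable {S : Set V} {G : SimpleGraph S} (hG : G.Connected) {x y : V}
    (hx : x ∈ S) (hy : y ∈ S) : (glift G).Reachable x y := by
  have hr := hG.preconnected ⟨x, hx⟩ ⟨y, hy⟩
  exact hr.map ⟨fun a => a.1, fun {a b} hab => (glift_adj G a.1 b.1).2 ⟨a.2, b.2, hab⟩⟩

lemma sym2_mk_ne_of_not_mem {A : Set V} {u v a b : V}
    (hu : u ∈ A) (hv : v ∈ A) (hb : b ∉ A) : s(u, v) ≠ s(a, b) := by
  intro h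
  rw [Sym2.eq_iff] at h
  rcases h with (⟨rfl, rfl⟩ | ⟨rfl, rfl⟩)
  · exact hb hv
  · exact hb hu

lemma bridge_aux {A : Set V} {KA KB : SimpleGraph V}
    (hKA : ∀ u v, KA.Adj u v → u ∈ A ∧ v ∈ A)
    (hKB : ∀ u v, KB.Adj u v → u ∉ A ∧ v ∉ A)
    (hbr : ∀ u v, KA.Adj u v → ¬(KA \ SimpleGraph.fromEdgeSet {s(u,v)}).Reachable u v)
    {a b : V} (ha : a ∈ A) (hb : b ∉ A)
    {u v : V} (huv : KA.Adj u v) :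
    ¬((KA ⊔ KB ⊔ SimpleGraph.fromEdgeSet {s(a,b)}) \ SimpleGraph.fromEdgeSet {s(u,v)}).Reachable u v := by
  obtain ⟨hu, hv⟩ := hKA u v huv
  have heq : (KA ⊔ KB ⊔ SimpleGraph.fromEdgeSet {s(a,b)}) \ SimpleGraph.fromEdgeSet {s(u,v)}
      = ((KA \ SimpleGraph.fromEdgeSet {s(u,v)}) ⊔ KB) ⊔ SimpleGraph.fromEdgeSet {s(a,b)} := by
    ext x y
    simp only [sdiff_adj, sup_adj, SimpleGraph.fromEdgeSet_adj, Set.mem_singleton_iff]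
    constructor
    · rintro ⟨(hA | hB) | hE, hne⟩
      · exact Or.inl (Or.inl ⟨hA, hne⟩)
      · exact Or.inl (Or.inr hB)
      · exact Or.inr hE
    · rintro ((⟨hA, hne⟩ | hB) | hE)
      · exact ⟨Or.inl (Or.inl hA), hne⟩
      · refine ⟨Or.inl (Or.inr hB), ?_⟩
        intro hedge
        obtain ⟨hx, hy⟩ := hKB x y hB
        rw [Sym2.eq_iff] at hedge
        rcases hedge with ⟨rfl, rfl⟩ | ⟨rfl, rfl⟩
        · exact hx hu
        · exact hy hu
      · refine ⟨Or.inr hE, ?_⟩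
        intro hedge
        exact (sym2_mk_ne_of_not_mem hu hv hb) (hedge.1.symm.trans hE.1)
    
  rw [heq]
  rintro ⟨W⟩
  have hside : ∀ x y, ((KA \ SimpleGraph.fromEdgeSet {s(u,v)}) ⊔ KB).Adj x y → (x ∈ A ↔ y ∈ A) := by
    intro x y hxy
    rcases (sup_adj _ _ _ _).1 hxy with h' | h'
    · obtain ⟨h1, h2⟩ := hKA x y h'.1
      exact ⟨fun _ => h2, fun _ => h1⟩
    · obtain ⟨h1, h2⟩ := hKB x y h'
      exact ⟨fun h => absurd h h1, fun h => absurd h h2⟩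
  have hcr := cross_reach hside ha hb W
  have hK : ((KA \ SimpleGraph.fromEdgeSet {s(u,v)}) ⊔ KB).Reachable u v := by
    rcases hcr with h1 | ⟨h1, h2⟩
    · exact h1
    · rw [if_pos hu] at h1
      rw [if_pos hv] at h2
      exact h1.trans h2
  obtain ⟨W'⟩ := hK
  refine hbr u v huv (union_walk_left (fun x y h => hKA x y ((sdiff_adj _ _ x y).1 h).1) hKB W' hu)

lemma join_tree {S : Set V} {GA : SimpleGraph S} {GB : SimpleGraph (Sᶜ : Set V)}
    (hA : GA.IsTree) (hB : GB.IsTree) {a b : V} (ha : a ∈ S) (hb : b ∉ S) :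
    (glift GA ⊔ glift GB ⊔ SimpleGraph.fromEdgeSet {s(a,b)}).IsTree := by
  have hSA : ∀ u v, (glift GA).Adj u v → u ∈ S ∧ v ∈ S := by
    intro u v h; obtain ⟨hu, hv, -⟩ := (glift_adj GA u v).1 h; exact ⟨hu, hv⟩
  have hSB : ∀ u v, (glift GB).Adj u v → u ∉ S ∧ v ∉ S := by
    intro u v h; obtain ⟨hu, hv, -⟩ := (glift_adj GB u v).1 h; exact ⟨hu, hv⟩
  have hne : a ≠ b := fun h => hb (h ▸ ha)
  have hedgeab : (glift GA ⊔ glift GB ⊔ SimpleGraph.fromEdgeSet {s(a,b)}).Adj a b := by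
    rw [sup_adj]
    exact Or.inr ((SimpleGraph.fromEdgeSet_adj _).2 ⟨rfl, hne⟩)
  constructor
  · -- connected
    rw [SimpleGraph.connected_iff_exists_forall_reachable]
    refine ⟨a, fun x => ?_⟩
    by_cases hx : x ∈ S
    · exact Reachable.mono (le_trans le_sup_left le_sup_left)
        (glift_reachable hA.isConnected ha hx)
    · refine (hedgeab.reachable).trans ?_
      exact Reachable.mono (le_trans le_sup_right le_sup_left)
        (glift_reachable hB.isConnected hb hx)
  · -- acyclic
    rw [SimpleGraph.isAcyclic_iff_forall_adj_isBridge]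
    intro u v hadj
    rw [SimpleGraph.isBridge_iff]
    rcases (sup_adj _ _ _ _).1 hadj with hA' | hE
    · rcases (sup_adj _ _ _ _).1 hA' with hgA | hgB
      · exact bridge_aux hSA hSB (fun u v h => glift_bridge hA.IsAcyclic h) ha hb hgA
      · have hswap : glift GA ⊔ glift GB ⊔ SimpleGraph.fromEdgeSet {s(a,b)}
            = glift GB ⊔ glift GA ⊔ SimpleGraph.fromEdgeSet {s(b,a)} := by
          rw [sup_comm (glift GA), Sym2.eq_swap]
        rw [hswap]
        refine bridge_aux (A := (Sᶜ : Set V)) ?_ ?_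
          (fun u v h => glift_bridge hB.IsAcyclic h) hb (fun hc => hc ha) hgB
        · intro x y h; exact hSB x y h
        · intro x y h
          obtain ⟨hx, hy⟩ := hSA x y h
          exact ⟨fun hc => hc hx, fun hc => hc hy⟩
    · -- the crossing edge itself
      rw [SimpleGraph.fromEdgeSet_adj, Set.mem_singleton_iff] at hE
      have heq2 : (glift GA ⊔ glift GB ⊔ SimpleGraph.fromEdgeSet {s(a,b)})
          \ SimpleGraph.fromEdgeSet {s(u,v)} = glift GA ⊔ glift GB := by
        ext x y
        simp only [sdiff_adj, sup_adj, SimpleGraph.fromEdgeSet_adj, Set.mem_singleton_iff]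
        constructor
        · rintro ⟨(h' | h') | h', hne'⟩
          · exact Or.inl h'
          · exact Or.inr h'
          · exact absurd ⟨h'.1.trans hE.1.symm, h'.2⟩ hne'
        · rintro (h' | h')
          · refine ⟨Or.inl (Or.inl h'), ?_⟩
            intro hc
            obtain ⟨hx, hy⟩ := hSA x y h'
            exact sym2_mk_ne_of_not_mem hx hy hb (hc.1.trans hE.1)
          · refine ⟨Or.inl (Or.inr h'), ?_⟩
            intro hc
            obtain ⟨hx, hy⟩ := hSB x y h'
            refine sym2_mk_ne_of_not_mem (A := (Sᶜ : Set V)) hx hy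
              (fun hc' => hc' ha) ((hc.1.trans hE.1).trans Sym2.eq_swap)
      rw [SimpleGraph.deleteEdges, heq2]
      have key : ¬(glift GA ⊔ glift GB).Reachable a b := by
        rintro ⟨W⟩
        have hra := union_walk_left hSA hSB W ha
        obtain ⟨W'⟩ := hra
        exact hb (reach_ends_mem hSA W' hne).2
      rw [Sym2.eq_iff] at hE
      rcases hE.1 with ⟨rfl, rfl⟩ | ⟨rfl, rfl⟩
      · exact key
      · exact fun h => key h.symm

lemma cost_join (w : V → V → ℝ) (hsymm : ∀ u v, w u v = w v u)
    {S : Set V} (GA : SimpleGraph S) (GB : SimpleGraph (Sᶜ : Set V))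
    {a b : V} (ha : a ∈ S) (hb : b ∉ S) :
    cost w (glift GA ⊔ glift GB ⊔ SimpleGraph.fromEdgeSet {s(a,b)})
      = subCost w S GA + subCost w Sᶜ GB + w a b := by
  have hSA : ∀ u v, (glift GA).Adj u v → u ∈ S ∧ v ∈ S := by
    intro u v h; obtain ⟨hu, hv, -⟩ := (glift_adj GA u v).1 h; exact ⟨hu, hv⟩
  have hSB : ∀ u v, (glift GB).Adj u v → u ∉ S ∧ v ∉ S := by
    intro u v h; obtain ⟨hu, hv, -⟩ := (glift_adj GB u v).1 h; exact ⟨hu, hv⟩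
  have hne : a ≠ b := fun h => hb (h ▸ ha)
  rw [cost_sup_disjoint w ?_, cost_sup_disjoint w ?_, cost_glift, cost_glift,
    cost_single_edge w hsymm hne]
  · intro u v h hc
    exact (hSB u v hc).1 (hSA u v h).1
  · intro u v h hc
    rw [SimpleGraph.fromEdgeSet_adj, Set.mem_singleton_iff] at hc
    rcases (sup_adj _ _ _ _).1 h with h' | h'
    · obtain ⟨hu, hv⟩ := hSA u v h'
      exact sym2_mk_ne_of_not_mem hu hv hb hc.1
    · obtain ⟨hu, hv⟩ := hSB u v h'
      exact sym2_mk_ne_of_not_mem (A := (Sᶜ : Set V)) hu hv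
        (fun hc' => hc' ha) (hc.1.trans Sym2.eq_swap)

lemma cover_step {T : SimpleGraph V} {vL vR : V} {x y : V} (W : T.Walk x y)
    (hx : (T.deleteEdges {s(vL,vR)}).Reachable vL x ∨ (T.deleteEdges {s(vL,vR)}).Reachable vR x) :
    (T.deleteEdges {s(vL,vR)}).Reachable vL y ∨ (T.deleteEdges {s(vL,vR)}).Reachable vR y := by
  induction W with
  | nil => exact hx
  | @cons u c d h p ih =>
    refine ih ?_
    by_cases he : s(u, c) = s(vL, vR)
    · rw [Sym2.eq_iff] at he
      rcases he with ⟨rfl, rfl⟩ | ⟨rfl, rfl⟩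
      · exact Or.inr (Reachable.refl _)
      · exact Or.inl (Reachable.refl _)
    · have hDadj : (T.deleteEdges {s(vL,vR)}).Adj u c := by
        rw [SimpleGraph.deleteEdges_adj]
        exact ⟨h, by simpa using he⟩
      rcases hx with h1 | h1
      · exact Or.inl (h1.trans hDadj.reachable)
      · exact Or.inr (h1.trans hDadj.reachable)

lemma first_cross {T : SimpleGraph V} {B : Set V} {x y : V} (W : T.Walk x y)
    (hx : x ∈ B) (hy : y ∉ B) : ∃ u v, T.Adj u v ∧ u ∈ B ∧ v ∉ B := by
  induction W with
  | nil => exact absurd hx hy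
  | @cons u c d h p ih =>
    by_cases hc : c ∈ B
    · exact ih hc hy
    · exact ⟨u, c, h, hx, hc⟩

end Helpers

theorem stmt_9 {V : Type*} [Fintype V]
    {n : ℕ} (hn : 2 ≤ n)
    (p q : Fin n → V) (hpq : Function.Bijective (Sum.elim p q))
    (w : V → V → ℝ)
    (hw_self : ∀ v, w v v = 0)
    (hw_symm : ∀ u v, w u v = w v u)
    (hw_nonneg : ∀ u v, 0 ≤ w u v)
    (hw_tri : ∀ u v x, w u v ≤ w u x + w x v)
    (T : SimpleGraph V) (hT : IsMST w T)
    (vL vR : V) (hadj : T.Adj vL vR)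
    (hmax : ∀ a b, T.Adj a b → w a b ≤ w vL vR)
    (VL VR : Set V)
    (hVL : VL = {x | (T.deleteEdges {s(vL, vR)}).Reachable vL x})
    (hVR : VR = {x | (T.deleteEdges {s(vL, vR)}).Reachable vR x})
    (hnoL : ¬ ∃ i, p i ∈ VL ∧ q i ∈ VL) (hnoR : ¬ ∃ i, p i ∈ VR ∧ q i ∈ VR) :
    (∀ i, (p i ∈ VL ↔ q i ∉ VL)) ∧
    VR = VLᶜ ∧
    IsSubMST w VL ((T.deleteEdges {s(vL, vR)}).induce VL) ∧
    IsSubMST w VR ((T.deleteEdges {s(vL, vR)}).induce VR) ∧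
    subCost w VL ((T.deleteEdges {s(vL, vR)}).induce VL) + subCost w VR ((T.deleteEdges {s(vL, vR)}).induce VR) =
      OPTsum w p q := by
  obtain ⟨hTtree, hTmin⟩ := hT
  set D := T.deleteEdges {s(vL, vR)} with hDdef
  have hDle : D ≤ T := by
    intro x y h
    exact ((SimpleGraph.deleteEdges_adj).1 h).1
  have hcover : ∀ x, D.Reachable vL x ∨ D.Reachable vR x := by
    intro x
    obtain ⟨W⟩ := hTtree.isConnected.preconnected vL x
    exact cover_step W (Or.inl (Reachable.refl _))
  have hsep : ¬ D.Reachable vL vR :=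
    (SimpleGraph.isBridge_iff.1 (SimpleGraph.isAcyclic_iff_forall_adj_isBridge.1
      hTtree.IsAcyclic hadj))
  have hVRc : VR = VLᶜ := by
    rw [hVL, hVR]
    ext x
    simp only [Set.mem_compl_iff, Set.mem_setOf_eq]
    constructor
    · intro hR hL; exact hsep (hL.trans hR.symm)
    · intro hL
      rcases hcover x with h | h
      · exact absurd h hL
      · exact h
  subst hVRc
  have hvL : vL ∈ VL := by rw [hVL]; exact Reachable.refl _
  have hvR : vR ∉ VL := by rw [hVL]; exact hsep
  have hclose : ∀ u v, D.Adj u v → u ∈ VL → v ∈ VL := by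
    simp only [hVL, Set.mem_setOf_eq]
    intro u v h hu
    exact hu.trans h.reachable
  have hside : ∀ u v, D.Adj u v → (u ∈ VL ↔ v ∈ VL) :=
    fun u v h => ⟨hclose u v h, hclose v u h.symm⟩
  have hcloseC : ∀ u v, D.Adj u v → u ∈ (VLᶜ : Set V) → v ∈ (VLᶜ : Set V) := by
    intro u v h hu hv
    exact hu ((hside u v h).2 hv)
  have hmemC : ∀ x, x ∈ (VLᶜ : Set V) → D.Reachable vR x := by
    intro x hx
    rcases hcover x with h | h
    · exact absurd (by rw [hVL]; exact h) hx
    · exact h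
  set GrL := D.induce VL with hGLdef
  set GrR := D.induce (VLᶜ : Set V) with hGRdef
  -- trees
  have hGLconn : GrL.Connected := by
    rw [SimpleGraph.connected_iff_exists_forall_reachable]
    refine ⟨⟨vL, hvL⟩, ?_⟩
    rintro ⟨x, hx⟩
    have hr : D.Reachable vL x := by rw [hVL] at hx; exact hx
    obtain ⟨W⟩ := hr
    obtain ⟨hy, hrr⟩ := induce_walk_pull hclose W hvL
    exact hrr
  have hGRconn : GrR.Connected := by
    rw [SimpleGraph.connected_iff_exists_forall_reachable]
    refine ⟨⟨vR, hvR⟩, ?_⟩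
    rintro ⟨x, hx⟩
    obtain ⟨W⟩ := hmemC x hx
    obtain ⟨hy, hrr⟩ := induce_walk_pull hcloseC W hvR
    exact hrr
  have hGLac : GrL.IsAcyclic := by
    intro v c hc
    exact hTtree.IsAcyclic _
      ((SimpleGraph.Walk.map_isCycle_iff_of_injective
        (f := (⟨Subtype.val, fun {a b} h => hDle h⟩ : GrL →g T))
        (fun a b h => Subtype.ext h)).2 hc)
  have hGRac : GrR.IsAcyclic := by
    intro v c hc
    exact hTtree.IsAcyclic _
      ((SimpleGraph.Walk.map_isCycle_iff_of_injective
        (f := (⟨Subtype.val, fun {a b} h => hDle h⟩ : GrR →g T))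
        (fun a b h => Subtype.ext h)).2 hc)
  have hGLtree : GrL.IsTree := ⟨hGLconn, hGLac⟩
  have hGRtree : GrR.IsTree := ⟨hGRconn, hGRac⟩
  -- decomposition of T
  have hdec : T = glift GrL ⊔ glift GrR ⊔ SimpleGraph.fromEdgeSet {s(vL,vR)} := by
    ext u v
    constructor
    · intro h
      rw [sup_adj]
      by_cases he : s(u,v) = s(vL,vR)
      · exact Or.inr ((SimpleGraph.fromEdgeSet_adj _).2 ⟨he, h.ne⟩)
      · have hD : D.Adj u v := by
          rw [SimpleGraph.deleteEdges_adj]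
          exact ⟨h, by simpa using he⟩
        rw [sup_adj]
        by_cases hu : u ∈ VL
        · exact Or.inl (Or.inl ((glift_adj GrL u v).2 ⟨hu, hclose u v hD hu, hD⟩))
        · have hv : v ∉ VL := fun hv => hu ((hside u v hD).2 hv)
          exact Or.inl (Or.inr ((glift_adj GrR u v).2 ⟨hu, hv, hD⟩))
    · intro h
      rcases (sup_adj _ _ _ _).1 h with h' | h'
      · rcases (sup_adj _ _ _ _).1 h' with h'' | h''
        · obtain ⟨hu, hv, ha⟩ := (glift_adj GrL u v).1 h''
          exact hDle ha
        · obtain ⟨hu, hv, ha⟩ := (glift_adj GrR u v).1 h''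
          exact hDle ha
      · rw [SimpleGraph.fromEdgeSet_adj, Set.mem_singleton_iff, Sym2.eq_iff] at h'
        rcases h'.1 with ⟨rfl, rfl⟩ | ⟨rfl, rfl⟩
        · exact hadj
        · exact hadj.symm
  have hcostT : cost w T = subCost w VL GrL + subCost w (VLᶜ) GrR + w vL vR := by
    rw [hdec]
    exact cost_join w hw_symm GrL GrR hvL hvR
  -- pair condition
  have hpair : ∀ i, (p i ∈ VL ↔ q i ∉ VL) := by
    intro i
    constructor
    · intro hp hq
      exact hnoL ⟨i, hp, hq⟩
    · intro hq
      by_contra hp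
      exact hnoR ⟨i, hp, hq⟩
  refine ⟨hpair, rfl, ⟨hGLtree, ?_⟩, ⟨hGRtree, ?_⟩, ?_⟩
  · -- GrL is MST of VL
    intro G' hG'
    have hjt := join_tree hG' hGRtree hvL hvR
    have hle := hTmin _ hjt
    rw [hcostT, cost_join w hw_symm G' GrR hvL hvR] at hle
    show subCost w VL GrL ≤ subCost w VL G'
    linarith
  · -- GrR is MST of VLᶜ
    intro G' hG'
    have hjt := join_tree hGLtree hG' hvL hvR
    have hle := hTmin _ hjt
    rw [hcostT, cost_join w hw_symm GrL G' hvL hvR] at hle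
    show subCost w (VLᶜ) GrR ≤ subCost w (VLᶜ) G'
    linarith
  · -- optimality
    have hmem : subCost w VL GrL + subCost w (VLᶜ) GrR ∈
        {c : ℝ | ∃ B : Set V, (∀ i, (p i ∈ B ↔ q i ∉ B)) ∧
          ∃ (Sb : SimpleGraph B) (Sr : SimpleGraph (Bᶜ : Set V)),
            Sb.IsTree ∧ Sr.IsTree ∧ c = subCost w B Sb + subCost w Bᶜ Sr} :=
      ⟨VL, hpair, GrL, GrR, hGLtree, hGRtree, rfl⟩
    have hlb : ∀ c ∈ {c : ℝ | ∃ B : Set V, (∀ i, (p i ∈ B ↔ q i ∉ B)) ∧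
          ∃ (Sb : SimpleGraph B) (Sr : SimpleGraph (Bᶜ : Set V)),
            Sb.IsTree ∧ Sr.IsTree ∧ c = subCost w B Sb + subCost w Bᶜ Sr},
        subCost w VL GrL + subCost w (VLᶜ) GrR ≤ c := by
      rintro c ⟨B, hB, Sb, Sr, hSb, hSr, rfl⟩
      have i0 : Fin n := ⟨0, by omega⟩
      -- find a crossing T-edge
      obtain ⟨u, v, huv, hu, hv⟩ : ∃ u v, T.Adj u v ∧ u ∈ B ∧ v ∉ B := by
        have hex : ∃ x, x ∈ B := by
          by_cases h : p i0 ∈ B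
          · exact ⟨p i0, h⟩
          · exact ⟨q i0, not_not.1 (fun hq => h ((hB i0).2 hq))⟩
        have hex' : ∃ y, y ∉ B := by
          by_cases h : p i0 ∈ B
          · exact ⟨q i0, (hB i0).1 h⟩
          · exact ⟨p i0, h⟩
        obtain ⟨x, hx⟩ := hex
        obtain ⟨y, hy⟩ := hex'
        obtain ⟨W⟩ := hTtree.isConnected.preconnected x y
        exact first_cross W hx hy
      have hjt := join_tree hSb hSr hu hv
      have hle := hTmin _ hjt
      rw [hcostT, cost_join w hw_symm Sb Sr hu hv] at hle
      have := hmax u v huv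
      linarith
    rw [OPTsum]
    exact le_antisymm (le_csInf ⟨_, hmem⟩ hlb) (csInf_le ⟨_, hlb⟩ hmem)
end
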